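/- arXiv:0911.3887 — 11 statements merged into one kernel-verified Lean document; each statement's English description precedes it below -/
import Mathlib

section
/- Fix n : ℕ and an Appell sequence A : ℕ → ℚ[X]. Let φ_A : MvPolynomial (Fin (n+1)) ℚ →ₐ ℚ[X] send the variable a_i to A i, and let D(S) = ∑_{i=1}^{n} i · a_{i−1} · (∂S/∂a_i). If S ∈ MvPolynomial (Fin (n+1)) ℚ satisfies D(S) = 0 (i.e. S is a semi-invariant), then the polynomial φ_A(S) = S(A_0(x),…,A_n(x)) ∈ ℚ[X] is constant; explicitly, φ_A(S) = Polynomial.C (MvPolynomial.eval (fun i => (A i).eval 0) S). -/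
section Aux

open Polynomial MvPolynomial

lemma chain {m : ℕ} (A : Fin m → ℚ[X]) (S : MvPolynomial (Fin m) ℚ) :
    derivative (aeval A S) = ∑ i : Fin m, aeval A (pderiv i S) * derivative (A i) := by
  induction S using MvPolynomial.induction_on with
  | C a => simp
  | add p q hp hq => simp [hp, hq, Finset.sum_add_distrib, add_mul]
  | mul_X p i hp =>
      simp only [map_mul, MvPolynomial.aeval_X, derivative_mul, hp, pderiv_mul, pderiv_X,
        map_add, add_mul]
      rw [Finset.sum_add_distrib, Finset.sum_mul]
      refine congrArg₂ (· + ·) ?_ ?_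
      · exact Finset.sum_congr rfl fun j _ => by ring
      · simp [Pi.single_apply, apply_ite, Finset.sum_ite_eq', mul_comm]

lemma evalzero {m : ℕ} (A : Fin m → ℚ[X]) (S : MvPolynomial (Fin m) ℚ) :
    Polynomial.eval 0 (aeval A S) = MvPolynomial.eval (fun i => (A i).eval 0) S := by
  induction S using MvPolynomial.induction_on with
  | C a => simp
  | add p q hp hq => simp [hp, hq]
  | mul_X p i hp => simp [hp]

end Aux

/-- If `S` is a semi-invariant, i.e. `D(S) = 0` for the derivation
`D(S) = ∑_{i=1}^{n} i·a_{i-1}·∂S/∂a_i`, then substituting an Appell sequence gives a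
constant polynomial, namely the value of `S` at `(A 0 (0), …, A n (0))`. -/
theorem semiinvariant_gives_constant
    (n : ℕ) (A : ℕ → Polynomial ℚ)
    (hA0 : Polynomial.derivative (A 0) = 0)
    (hA : ∀ k : ℕ, Polynomial.derivative (A (k + 1)) = (k + 1) • A k)
    (S : MvPolynomial (Fin (n + 1)) ℚ)
    (hS : (∑ j : Fin n, (((j : ℕ) + 1 : ℚ)) •
        (MvPolynomial.X j.castSucc * MvPolynomial.pderiv j.succ S)) = 0) :
    MvPolynomial.aeval (fun i : Fin (n + 1) => A i) S =
      Polynomial.C (MvPolynomial.eval (fun i : Fin (n + 1) => (A i).eval 0) S) := by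
  open Polynomial MvPolynomial in
  have hd : derivative (MvPolynomial.aeval (fun i : Fin (n+1) => A i) S) = 0 := by
    rw [chain, Fin.sum_univ_succ]
    have h0 : (MvPolynomial.aeval (fun i : Fin (n+1) => A i)) ((pderiv 0) S) *
        derivative (A (0 : Fin (n+1))) = 0 := by
      simp [hA0]
    rw [h0, zero_add]
    have hmap := congrArg (MvPolynomial.aeval (fun i : Fin (n+1) => A i)) hS
    simp only [map_sum, map_smul, map_mul, MvPolynomial.aeval_X, map_zero] at hmap
    rw [← hmap]
    refine Finset.sum_congr rfl fun j _ => ?_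
    have hss : ((j.succ : Fin (n+1)) : ℕ) = (j : ℕ) + 1 := rfl
    rw [hss, hA j]
    have hcs : ((j.castSucc : Fin (n+1)) : ℕ) = (j : ℕ) := rfl
    rw [hcs, Polynomial.smul_eq_C_mul, nsmul_eq_mul, map_add, map_one, map_natCast]
    push_cast
    ring
  rw [Polynomial.eq_C_of_derivative_eq_zero hd, Polynomial.coeff_zero_eq_eval_zero,
    evalzero]
end

section
/- Fix n : ℕ and let D : MvPolynomial (Fin (n+1)) ℚ → MvPolynomial (Fin (n+1)) ℚ be D(S) = ∑_{i=1}^{n} i · a_{i−1} · (∂S/∂a_i). Suppose S satisfies D(S) = 0 and S is weighted homogeneous of weight m with respect to the weight function w(a_i) = i (MvPolynomial.IsWeightedHomogeneous (fun i => (i:ℕ)) S m), with m > 0. Then S evaluated at a_0 = a_1 = ⋯ = a_n = 1 equals 0, i.e. MvPolynomial.eval (fun _ => (1:ℚ)) S = 0. -/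
open MvPolynomial

lemma euler_eval_one (n : ℕ) (S : MvPolynomial (Fin (n + 1)) ℚ) (m : ℕ)
    (hiso : MvPolynomial.IsWeightedHomogeneous (fun i : Fin (n + 1) => (i : ℕ)) S m) :
    ∑ i : Fin (n + 1), (i : ℚ) * MvPolynomial.eval (fun _ => (1 : ℚ)) (MvPolynomial.pderiv i S)
      = (m : ℚ) * MvPolynomial.eval (fun _ => (1 : ℚ)) S := by
  conv_lhs => rw [show S = ∑ d ∈ S.support, monomial d (coeff d S) from (S.support_sum_monomial_coeff).symm]
  rw [show MvPolynomial.eval (fun _ => (1 : ℚ)) S = ∑ d ∈ S.support, coeff d S by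
    simp [MvPolynomial.eval_eq']]
  simp only [map_sum, eval_monomial, pderiv_monomial, Finset.mul_sum]
  rw [Finset.sum_comm]
  apply Finset.sum_congr rfl
  intro d hd
  have hw : (Finsupp.weight (fun i : Fin (n + 1) => (i : ℕ)) d : ℕ) = m :=
    hiso (mem_support_iff.mp hd)
  have hw2 : ∑ i : Fin (n + 1), (d i : ℚ) * (i : ℚ) = (m : ℚ) := by
    rw [← hw, Finsupp.weight_apply, Finsupp.sum]
    push_cast
    rw [Finset.sum_subset (Finset.subset_univ d.support)]
    · simp [mul_comm]
    · intro x _ hx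
      simp [Finsupp.notMem_support_iff.mp hx]
  have h1 : ∀ f : Fin (n+1) →₀ ℕ, (f.prod fun _ e => (1:ℚ) ^ e) = 1 := by
    intro f; simp [Finsupp.prod]
  simp only [h1, mul_one]
  rw [show ∑ x : Fin (n+1), (x : ℚ) * (coeff d S * (d x : ℚ))
      = coeff d S * ∑ x : Fin (n+1), (d x : ℚ) * (x : ℚ) by
    rw [Finset.mul_sum]; apply Finset.sum_congr rfl; intro x _; ring]
  rw [hw2]; ring

/-- An isobaric (weighted homogeneous for the weight `w(a_i) = i`)
semi-invariant `S` of positive weight `m` vanishes at `a_0 = a_1 = ⋯ = a_n = 1`. -/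
theorem semiinvariant_eval_one_eq_zero
    (n : ℕ) (S : MvPolynomial (Fin (n + 1)) ℚ) (m : ℕ)
    (hS : (∑ j : Fin n, (((j : ℕ) + 1 : ℚ)) •
        (MvPolynomial.X j.castSucc * MvPolynomial.pderiv j.succ S)) = 0)
    (hiso : MvPolynomial.IsWeightedHomogeneous (fun i : Fin (n + 1) => (i : ℕ)) S m)
    (hm : 0 < m) :
    MvPolynomial.eval (fun _ : Fin (n + 1) => (1 : ℚ)) S = 0 := by
  have h0 : ∑ j : Fin n, ((j : ℚ) + 1) *
      MvPolynomial.eval (fun _ => (1 : ℚ)) (MvPolynomial.pderiv j.succ S) = 0 := by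
    have := congrArg (MvPolynomial.eval (fun _ : Fin (n + 1) => (1 : ℚ))) hS
    simpa [smul_eq_mul, mul_assoc] using this
  have heuler := euler_eval_one n S m hiso
  rw [Fin.sum_univ_succ] at heuler
  simp only [Fin.val_zero, Nat.cast_zero, zero_mul, zero_add] at heuler
  have : ∑ i : Fin n, (i.succ : ℚ) *
      MvPolynomial.eval (fun _ => (1 : ℚ)) (MvPolynomial.pderiv i.succ S) = 0 := by
    rw [← h0]
    apply Finset.sum_congr rfl
    intro j _
    norm_num [Fin.val_succ]
  rw [this] at heuler
  have hm' : (m : ℚ) ≠ 0 := Nat.cast_ne_zero.mpr hm.ne'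
  field_simp at heuler
  exact (mul_eq_zero.mp heuler.symm).resolve_left hm'
end

section
/- Fix n ≥ 1. On MvPolynomial (Fin (n+1)) ℚ define D(S) = ∑_{i=1}^{n} i · a_{i−1} · (∂S/∂a_i) and D*(S) = ∑_{i=0}^{n−1} (n−i) · a_{i+1} · (∂S/∂a_i). Let s ≠ 0 satisfy D(s) = 0, let s be homogeneous of degree d (MvPolynomial.IsHomogeneous s d) and weighted homogeneous of weight m with respect to w(a_i) = i. Then 2m ≤ n·d, and setting ω = n·d − 2m (the weight of s), the ω-th iterate (D*)^[ω](s) ≠ 0 while (D*)^[ω+1](s) = 0; that is, the order of the semi-invariant s equals its weight. -/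
open MvPolynomial

theorem pderiv_comm' {σ : Type} (i j : σ) (S : MvPolynomial σ ℚ) :
    pderiv i (pderiv j S) = pderiv j (pderiv i S) := by
  classical
  induction S using MvPolynomial.induction_on' with
  | monomial μ r =>
    by_cases h : i = j
    · subst h; rfl
    · simp only [pderiv_monomial, Finsupp.tsub_apply, Finsupp.single_apply]
      rw [if_neg h, if_neg (Ne.symm h)]
      simp only [Nat.sub_zero]
      rw [tsub_right_comm]
      ring_nf
  | add p q hp hq => simp [map_add, hp, hq]

theorem X_mul_pderiv_monomial {σ : Type} (i j : σ) (μ : σ →₀ ℕ) (r : ℚ) :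
    X j * pderiv i (monomial μ r)
      = (μ i : ℚ) • monomial (μ - Finsupp.single i 1 + Finsupp.single j 1) r := by
  rw [pderiv_monomial, X, monomial_mul, smul_monomial, add_comm, one_mul, smul_eq_mul, mul_comm]

theorem X_mul_pderiv_monomial_self {σ : Type} (i : σ) (μ : σ →₀ ℕ) (r : ℚ) :
    X i * pderiv i (monomial μ r) = (μ i : ℚ) • monomial μ r := by
  rw [X_mul_pderiv_monomial]
  by_cases h : μ i = 0
  · simp [h]
  · have hsub : (μ - Finsupp.single i 1) + Finsupp.single i 1 = μ := by
      ext k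
      by_cases hk : k = i
      · subst hk; simp; omega
      · simp [Finsupp.single_apply, Ne.symm hk, hk]
    rw [hsub]

theorem weight_single_one {σ : Type} (w : σ → ℕ) (j : σ) :
    Finsupp.weight w (Finsupp.single j 1) = w j := by
  rw [Finsupp.weight_apply, Finsupp.sum_single_index] <;> simp

theorem wh_X_mul_pderiv {σ : Type} (w : σ → ℕ) {S : MvPolynomial σ ℚ} {M : ℕ}
    (i j : σ) (c : ℕ) (hw : w j = w i + c)
    (hS : MvPolynomial.IsWeightedHomogeneous w S M) :
    MvPolynomial.IsWeightedHomogeneous w (X j * pderiv i S) (M + c) := by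
  classical
  rw [S.as_sum, map_sum, Finset.mul_sum]
  apply IsWeightedHomogeneous.sum
  intro μ hμ
  rw [X_mul_pderiv_monomial]
  by_cases h : μ i = 0
  · rw [h]; simp only [Nat.cast_zero, zero_smul]
    exact isWeightedHomogeneous_zero ℚ w _
  · rw [smul_monomial]
    apply isWeightedHomogeneous_monomial
    have hsub : (μ - Finsupp.single i 1) + Finsupp.single i 1 = μ := by
      ext k
      by_cases hk : k = i
      · subst hk; simp; omega
      · simp [Finsupp.single_apply, Ne.symm hk, hk]
    have h1 : Finsupp.weight w (μ - Finsupp.single i 1) + w i = M := by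
      rw [← weight_single_one w i, ← map_add, hsub]
      exact hS (MvPolynomial.mem_support_iff.mp hμ)
    rw [map_add, weight_single_one, hw]
    omega

theorem euler {n : ℕ} (w : Fin (n + 1) → ℕ) {S : MvPolynomial (Fin (n + 1)) ℚ} {M : ℕ}
    (hS : MvPolynomial.IsWeightedHomogeneous w S M) :
    ∑ i : Fin (n + 1), (w i : ℚ) • (X i * pderiv i S) = (M : ℚ) • S := by
  have h1 : ∀ i : Fin (n + 1),
      X i * pderiv i S = ∑ μ ∈ S.support, (μ i : ℚ) • monomial μ (coeff μ S) := by
    intro i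
    conv_lhs => rw [S.as_sum]
    rw [map_sum, Finset.mul_sum]
    exact Finset.sum_congr rfl fun μ _ => X_mul_pderiv_monomial_self i μ _
  simp_rw [h1, Finset.smul_sum]
  rw [Finset.sum_comm]
  conv_rhs => rw [S.as_sum, Finset.smul_sum]
  refine Finset.sum_congr rfl fun μ hμ => ?_
  simp_rw [smul_smul, ← Finset.sum_smul]
  congr 1
  have hM := hS (MvPolynomial.mem_support_iff.mp hμ)
  rw [← hM, Finsupp.weight_apply, Finsupp.sum_fintype _ _ (by simp)]
  simp only [smul_eq_mul]
  push_cast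
  exact Finset.sum_congr rfl fun i _ => by ring

theorem expand_comp {n : ℕ} (c c' : Fin n → ℚ) (u v : Fin n → Fin (n + 1))
    (hv : Function.Injective v) (S : MvPolynomial (Fin (n + 1)) ℚ) :
    ∑ j : Fin n, c j • (X (u j) * pderiv (v j) (∑ k : Fin n, c' k • (X (v k) * pderiv (u k) S)))
      = (∑ j : Fin n, (c j * c' j) • (X (u j) * pderiv (u j) S))
        + ∑ j : Fin n, ∑ k : Fin n,
            (c j * c' k) • (X (u j) * (X (v k) * pderiv (v j) (pderiv (u k) S))) := by
  classical
  have inner : ∀ j : Fin n,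
      pderiv (v j) (∑ k : Fin n, c' k • (X (v k) * pderiv (u k) S))
        = c' j • pderiv (u j) S
          + ∑ k : Fin n, c' k • (X (v k) * pderiv (v j) (pderiv (u k) S)) := by
    intro j
    rw [map_sum]
    have step : ∀ k : Fin n,
        pderiv (v j) (c' k • (X (v k) * pderiv (u k) S))
          = (if j = k then c' k • pderiv (u k) S else 0)
            + c' k • (X (v k) * pderiv (v j) (pderiv (u k) S)) := by
      intro k
      rw [Derivation.map_smul, pderiv_mul, smul_add]
      by_cases h : j = k
      · subst h
        rw [if_pos rfl, pderiv_X_self, one_mul]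
      · rw [if_neg h, pderiv_X_of_ne (fun hh => h ((hv hh).symm)), zero_mul, smul_zero]
    simp_rw [step, Finset.sum_add_distrib, Finset.sum_ite_eq Finset.univ j
      (fun k => c' k • pderiv (u k) S), if_pos (Finset.mem_univ j)]
  simp_rw [inner, mul_add, smul_add, Finset.sum_add_distrib, Finset.mul_sum, Finset.smul_sum,
    mul_smul_comm, smul_smul]

theorem comm_raw (n : ℕ) (S : MvPolynomial (Fin (n + 1)) ℚ) :
    ∑ j : Fin n, (((j : ℕ) : ℚ) + 1) •
        (X j.castSucc * pderiv j.succ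
          (∑ k : Fin n, ((n : ℚ) - (k : ℕ)) • (X k.succ * pderiv k.castSucc S)))
      = (∑ j : Fin n, ((n : ℚ) - (j : ℕ)) •
          (X j.succ * pderiv j.castSucc
            (∑ k : Fin n, (((k : ℕ) : ℚ) + 1) • (X k.castSucc * pderiv k.succ S))))
        + ∑ i : Fin (n + 1), ((n : ℚ) - 2 * (i : ℕ)) • (X i * pderiv i S) := by
  rw [expand_comp _ _ _ _ (Fin.succ_injective n), expand_comp _ _ _ _ (Fin.castSucc_injective n)]
  have hcross :
      ∑ j : Fin n, ∑ k : Fin n, ((((j : ℕ) : ℚ) + 1) * ((n : ℚ) - (k : ℕ))) •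
          (X j.castSucc * (X k.succ * pderiv j.succ (pderiv k.castSucc S)))
        = ∑ j : Fin n, ∑ k : Fin n, (((n : ℚ) - (j : ℕ)) * (((k : ℕ) : ℚ) + 1)) •
          (X j.succ * (X k.castSucc * pderiv j.castSucc (pderiv k.succ S))) := by
    rw [Finset.sum_comm]
    refine Finset.sum_congr rfl fun k _ => Finset.sum_congr rfl fun j _ => ?_
    rw [pderiv_comm']
    rw [show ((((j : ℕ) : ℚ) + 1) * ((n : ℚ) - (k : ℕ)))
      = (((n : ℚ) - (k : ℕ)) * (((j : ℕ) : ℚ) + 1)) from by ring]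
    congr 1
    ring
  rw [hcross]
  have e1 : ∑ i : Fin (n + 1), (((( i : ℕ) : ℚ) + 1) * ((n : ℚ) - (i : ℕ))) • (X i * pderiv i S)
      = ∑ j : Fin n, ((((j : ℕ) : ℚ) + 1) * ((n : ℚ) - (j : ℕ))) •
          (X j.castSucc * pderiv j.castSucc S) := by
    rw [Fin.sum_univ_castSucc]
    simp only [Fin.coe_castSucc, Fin.val_last, sub_self, mul_zero, zero_smul, add_zero]
  have e2 : ∑ i : Fin (n + 1), (((i : ℕ) : ℚ) * ((n : ℚ) - (i : ℕ) + 1)) • (X i * pderiv i S)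
      = ∑ j : Fin n, (((n : ℚ) - (j : ℕ)) * (((j : ℕ) : ℚ) + 1)) •
          (X j.succ * pderiv j.succ S) := by
    rw [Fin.sum_univ_succ]
    simp only [Fin.val_zero, Nat.cast_zero, zero_mul, zero_smul, zero_add, Fin.val_succ]
    refine Finset.sum_congr rfl fun j _ => ?_
    congr 1
    push_cast
    ring
  have e3 : ∑ i : Fin (n + 1), ((n : ℚ) - 2 * (i : ℕ)) • (X i * pderiv i S)
      = (∑ i : Fin (n + 1), ((((i : ℕ) : ℚ) + 1) * ((n : ℚ) - (i : ℕ))) • (X i * pderiv i S))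
        - ∑ i : Fin (n + 1), (((i : ℕ) : ℚ) * ((n : ℚ) - (i : ℕ) + 1)) • (X i * pderiv i S) := by
    rw [← Finset.sum_sub_distrib]
    refine Finset.sum_congr rfl fun i _ => ?_
    rw [← sub_smul]
    congr 1
    ring
  rw [e3, e1, e2]
  ring

theorem wh_smul {σ : Type} {w : σ → ℕ} {p : MvPolynomial σ ℚ} {M : ℕ} (q : ℚ)
    (h : MvPolynomial.IsWeightedHomogeneous w p M) :
    MvPolynomial.IsWeightedHomogeneous w (q • p) M :=
  (MvPolynomial.mem_weightedHomogeneousSubmodule ℚ w M _).mp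
    ((weightedHomogeneousSubmodule ℚ w M).smul_mem q
      ((MvPolynomial.mem_weightedHomogeneousSubmodule ℚ w M _).mpr h))

theorem wh_X_mul_pderiv' {σ : Type} (w : σ → ℕ) {S : MvPolynomial σ ℚ} {M M' : ℕ}
    (i j : σ) (c : ℕ) (hw : w j = w i + c) (hM' : M' = M + c)
    (hS : MvPolynomial.IsWeightedHomogeneous w S M) :
    MvPolynomial.IsWeightedHomogeneous w (X j * pderiv i S) M' := by
  rw [hM']; exact wh_X_mul_pderiv w i j c hw hS



/-- For a nonzero semi-invariant `s` (i.e. `D s = 0`) which is homogeneous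
of degree `d` and weighted homogeneous of weight `m` for `w(a_i) = i`, one has
`2m ≤ n·d`, and, with `ω = n·d − 2m` the isobaric weight of `s`, the iterate
`(D*)^[ω] s` is nonzero while `(D*)^[ω+1] s = 0`: the order of `s` equals its weight. -/
theorem order_eq_weight
    (n : ℕ) (hn : 1 ≤ n) (s : MvPolynomial (Fin (n + 1)) ℚ) (d m : ℕ)
    (Dstar : MvPolynomial (Fin (n + 1)) ℚ → MvPolynomial (Fin (n + 1)) ℚ)
    (hDstar : ∀ S, Dstar S = ∑ j : Fin n, ((n - (j : ℕ) : ℕ) : ℚ) •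
        (MvPolynomial.X j.succ * MvPolynomial.pderiv j.castSucc S))
    (hs0 : s ≠ 0)
    (hsemi : (∑ j : Fin n, (((j : ℕ) + 1 : ℚ)) •
        (MvPolynomial.X j.castSucc * MvPolynomial.pderiv j.succ s)) = 0)
    (hhom : MvPolynomial.IsHomogeneous s d)
    (hiso : MvPolynomial.IsWeightedHomogeneous (fun i : Fin (n + 1) => (i : ℕ)) s m) :
    2 * m ≤ n * d ∧
      Dstar^[n * d - 2 * m] s ≠ 0 ∧ Dstar^[n * d - 2 * m + 1] s = 0 := by
  classical
  set w : Fin (n + 1) → ℕ := fun i => (i : ℕ) with hwdef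
  -- ℚ-subtraction form of Dstar
  have hDs : ∀ S, Dstar S = ∑ j : Fin n, ((n : ℚ) - (j : ℕ)) •
      (X j.succ * pderiv j.castSucc S) := by
    intro S
    rw [hDstar]
    refine Finset.sum_congr rfl fun j _ => ?_
    congr 1
    exact_mod_cast Nat.cast_sub j.is_lt.le
  set Dfun : MvPolynomial (Fin (n + 1)) ℚ → MvPolynomial (Fin (n + 1)) ℚ :=
    fun S => ∑ j : Fin n, (((j : ℕ) : ℚ) + 1) • (X j.castSucc * pderiv j.succ S) with hDdef
  set T : ℕ → MvPolynomial (Fin (n + 1)) ℚ := fun k => Dstar^[k] s with hTdef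
  have hT0 : T 0 = s := rfl
  have hTsucc : ∀ k, T (k + 1) = Dstar (T k) := fun k => Function.iterate_succ_apply' Dstar k s
  -- homogeneity of iterates
  have hT : ∀ k, MvPolynomial.IsWeightedHomogeneous 1 (T k) d ∧
      MvPolynomial.IsWeightedHomogeneous w (T k) (m + k) := by
    intro k
    induction k with
    | zero => exact ⟨hhom, by simpa [hT0] using hiso⟩
    | succ k ih =>
      rw [hTsucc, hDs]
      constructor
      · refine MvPolynomial.IsWeightedHomogeneous.sum _ _ _ fun j _ => wh_smul _ ?_
        exact wh_X_mul_pderiv' _ j.castSucc j.succ 0 rfl (by omega) ih.1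
      · refine MvPolynomial.IsWeightedHomogeneous.sum _ _ _ fun j _ => wh_smul _ ?_
        refine wh_X_mul_pderiv' _ j.castSucc j.succ 1 ?_ (by omega) ih.2
        simp [hwdef]
  -- vanishing for large k
  have hvanish : ∀ k, n * d < m + k → T k = 0 := by
    intro k hk
    by_contra h0
    obtain ⟨μ, hμ⟩ := MvPolynomial.ne_zero_iff.mp h0
    have h1 := (hT k).1 hμ
    have h2 := (hT k).2 hμ
    have hle : Finsupp.weight w μ ≤ n * Finsupp.weight 1 μ := by
      rw [Finsupp.weight_apply, Finsupp.weight_apply, Finsupp.sum, Finsupp.sum, Finset.mul_sum]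
      refine Finset.sum_le_sum fun i _ => ?_
      simp only [smul_eq_mul, hwdef, Pi.one_apply, mul_one]
      calc μ i * (i : ℕ) ≤ μ i * n := Nat.mul_le_mul_left _ (Fin.is_le i)
        _ = n * μ i := Nat.mul_comm _ _
    rw [h1, h2] at hle
    omega
  -- Dstar of smul, Dfun of zero, Dstar of zero
  have hDssmul : ∀ (q : ℚ) S, Dstar (q • S) = q • Dstar S := by
    intro q S
    rw [hDs, hDs, Finset.smul_sum]
    refine Finset.sum_congr rfl fun j _ => ?_
    rw [Derivation.map_smul, mul_smul_comm, smul_comm]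
  have hD0 : Dfun 0 = 0 := by simp [hDdef]
  have hDs0 : Dstar 0 = 0 := by rw [hDs]; simp
  -- Euler consequence
  have hE : ∀ k, ∑ i : Fin (n + 1), ((n : ℚ) - 2 * (i : ℕ)) • (X i * pderiv i (T k))
      = (((n : ℚ) * d - 2 * m) - 2 * k) • T k := by
    intro k
    have h1 := euler (1 : Fin (n + 1) → ℕ) (hT k).1
    have h2 := euler w (hT k).2
    calc ∑ i : Fin (n + 1), ((n : ℚ) - 2 * (i : ℕ)) • (X i * pderiv i (T k))
        = ∑ i : Fin (n + 1), ((n : ℚ) • ((((1 : Fin (n + 1) → ℕ) i : ℕ) : ℚ) •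
            (X i * pderiv i (T k))) - (2 : ℚ) • (((w i : ℕ) : ℚ) • (X i * pderiv i (T k)))) := by
          refine Finset.sum_congr rfl fun i _ => ?_
          rw [smul_smul, smul_smul, ← sub_smul]
          congr 1
          simp [hwdef]
      _ = (n : ℚ) • ((d : ℚ) • T k) - (2 : ℚ) • (((m + k : ℕ) : ℚ) • T k) := by
          rw [Finset.sum_sub_distrib, ← Finset.smul_sum, ← Finset.smul_sum, h1, h2]
      _ = (((n : ℚ) * d - 2 * m) - 2 * k) • T k := by
          rw [smul_smul, smul_smul, ← sub_smul]
          congr 1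
          push_cast
          ring
  -- commutator applied
  have hcomm : ∀ S, Dfun (Dstar S) = Dstar (Dfun S)
      + ∑ i : Fin (n + 1), ((n : ℚ) - 2 * (i : ℕ)) • (X i * pderiv i S) := by
    intro S
    rw [hDs S, hDs (Dfun S), hDdef]
    exact comm_raw n S
  -- the key recurrence
  have hrec : ∀ k, Dfun (T (k + 1))
      = ((((k : ℕ) : ℚ) + 1) * (((n : ℚ) * d - 2 * m) - k)) • T k := by
    intro k
    induction k with
    | zero =>
      rw [hTsucc, hcomm, hT0, show Dfun s = 0 from hsemi, hDs0, zero_add, ← hT0, hE 0]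
      congr 1
      push_cast
      ring
    | succ k ih =>
      rw [hTsucc (k + 1), hcomm, ih, hDssmul, ← hTsucc k, hE (k + 1), ← add_smul]
      congr 1
      push_cast
      ring
  -- descent step
  have hstep : ∀ k : ℕ, ((n : ℚ) * d - 2 * m) ≠ (k : ℚ) → T (k + 1) = 0 → T k = 0 := by
    intro k hne h0
    have h := hrec k
    rw [h0, hD0] at h
    have hc : ((((k : ℕ) : ℚ) + 1) * (((n : ℚ) * d - 2 * m) - k)) ≠ 0 :=
      mul_ne_zero (by positivity) (sub_ne_zero.mpr hne)
    have h2 : ((((k : ℕ) : ℚ) + 1) * (((n : ℚ) * d - 2 * m) - k)) • T k = 0 := h.symm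
    calc T k = ((((k : ℕ) : ℚ) + 1) * (((n : ℚ) * d - 2 * m) - k))⁻¹ •
        (((((k : ℕ) : ℚ) + 1) * (((n : ℚ) * d - 2 * m) - k)) • T k) := by
          rw [smul_smul, inv_mul_cancel₀ hc, one_smul]
      _ = 0 := by rw [h2, smul_zero]
  -- part 1 : 2m ≤ nd
  have h2m : 2 * m ≤ n * d := by
    by_contra hlt
    push_neg at hlt
    have hneg : ((n : ℚ) * d - 2 * m) < 0 := by
      have : ((n : ℚ) * d) < 2 * m := by exact_mod_cast hlt
      linarith
    have hne : ∀ k : ℕ, ((n : ℚ) * d - 2 * m) ≠ (k : ℚ) := fun k h => by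
      rw [h] at hneg
      exact absurd hneg (not_lt.mpr (by positivity))
    have hnz : ∀ k, T k ≠ 0 := by
      intro k
      induction k with
      | zero => exact hs0
      | succ k ih => exact fun h0 => ih (hstep k (hne k) h0)
    exact hnz (n * d + 1) (hvanish _ (by omega))
  -- the weight
  have hωq : ((n : ℚ) * d - 2 * m) = ((n * d - 2 * m : ℕ) : ℚ) := by
    rw [Nat.cast_sub h2m]
    push_cast
    ring
  refine ⟨h2m, ?_, ?_⟩
  · -- nonvanishing up to ω
    have key : ∀ k, k ≤ n * d - 2 * m → T k ≠ 0 := by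
      intro k
      induction k with
      | zero => exact fun _ => hs0
      | succ k ih =>
        intro hk h0
        have hne : ((n : ℚ) * d - 2 * m) ≠ (k : ℚ) := by
          rw [hωq]
          exact_mod_cast Nat.ne_of_gt (by omega)
        exact ih (by omega) (hstep k hne h0)
    exact key _ le_rfl
  · -- vanishing at ω + 1
    have hdesc : ∀ j, T (n * d - 2 * m + 1 + j) = 0 → T (n * d - 2 * m + 1) = 0 := by
      intro j
      induction j with
      | zero => exact fun h => h
      | succ j ih =>
        intro h0
        have hidx : n * d - 2 * m + 1 + (j + 1) = (n * d - 2 * m + 1 + j) + 1 := by omega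
        rw [hidx] at h0
        refine ih (hstep _ ?_ h0)
        rw [hωq]
        exact_mod_cast Nat.ne_of_lt (by omega)
    exact hdesc m (hvanish _ (by omega))
end

section
/- Let A : ℕ → ℚ[X] be an Appell sequence. Then for every n, the polynomial Dv_n(A) := ∑_{i=0}^{n} (−1)^i · C(n,i) · (A i) · (A (n−i)) ∈ ℚ[X] is constant; explicitly, ∑_{i=0}^{n} (−1)^i · C(n,i) · (A i) · (A (n−i)) = Polynomial.C ( ∑_{i=0}^{n} (−1)^i · C(n,i) · (A i).eval 0 · (A (n−i)).eval 0 ). -/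
/-- For an Appell sequence `A`, the alternating binomial convolution
`Dv_n(A) = ∑_{i=0}^{n} (−1)^i C(n,i) A_i(x) A_{n−i}(x)` is constant, equal to its
value at `0`. -/
theorem Dv_constant
    (A : ℕ → Polynomial ℚ)
    (hA0 : Polynomial.derivative (A 0) = 0)
    (hA : ∀ k : ℕ, Polynomial.derivative (A (k + 1)) = (k + 1) • A k)
    (n : ℕ) :
    (∑ i ∈ Finset.range (n + 1), ((-1 : ℚ) ^ i * (n.choose i)) • (A i * A (n - i))) =
      Polynomial.C (∑ i ∈ Finset.range (n + 1),
        (-1 : ℚ) ^ i * (n.choose i) * (A i).eval 0 * (A (n - i)).eval 0) := by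
  set P : Polynomial ℚ :=
    ∑ i ∈ Finset.range (n + 1), ((-1 : ℚ) ^ i * (n.choose i)) • (A i * A (n - i)) with hP
  have hderiv : Polynomial.derivative P = 0 := by
    rw [hP, map_sum]
    have hterm : ∀ i, Polynomial.derivative (((-1 : ℚ) ^ i * (n.choose i)) • (A i * A (n - i)))
        = ((-1 : ℚ) ^ i * (n.choose i)) • (Polynomial.derivative (A i) * A (n - i))
          + ((-1 : ℚ) ^ i * (n.choose i)) • (A i * Polynomial.derivative (A (n - i))) := by
      intro i
      rw [Polynomial.derivative_smul, Polynomial.derivative_mul, smul_add]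
    rw [Finset.sum_congr rfl fun i _ => hterm i, Finset.sum_add_distrib]
    have hS1 : (∑ i ∈ Finset.range (n + 1),
        ((-1 : ℚ) ^ i * (n.choose i)) • (Polynomial.derivative (A i) * A (n - i)))
        = ∑ i ∈ Finset.range n,
          (((-1 : ℚ) ^ (i + 1) * (n.choose (i + 1))) * (i + 1)) • (A i * A (n - 1 - i)) := by
      rw [Finset.sum_range_succ']
      rw [hA0]
      simp only [mul_zero, zero_mul, smul_zero, add_zero]
      refine Finset.sum_congr rfl fun i hi => ?_
      have hi' : i < n := Finset.mem_range.mp hi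
      rw [hA i]
      have hidx : n - (i + 1) = n - 1 - i := by omega
      rw [hidx, ← Nat.cast_smul_eq_nsmul ℚ, smul_mul_assoc, smul_smul]
      congr 1
      push_cast
      ring
    have hS2 : (∑ i ∈ Finset.range (n + 1),
        ((-1 : ℚ) ^ i * (n.choose i)) • (A i * Polynomial.derivative (A (n - i))))
        = ∑ i ∈ Finset.range n,
          (((-1 : ℚ) ^ i * (n.choose i)) * (n - i : ℕ)) • (A i * A (n - 1 - i)) := by
      rw [Finset.sum_range_succ]
      rw [Nat.sub_self, hA0]
      simp only [mul_zero, smul_zero, add_zero]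
      refine Finset.sum_congr rfl fun i hi => ?_
      have hi' : i < n := Finset.mem_range.mp hi
      have hidx : n - i = (n - 1 - i) + 1 := by omega
      rw [hidx, hA (n - 1 - i), ← Nat.cast_smul_eq_nsmul ℚ, mul_smul_comm, smul_smul]
    rw [hS1, hS2, ← Finset.sum_add_distrib]
    refine Finset.sum_eq_zero fun i hi => ?_
    rw [← add_smul]
    have hi' : i < n := Finset.mem_range.mp hi
    have hc : (n.choose (i + 1)) * (i + 1) = (n.choose i) * (n - i) := by
      exact Nat.choose_succ_right_eq n i
    have : ((-1 : ℚ) ^ (i + 1) * (n.choose (i + 1))) * (i + 1)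
        + ((-1 : ℚ) ^ i * (n.choose i)) * (n - i : ℕ) = 0 := by
      have hcQ : ((n.choose (i + 1) : ℚ)) * ((i : ℚ) + 1) = (n.choose i : ℚ) * ((n - i : ℕ) : ℚ) := by
        exact_mod_cast congrArg (Nat.cast : ℕ → ℚ) hc
      linear_combination (-(-1 : ℚ) ^ i) * hcQ
    rw [this, zero_smul]
  have hPC : P = Polynomial.C (P.eval 0) := by
    have := Polynomial.eq_C_of_natDegree_eq_zero (p := P) ?_
    · rwa [Polynomial.coeff_zero_eq_eval_zero] at this
    · by_contra h
      have h1 : 0 < P.natDegree := Nat.pos_of_ne_zero h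
      have := Polynomial.natDegree_eq_zero_of_derivative_eq_zero hderiv
      omega
  rw [hPC]
  congr 1
  rw [hP, Polynomial.eval_finset_sum]
  refine Finset.sum_congr rfl fun i _ => ?_
  rw [Polynomial.eval_smul, Polynomial.eval_mul, smul_eq_mul]
  ring
end

section
/- Let A : ℕ → ℚ[X] be an Appell sequence and let n ≥ 4. Then the polynomial Tr_n(A) := ∑_{i=0}^{n} ∑_{j=0}^{i} ((−1)^i / [2n−4]_i) · C(n,i) · C(i,j) · (A (n−i)) · ( [n]_j·(A j) · [n−2]_{i−j}·(A (i−j+2)) − [n−1]_{i−j}·(A (i−j+1)) · [n−1]_j·(A (j+1)) ) ∈ ℚ[X] is constant, i.e. it equals Polynomial.C of its value at 0. -/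
open Polynomial Finset
open scoped Nat
namespace TrAux

noncomputable def dd (n I : ℕ) : ℚ := (-1) ^ I / (Nat.descFactorial (2 * n - 4) I : ℚ)
noncomputable def M (A : ℕ → Polynomial ℚ) (n I J : ℕ) : Polynomial ℚ :=
  A (n - I) * (A J * A (I + 1 - J))

noncomputable def G1 (A : ℕ → Polynomial ℚ) (n i j : ℕ) : Polynomial ℚ :=
  (dd n i * ((n.choose i * i.choose j * (n - i) * n.descFactorial j *
      (n - 2).descFactorial (i - j) : ℕ) : ℚ)) •
    (A (n - i - 1) * (A j * A (i - j + 2)))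
noncomputable def G2 (A : ℕ → Polynomial ℚ) (n i j : ℕ) : Polynomial ℚ :=
  (dd n i * ((n.choose i * i.choose j * j * n.descFactorial j *
      (n - 2).descFactorial (i - j) : ℕ) : ℚ)) •
    (A (n - i) * (A (j - 1) * A (i - j + 2)))
noncomputable def G3 (A : ℕ → Polynomial ℚ) (n i j : ℕ) : Polynomial ℚ :=
  (dd n i * ((n.choose i * i.choose j * (i - j + 2) * n.descFactorial j *
      (n - 2).descFactorial (i - j) : ℕ) : ℚ)) •
    (A (n - i) * (A j * A (i - j + 1)))
noncomputable def G4 (A : ℕ → Polynomial ℚ) (n i j : ℕ) : Polynomial ℚ :=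
  (dd n i * ((n.choose i * i.choose j * (n - i) * (n - 1).descFactorial (i - j) *
      (n - 1).descFactorial j : ℕ) : ℚ)) •
    (A (n - i - 1) * (A (i - j + 1) * A (j + 1)))
noncomputable def G5 (A : ℕ → Polynomial ℚ) (n i j : ℕ) : Polynomial ℚ :=
  (dd n i * ((n.choose i * i.choose j * (i - j + 1) * (n - 1).descFactorial (i - j) *
      (n - 1).descFactorial j : ℕ) : ℚ)) •
    (A (n - i) * (A (i - j) * A (j + 1)))
noncomputable def G6 (A : ℕ → Polynomial ℚ) (n i j : ℕ) : Polynomial ℚ :=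
  (dd n i * ((n.choose i * i.choose j * (j + 1) * (n - 1).descFactorial (i - j) *
      (n - 1).descFactorial j : ℕ) : ℚ)) •
    (A (n - i) * (A (i - j + 1) * A j))

noncomputable def k1A (n I J : ℕ) : ℚ :=
  dd n (I - 1) * ((I * n.choose I * (I - 1).choose J * n.descFactorial J *
      (n - 2).descFactorial (I - 1 - J) : ℕ) : ℚ)
noncomputable def k1B (n I J : ℕ) : ℚ :=
  dd n (I - 1) * ((I * n.choose I * (I - 1).choose (I + 1 - J) * n.descFactorial (I + 1 - J) *
      (n - 2).descFactorial (J - 2) : ℕ) : ℚ)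
noncomputable def k2A (n I J : ℕ) : ℚ :=
  dd n I * ((n.choose I * (I.choose (J + 1) * (J + 1)) * n.descFactorial (J + 1) *
      (n - 2).descFactorial (I - (J + 1)) : ℕ) : ℚ)
noncomputable def k2B (n I J : ℕ) : ℚ :=
  dd n I * ((n.choose I * (I.choose (I + 2 - J) * (I + 2 - J)) * n.descFactorial (I + 2 - J) *
      (n - 2).descFactorial (J - 2) : ℕ) : ℚ)
noncomputable def k3A (n I J : ℕ) : ℚ :=
  dd n I * ((n.choose I * (I.choose J * (I - J + 2)) * n.descFactorial J *
      (n - 2).descFactorial (I - J) : ℕ) : ℚ)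
noncomputable def k3B (n I J : ℕ) : ℚ :=
  dd n I * ((n.choose I * (I.choose (I + 1 - J) * (J + 1)) * n.descFactorial (I + 1 - J) *
      (n - 2).descFactorial (J - 1) : ℕ) : ℚ)
noncomputable def k4A (n I J : ℕ) : ℚ :=
  dd n (I - 1) * ((n.choose I * (J * I.choose J) * (n - 1).descFactorial (I - J) *
      (n - 1).descFactorial (J - 1) : ℕ) : ℚ)
noncomputable def k5B (n I J : ℕ) : ℚ :=
  dd n I * ((n.choose I * (I.choose J * (J + 1)) * (n - 1).descFactorial J *
      (n - 1).descFactorial (I - J) : ℕ) : ℚ)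
noncomputable def k6B (n I J : ℕ) : ℚ :=
  dd n I * ((n.choose I * (I.choose (I + 1 - J) * (I + 2 - J)) * (n - 1).descFactorial (J - 1) *
      (n - 1).descFactorial (I + 1 - J) : ℕ) : ℚ)

theorem sum_ext (f : ℕ → Polynomial ℚ) {a b : ℕ} (hab : a ≤ b)
    (hz : ∀ x, a ≤ x → x < b → f x = 0) :
    ∑ x ∈ range a, f x = ∑ x ∈ range b, f x :=
  Finset.sum_subset (Finset.range_subset_range.mpr hab)
    (fun x hx hnx => hz x (by simpa using hnx) (by simpa using hx))

theorem fam3A (A : ℕ → Polynomial ℚ) (n : ℕ) :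
    ∑ i ∈ range (n + 1), ∑ j ∈ range (i + 1), G3 A n i j
      = ∑ I ∈ range (n + 3), ∑ J ∈ range (I + 2), k3A n I J • M A n I J := by
  rw [← sum_ext (fun I => ∑ J ∈ range (I + 2), k3A n I J • M A n I J) (a := n+1) (b := n+3)
      (by omega)
      (fun I hI _ => Finset.sum_eq_zero (fun J _ => by
        simp [k3A, Nat.choose_eq_zero_of_lt (show n < I by omega)]))]
  refine Finset.sum_congr rfl (fun i hi => ?_)
  rw [← sum_ext (fun J => k3A n i J • M A n i J) (a := i+1) (b := i+2) (by omega)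
      (fun J hJ hJ2 => by
        simp [k3A, Nat.choose_eq_zero_of_lt (show i < J by omega)])]
  refine Finset.sum_congr rfl (fun j hj => ?_)
  have hji : j ≤ i := by simp at hj; omega
  rw [G3, k3A, M, show i + 1 - j = i - j + 1 by omega]
  congr 3
  ring

theorem fam5B (A : ℕ → Polynomial ℚ) (n : ℕ) :
    ∑ i ∈ range (n + 1), ∑ j ∈ range (i + 1), G5 A n i j
      = ∑ I ∈ range (n + 3), ∑ J ∈ range (I + 2), k5B n I J • M A n I J := by
  rw [← sum_ext (fun I => ∑ J ∈ range (I + 2), k5B n I J • M A n I J) (a := n+1) (b := n+3)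
      (by omega)
      (fun I hI _ => Finset.sum_eq_zero (fun J _ => by
        simp [k5B, Nat.choose_eq_zero_of_lt (show n < I by omega)]))]
  refine Finset.sum_congr rfl (fun i hi => ?_)
  rw [← Finset.sum_range_reflect (fun j => G5 A n i j) (i + 1)]
  rw [← sum_ext (fun J => k5B n i J • M A n i J) (a := i+1) (b := i+2) (by omega)
      (fun J hJ hJ2 => by
        simp [k5B, Nat.choose_eq_zero_of_lt (show i < J by omega)])]
  refine Finset.sum_congr rfl (fun j hj => ?_)
  have hji : j ≤ i := by simp at hj; omega
  rw [show i + 1 - 1 - j = i - j by omega]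
  rw [G5, k5B, M]
  rw [show i - (i - j) = j by omega, show i - j + 1 = i + 1 - j by omega,
    show i.choose (i - j) = i.choose j from by rw [← Nat.choose_symm hji]]
  congr 3
  ring

theorem fam6B (A : ℕ → Polynomial ℚ) (n : ℕ) :
    ∑ i ∈ range (n + 1), ∑ j ∈ range (i + 1), G6 A n i j
      = ∑ I ∈ range (n + 3), ∑ J ∈ range (I + 2), k6B n I J • M A n I J := by
  rw [← sum_ext (fun I => ∑ J ∈ range (I + 2), k6B n I J • M A n I J) (a := n+1) (b := n+3)
      (by omega)
      (fun I hI _ => Finset.sum_eq_zero (fun J _ => by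
        simp [k6B, Nat.choose_eq_zero_of_lt (show n < I by omega)]))]
  refine Finset.sum_congr rfl (fun i hi => ?_)
  rw [show i + 2 = i + 1 + 1 from rfl,
    Finset.sum_range_succ' (fun J => k6B n i J • M A n i J) (i + 1)]
  have h0 : k6B n i 0 • M A n i 0 = 0 := by
    simp [k6B, Nat.choose_eq_zero_of_lt (show i < i + 1 - 0 by omega)]
  rw [h0, add_zero]
  rw [← Finset.sum_range_reflect (fun j => G6 A n i j) (i + 1)]
  refine Finset.sum_congr rfl (fun j hj => ?_)
  have hji : j ≤ i := by simp at hj; omega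
  rw [show i + 1 - 1 - j = i - j by omega]
  rw [G6, k6B, M]
  rw [show i - (i - j) = j by omega,
    show i + 1 - (j + 1) = i - j by omega,
    show i + 2 - (j + 1) = i - j + 1 by omega,
    show j + 1 - 1 = j from rfl,
    show (i - j) + 1 = i - j + 1 from rfl]
  congr 3
  ring

theorem fam2A (A : ℕ → Polynomial ℚ) (n : ℕ) :
    ∑ i ∈ range (n + 1), ∑ j ∈ range (i + 1), G2 A n i j
      = ∑ I ∈ range (n + 3), ∑ J ∈ range (I + 2), k2A n I J • M A n I J := by
  rw [← sum_ext (fun I => ∑ J ∈ range (I + 2), k2A n I J • M A n I J) (a := n+1) (b := n+3)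
      (by omega)
      (fun I hI _ => Finset.sum_eq_zero (fun J _ => by
        simp [k2A, Nat.choose_eq_zero_of_lt (show n < I by omega)]))]
  refine Finset.sum_congr rfl (fun i hi => ?_)
  rw [← sum_ext (fun J => k2A n i J • M A n i J) (a := i) (b := i+2) (by omega)
      (fun J hJ hJ2 => by
        simp [k2A, Nat.choose_eq_zero_of_lt (show i < J + 1 by omega)])]
  rw [Finset.sum_range_succ' (fun j => G2 A n i j) i]
  have h0 : G2 A n i 0 = 0 := by simp [G2]
  rw [h0, add_zero]
  refine Finset.sum_congr rfl (fun j hj => ?_)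
  have hji : j < i := by simp at hj; omega
  rw [G2, k2A, M]
  rw [show j + 1 - 1 = j from rfl,
    show i - (j + 1) + 2 = i + 1 - j by omega]
  congr 3
  ring

theorem fam3B (A : ℕ → Polynomial ℚ) (n : ℕ) :
    ∑ i ∈ range (n + 1), ∑ j ∈ range (i + 1), G3 A n i j
      = ∑ I ∈ range (n + 3), ∑ J ∈ range (I + 2), k3B n I J • M A n I J := by
  rw [← sum_ext (fun I => ∑ J ∈ range (I + 2), k3B n I J • M A n I J) (a := n+1) (b := n+3)
      (by omega)
      (fun I hI _ => Finset.sum_eq_zero (fun J _ => by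
        simp [k3B, Nat.choose_eq_zero_of_lt (show n < I by omega)]))]
  refine Finset.sum_congr rfl (fun i hi => ?_)
  rw [show i + 2 = i + 1 + 1 from rfl,
    Finset.sum_range_succ' (fun J => k3B n i J • M A n i J) (i + 1)]
  have h0 : k3B n i 0 • M A n i 0 = 0 := by
    simp [k3B, Nat.choose_eq_zero_of_lt (show i < i + 1 - 0 by omega)]
  rw [h0, add_zero]
  rw [← Finset.sum_range_reflect (fun j => G3 A n i j) (i + 1)]
  refine Finset.sum_congr rfl (fun j hj => ?_)
  have hji : j ≤ i := by simp at hj; omega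
  rw [show i + 1 - 1 - j = i - j by omega]
  rw [G3, k3B, M]
  rw [show i - (i - j) = j by omega,
    show i + 1 - (j + 1) = i - j by omega,
    show j + 1 - 1 = j from rfl]
  rw [mul_comm (A (i - j)) (A (j + 1))]
  congr 3
  ring

theorem fam1A (A : ℕ → Polynomial ℚ) (n : ℕ) :
    ∑ i ∈ range (n + 1), ∑ j ∈ range (i + 1), G1 A n i j
      = ∑ I ∈ range (n + 3), ∑ J ∈ range (I + 2), k1A n I J • M A n I J := by
  rw [show n + 3 = n + 2 + 1 from rfl,
    Finset.sum_range_succ' (fun I => ∑ J ∈ range (I + 2), k1A n I J • M A n I J) (n + 2)]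
  have hrow0 : ∑ J ∈ range (0 + 2), k1A n 0 J • M A n 0 J = 0 :=
    Finset.sum_eq_zero (fun J _ => by simp [k1A])
  rw [hrow0, add_zero,
    Finset.sum_range_succ (fun i => ∑ J ∈ range (i + 1 + 2), k1A n (i + 1) J • M A n (i + 1) J)
      (n + 1)]
  have hlast : ∑ J ∈ range (n + 1 + 1 + 2), k1A n (n + 1 + 1) J • M A n (n + 1 + 1) J = 0 :=
    Finset.sum_eq_zero (fun J _ => by
      simp [k1A, Nat.choose_eq_zero_of_lt (show n < n + 1 + 1 by omega)])
  rw [hlast, add_zero]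
  refine Finset.sum_congr rfl (fun i hi => ?_)
  rw [← sum_ext (fun J => k1A n (i + 1) J • M A n (i + 1) J) (a := i + 1) (b := i + 1 + 2)
      (by omega)
      (fun J hJ hJ2 => by
        simp [k1A, Nat.add_sub_cancel, Nat.choose_eq_zero_of_lt (show i < J by omega)])]
  refine Finset.sum_congr rfl (fun j hj => ?_)
  have hji : j ≤ i := by simp at hj; omega
  rw [G1, k1A, M, Nat.add_sub_cancel]
  rw [show n - (i + 1) = n - i - 1 by omega, show i + 1 + 1 - j = i - j + 2 by omega]
  have key : (i + 1) * n.choose (i + 1) = n.choose i * (n - i) := by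
    rw [mul_comm]; exact Nat.choose_succ_right_eq n i
  rw [key]
  congr 3
  ring

theorem fam4A (A : ℕ → Polynomial ℚ) (n : ℕ) :
    ∑ i ∈ range (n + 1), ∑ j ∈ range (i + 1), G4 A n i j
      = ∑ I ∈ range (n + 3), ∑ J ∈ range (I + 2), k4A n I J • M A n I J := by
  rw [show n + 3 = n + 2 + 1 from rfl,
    Finset.sum_range_succ' (fun I => ∑ J ∈ range (I + 2), k4A n I J • M A n I J) (n + 2)]
  have hrow0 : ∑ J ∈ range (0 + 2), k4A n 0 J • M A n 0 J = 0 := by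
    refine Finset.sum_eq_zero (fun J hJ => ?_)
    have hJ2 : J < 2 := by simpa using hJ
    interval_cases J <;> simp [k4A]
  rw [hrow0, add_zero,
    Finset.sum_range_succ (fun i => ∑ J ∈ range (i + 1 + 2), k4A n (i + 1) J • M A n (i + 1) J)
      (n + 1)]
  have hlast : ∑ J ∈ range (n + 1 + 1 + 2), k4A n (n + 1 + 1) J • M A n (n + 1 + 1) J = 0 :=
    Finset.sum_eq_zero (fun J _ => by
      simp [k4A, Nat.choose_eq_zero_of_lt (show n < n + 1 + 1 by omega)])
  rw [hlast, add_zero]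
  refine Finset.sum_congr rfl (fun i hi => ?_)
  rw [show i + 1 + 2 = i + 1 + 1 + 1 from rfl,
    Finset.sum_range_succ (fun J => k4A n (i + 1) J • M A n (i + 1) J) (i + 1 + 1)]
  have htop : k4A n (i + 1) (i + 1 + 1) • M A n (i + 1) (i + 1 + 1) = 0 := by
    simp [k4A, Nat.choose_eq_zero_of_lt (show i + 1 < i + 1 + 1 by omega)]
  rw [htop, add_zero,
    Finset.sum_range_succ' (fun J => k4A n (i + 1) J • M A n (i + 1) J) (i + 1)]
  have h0 : k4A n (i + 1) 0 • M A n (i + 1) 0 = 0 := by simp [k4A]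
  rw [h0, add_zero]
  refine Finset.sum_congr rfl (fun j hj => ?_)
  have hji : j ≤ i := by simp at hj; omega
  rw [G4, k4A, M]
  rw [show n - (i + 1) = n - i - 1 by omega, show i + 1 - (j + 1) = i - j by omega,
    show j + 1 - 1 = j from rfl, show i + 1 + 1 - (j + 1) = i - j + 1 by omega]
  have key : n.choose (i + 1) * ((j + 1) * (i + 1).choose (j + 1)) =
      n.choose i * i.choose j * (n - i) := by
    rw [mul_comm (j + 1) ((i + 1).choose (j + 1)), ← Nat.add_one_mul_choose_eq, ← mul_assoc,
      Nat.choose_succ_right_eq]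
    ring
  rw [key, mul_comm (A (i - j + 1)) (A (j + 1))]
  congr 3

theorem fam1B (A : ℕ → Polynomial ℚ) (n : ℕ) :
    ∑ i ∈ range (n + 1), ∑ j ∈ range (i + 1), G1 A n i j
      = ∑ I ∈ range (n + 3), ∑ J ∈ range (I + 2), k1B n I J • M A n I J := by
  rw [show n + 3 = n + 2 + 1 from rfl,
    Finset.sum_range_succ' (fun I => ∑ J ∈ range (I + 2), k1B n I J • M A n I J) (n + 2)]
  have hrow0 : ∑ J ∈ range (0 + 2), k1B n 0 J • M A n 0 J = 0 :=
    Finset.sum_eq_zero (fun J _ => by simp [k1B])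
  rw [hrow0, add_zero,
    Finset.sum_range_succ (fun i => ∑ J ∈ range (i + 1 + 2), k1B n (i + 1) J • M A n (i + 1) J)
      (n + 1)]
  have hlast : ∑ J ∈ range (n + 1 + 1 + 2), k1B n (n + 1 + 1) J • M A n (n + 1 + 1) J = 0 :=
    Finset.sum_eq_zero (fun J _ => by
      simp [k1B, Nat.choose_eq_zero_of_lt (show n < n + 1 + 1 by omega)])
  rw [hlast, add_zero]
  refine Finset.sum_congr rfl (fun i hi => ?_)
  rw [show i + 1 + 2 = i + 1 + 1 + 1 from rfl,
    Finset.sum_range_succ' (fun J => k1B n (i + 1) J • M A n (i + 1) J) (i + 1 + 1)]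
  have h0 : k1B n (i + 1) 0 • M A n (i + 1) 0 = 0 := by
    have hz : (i + 1 - 1).choose (i + 1 + 1 - 0) = 0 := Nat.choose_eq_zero_of_lt (by omega)
    rw [k1B, hz]; simp
  rw [h0, add_zero,
    Finset.sum_range_succ' (fun J => k1B n (i + 1) (J + 1) • M A n (i + 1) (J + 1)) (i + 1)]
  have h1 : k1B n (i + 1) (0 + 1) • M A n (i + 1) (0 + 1) = 0 := by
    have hz : (i + 1 - 1).choose (i + 1 + 1 - (0 + 1)) = 0 := Nat.choose_eq_zero_of_lt (by omega)
    rw [k1B, hz]; simp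
  rw [h1, add_zero]
  rw [← Finset.sum_range_reflect (fun j => G1 A n i j) (i + 1)]
  refine Finset.sum_congr rfl (fun j hj => ?_)
  have hji : j ≤ i := by simp at hj; omega
  rw [show i + 1 - 1 - j = i - j by omega]
  rw [G1, k1B, M, Nat.add_sub_cancel]
  rw [show i - (i - j) = j by omega, show i + 1 + 1 - (j + 1 + 1) = i - j by omega,
    show j + 1 + 1 - 2 = j from rfl, show n - (i + 1) = n - i - 1 by omega]
  have key : (i + 1) * n.choose (i + 1) = n.choose i * (n - i) := by
    rw [mul_comm]; exact Nat.choose_succ_right_eq n i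
  rw [key, mul_comm (A (i - j)) (A (j + 1 + 1))]
  congr 3
  ring

theorem fam2B (A : ℕ → Polynomial ℚ) (n : ℕ) :
    ∑ i ∈ range (n + 1), ∑ j ∈ range (i + 1), G2 A n i j
      = ∑ I ∈ range (n + 3), ∑ J ∈ range (I + 2), k2B n I J • M A n I J := by
  rw [← sum_ext (fun I => ∑ J ∈ range (I + 2), k2B n I J • M A n I J) (a := n+1) (b := n+3)
      (by omega)
      (fun I hI _ => Finset.sum_eq_zero (fun J _ => by
        simp [k2B, Nat.choose_eq_zero_of_lt (show n < I by omega)]))]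
  refine Finset.sum_congr rfl (fun i hi => ?_)
  rw [sum_ext (fun J => k2B n i J • M A n i J) (a := i + 2) (b := i + 2 + 1) (by omega)
      (fun J hJ hJ2 => by
        rw [show J = i + 2 by omega]
        simp [k2B, Nat.sub_self])]
  rw [show i + 2 + 1 = i + 1 + 1 + 1 from rfl,
    Finset.sum_range_succ' (fun J => k2B n i J • M A n i J) (i + 1 + 1)]
  have h0 : k2B n i 0 • M A n i 0 = 0 := by
    have hz : i.choose (i + 2 - 0) = 0 := Nat.choose_eq_zero_of_lt (by omega)
    rw [k2B, hz]; simp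
  rw [h0, add_zero,
    Finset.sum_range_succ' (fun J => k2B n i (J + 1) • M A n i (J + 1)) (i + 1)]
  have h1 : k2B n i (0 + 1) • M A n i (0 + 1) = 0 := by
    have hz : i.choose (i + 2 - (0 + 1)) = 0 := Nat.choose_eq_zero_of_lt (by omega)
    rw [k2B, hz]; simp
  rw [h1, add_zero]
  rw [← Finset.sum_range_reflect (fun j => G2 A n i j) (i + 1)]
  refine Finset.sum_congr rfl (fun j hj => ?_)
  have hji : j ≤ i := by simp at hj; omega
  rw [show i + 1 - 1 - j = i - j by omega]
  rw [G2, k2B, M]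
  rw [show i - (i - j) = j by omega, show i + 2 - (j + 1 + 1) = i - j by omega,
    show j + 1 + 1 - 2 = j from rfl, show i + 1 - (j + 1 + 1) = i - j - 1 by omega]
  rw [mul_comm (A (i - j - 1)) (A (j + 1 + 1))]
  congr 3
  ring

theorem ddrel (n I : ℕ) (hn : 4 ≤ n) (hI1 : 1 ≤ I) (hIn : I ≤ n) :
    dd n (I - 1) = -((2 * n - 3 - I : ℕ) : ℚ) * dd n I := by
  obtain ⟨c, rfl⟩ : ∃ c, I = c + 1 := ⟨I - 1, by omega⟩
  have h1 : (2 * n - 4).descFactorial (c + 1) = (2 * n - 4 - c) * (2 * n - 4).descFactorial c :=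
    Nat.descFactorial_succ _ _
  have h2 : 2 * n - 3 - (c + 1) = 2 * n - 4 - c := by omega
  have h3 : ((2 * n - 4 - c : ℕ) : ℚ) ≠ 0 := by
    have : (2 * n - 4 - c : ℕ) ≠ 0 := by omega
    exact_mod_cast this
  have h4 : ((2 * n - 4).descFactorial c : ℚ) ≠ 0 := by
    have : (2 * n - 4).descFactorial c ≠ 0 := by
      rw [Ne, Nat.descFactorial_eq_zero_iff_lt]; omega
    exact_mod_cast this
  rw [dd, dd, Nat.add_sub_cancel, h1, h2, pow_succ]
  push_cast
  field_simp

theorem cast_desc {m k : ℕ} (h : k ≤ m) :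
    ((m.descFactorial k : ℕ) : ℚ) = (m ! : ℚ) / ((m - k)! : ℚ) := by
  have h1 := Nat.factorial_mul_descFactorial h
  have h2 : ((m - k)! : ℚ) ≠ 0 := by exact_mod_cast (Nat.factorial_ne_zero (m - k))
  field_simp
  exact_mod_cast (mul_comm ((m - k)!) (m.descFactorial k) ▸ h1)

theorem cast_ch {m k : ℕ} (h : k ≤ m) :
    ((m.choose k : ℕ) : ℚ) = (m ! : ℚ) / ((k ! : ℚ) * ((m - k)! : ℚ)) :=
  Nat.cast_choose ℚ h

set_option maxHeartbeats 2000000 in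
theorem certificate (n : ℕ) (hn : 4 ≤ n) (I J : ℕ) (hJ : J ≤ I + 1) :
    k1A n I J + k1B n I J + k2A n I J + k2B n I J + k3A n I J + k3B n I J
      - 2 * k4A n I J - 2 * k5B n I J - 2 * k6B n I J = 0 := by
  rcases Nat.lt_or_ge n I with hnI | hnI
  · simp [k1A, k1B, k2A, k2B, k3A, k3B, k4A, k5B, k6B, Nat.choose_eq_zero_of_lt hnI]
  rcases Nat.eq_zero_or_pos I with rfl | hI1
  · -- I = 0, J ≤ 1
    interval_cases J <;>
      simp [k1A, k1B, k2A, k2B, k3A, k3B, k4A, k5B, k6B] <;> ring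
  -- now 1 ≤ I ≤ n
  rcases Nat.eq_zero_or_pos J with rfl | hJ1
  · -- J = 0
    have z1B : k1B n I 0 = 0 := by
      have hz : (I - 1).choose (I + 1 - 0) = 0 := Nat.choose_eq_zero_of_lt (by omega)
      rw [k1B, hz]; simp
    have z2B : k2B n I 0 = 0 := by
      have hz : I.choose (I + 2 - 0) = 0 := Nat.choose_eq_zero_of_lt (by omega)
      rw [k2B, hz]; simp
    have z3B : k3B n I 0 = 0 := by
      have hz : I.choose (I + 1 - 0) = 0 := Nat.choose_eq_zero_of_lt (by omega)
      rw [k3B, hz]; simp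
    have z4A : k4A n I 0 = 0 := by rw [k4A]; simp
    have z6B : k6B n I 0 = 0 := by
      have hz : I.choose (I + 1 - 0) = 0 := Nat.choose_eq_zero_of_lt (by omega)
      rw [k6B, hz]; simp
    rw [z1B, z2B, z3B, z4A, z6B]
    rcases Nat.eq_or_lt_of_le hnI with rfl | hIn
    · -- I = n : all survivors vanish
      have d1 : (I - 2).descFactorial (I - 1 - 0) = 0 := by
        rw [Nat.descFactorial_eq_zero_iff_lt]; omega
      have d2 : (I - 2).descFactorial (I - (0 + 1)) = 0 := by
        rw [Nat.descFactorial_eq_zero_iff_lt]; omega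
      have d3 : (I - 2).descFactorial (I - 0) = 0 := by
        rw [Nat.descFactorial_eq_zero_iff_lt]; omega
      have d4 : (I - 1).descFactorial (I - 0) = 0 := by
        rw [Nat.descFactorial_eq_zero_iff_lt]; omega
      rw [k1A, k2A, k3A, k5B, d1, d2, d3, d4]
      simp
    · -- 1 ≤ I < n
      obtain ⟨c, rfl⟩ : ∃ c, I = c + 1 := ⟨I - 1, by omega⟩
      obtain ⟨m, rfl⟩ : ∃ m, n = c + m + 2 := ⟨n - c - 2, by omega⟩
      rw [k1A, k2A, k3A, k5B]
      rw [ddrel (c + m + 2) (c + 1) hn (by omega) (by omega)]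
      simp only [Nat.sub_zero, show c + 1 - 1 = c by omega, show c + 1 - 0 = c + 1 by omega,
        show c + 1 - (0 + 1) = c by omega,
        show c + m + 2 - 2 = c + m by omega, show c + m + 2 - 1 = c + m + 1 by omega,
        show 2 * (c + m + 2) - 3 - (c + 1) = c + 2 * m by omega]
      rw [show (c + m).descFactorial (c + 1) = (c + m - c) * (c + m).descFactorial c
          from Nat.descFactorial_succ _ _,
        show (c + m + 1).descFactorial (c + 1) = (c + m + 1) * (c + m).descFactorial c
          from Nat.succ_descFactorial_succ _ _,
        show c + m - c = m by omega]
      simp only [zero_add, Nat.descFactorial_zero, Nat.descFactorial_one,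
        Nat.choose_zero_right, Nat.choose_one_right]
      push_cast
      ring
  rcases Nat.lt_or_ge J 2 with hJ2 | hJ2
  · -- J = 1
    obtain rfl : J = 1 := by omega
    have z1B : k1B n I 1 = 0 := by
      have hz : (I - 1).choose (I + 1 - 1) = 0 := Nat.choose_eq_zero_of_lt (by omega)
      rw [k1B, hz]; simp
    have z2B : k2B n I 1 = 0 := by
      have hz : I.choose (I + 2 - 1) = 0 := Nat.choose_eq_zero_of_lt (by omega)
      rw [k2B, hz]; simp
    rw [z1B, z2B]
    rcases Nat.lt_or_ge I 2 with hI2 | hI2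
    · -- I = 1
      obtain rfl : I = 1 := by omega
      obtain ⟨m, rfl⟩ : ∃ m, n = m + 4 := ⟨n - 4, by omega⟩
      have z1A : k1A (m + 4) 1 1 = 0 := by
        rw [k1A, show (1:ℕ) - 1 = 0 from rfl, Nat.choose_zero_succ]; simp
      have z2A : k2A (m + 4) 1 1 = 0 := by
        rw [k2A, show Nat.choose 1 (1 + 1) = 0 from Nat.choose_eq_zero_of_lt (by omega)]; simp
      rw [z1A, z2A, k3A, k3B, k4A, k5B, k6B]
      rw [ddrel (m + 4) 1 hn (by omega) (by omega)]
      simp only [show (1:ℕ) - 1 = 0 from rfl, show (1:ℕ) - 0 = 1 from rfl,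
        show 1 + 1 - 1 = 1 from rfl, show 1 + 2 - 1 = 2 from rfl,
        show m + 4 - 2 = m + 2 by omega, show m + 4 - 1 = m + 3 by omega,
        show 2 * (m + 4) - 3 - 1 = 2 * m + 4 by omega,
        show (1:ℕ) - 1 + 2 = 2 from rfl]
      simp only [Nat.descFactorial_zero, Nat.descFactorial_one, Nat.choose_zero_right,
        Nat.choose_one_right, Nat.choose_self]
      push_cast
      ring
    -- now 2 ≤ I ≤ n
    rcases Nat.eq_or_lt_of_le hnI with rfl | hIn
    · -- I = n
      have z3A : k3A I I 1 = 0 := by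
        have hz : (I - 2).descFactorial (I - 1) = 0 := by
          rw [Nat.descFactorial_eq_zero_iff_lt]; omega
        rw [k3A, hz]; simp
      have z6B : k6B I I 1 = 0 := by
        have hz : (I - 1).descFactorial (I + 1 - 1) = 0 := by
          rw [Nat.descFactorial_eq_zero_iff_lt]; omega
        rw [k6B, hz]; simp
      rw [z3A, z6B, k1A, k2A, k3B, k4A, k5B]
      obtain ⟨m, rfl⟩ : ∃ m, I = m + 4 := ⟨I - 4, by omega⟩
      rw [ddrel (m + 4) (m + 4) hn (by omega) (by omega)]
      simp only [show m + 4 - 1 - 1 = m + 2 by omega, show m + 4 - 1 = m + 3 by omega,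
        show m + 3 - 1 = m + 2 by omega, show m + 4 - 2 = m + 2 by omega,
        show m + 4 - (1 + 1) = m + 2 by omega,
        show m + 4 + 1 - 1 = m + 4 by omega, show m + 4 - 0 = m + 4 by omega,
        show (1:ℕ) - 1 = 0 from rfl,
        show 2 * (m + 4) - 3 - (m + 4) = m + 1 by omega]
      rw [Nat.choose_succ_right_eq (m + 4) 1]
      simp only [Nat.descFactorial_zero, Nat.descFactorial_one, Nat.choose_zero_right,
        Nat.choose_one_right, Nat.choose_self]
      rw [show (m + 4).descFactorial (m + 4) = (m + 4) * (m + 3).descFactorial (m + 3)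
          from Nat.succ_descFactorial_succ _ _,
        show (m + 3).descFactorial (m + 3) = (m + 3) * (m + 2).descFactorial (m + 2)
          from Nat.succ_descFactorial_succ _ _,
        show (m + 4).descFactorial (1 + 1) = (m + 4) * (m + 3).descFactorial 1
          from Nat.succ_descFactorial_succ _ _]
      simp only [Nat.descFactorial_one]
      push_cast
      ring
    · -- 2 ≤ I < n
      obtain ⟨c, rfl⟩ : ∃ c, I = c + 2 := ⟨I - 2, by omega⟩
      obtain ⟨m, rfl⟩ : ∃ m, n = c + m + 3 := ⟨n - c - 3, by omega⟩
      rw [k1A, k2A, k3A, k3B, k4A, k5B, k6B]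
      rw [ddrel (c + m + 3) (c + 2) hn (by omega) (by omega)]
      simp only [show c + 2 - 1 - 1 = c by omega, show c + 2 - 1 = c + 1 by omega,
        show c + 2 - 2 = c by omega, show c + 2 - (1 + 1) = c by omega,
        show c + 2 + 1 - 1 = c + 2 by omega, show c + 2 - 0 = c + 2 by omega,
        show c + m + 3 - 2 = c + m + 1 by omega, show c + m + 3 - 1 = c + m + 2 by omega,
        show 2 * (c + m + 3) - 3 - (c + 2) = c + 2 * m + 1 by omega]
      rw [Nat.choose_succ_right_eq (c + 2) 1]
      simp only [Nat.descFactorial_zero, Nat.descFactorial_one, Nat.choose_zero_right,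
        Nat.choose_one_right, Nat.choose_self]
      rw [show (c + m + 1).descFactorial (c + 1) = (c + m + 1 - c) * (c + m + 1).descFactorial c
          from Nat.descFactorial_succ _ _,
        show (c + m + 2).descFactorial (c + 1) = (c + m + 2) * (c + m + 1).descFactorial c
          from Nat.succ_descFactorial_succ _ _,
        show (c + m + 2).descFactorial (c + 2) = (c + m + 2 - (c + 1)) * (c + m + 2).descFactorial (c + 1)
          from Nat.descFactorial_succ _ _,
        show (c + m + 3).descFactorial (c + 2) = (c + m + 3) * (c + m + 2).descFactorial (c + 1)
          from Nat.succ_descFactorial_succ _ _]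
      rw [show (c + m + 2).descFactorial (c + 1) = (c + m + 2) * (c + m + 1).descFactorial c
          from Nat.succ_descFactorial_succ _ _]
      rw [show c + m + 1 - c = m + 1 by omega, show c + m + 2 - (c + 1) = m + 1 by omega]
      rw [show (c + m + 3).descFactorial 2 = (c + m + 3 - 1) * (c + m + 3).descFactorial 1
          from Nat.descFactorial_succ _ _, show c + m + 3 - 1 = c + m + 2 by omega]
      simp only [show (1:ℕ) - 1 = 0 from rfl, Nat.descFactorial_one, Nat.descFactorial_zero]
      push_cast
      ring
  rcases Nat.lt_or_ge J I with hJI | hJI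
  · -- 2 ≤ J ≤ I - 1 : generic
    obtain ⟨a, rfl⟩ : ∃ a, J = a + 2 := ⟨J - 2, by omega⟩
    obtain ⟨b, rfl⟩ : ∃ b, I = a + b + 3 := ⟨I - a - 3, by omega⟩
    obtain ⟨m, rfl⟩ : ∃ m, n = a + b + m + 3 := ⟨n - a - b - 3, by omega⟩
    rw [k1A, k1B, k2A, k2B, k3A, k3B, k4A, k5B, k6B]
    rw [ddrel (a + b + m + 3) (a + b + 3) hn (by omega) (by omega)]
    simp only [show a + b + 3 - 1 = a + b + 2 by omega,
      show a + b + 2 - (a + 2) = b by omega,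
      show a + b + m + 3 - 2 = a + b + m + 1 by omega,
      show a + b + m + 3 - 1 = a + b + m + 2 by omega,
      show a + b + 3 + 1 - (a + 2) = b + 2 by omega,
      show a + 2 - 2 = a by omega,
      show a + b + 3 - (a + 2 + 1) = b by omega,
      show a + b + 3 + 2 - (a + 2) = b + 3 by omega,
      show a + b + 3 - (a + 2) = b + 1 by omega,
      show a + 2 - 1 = a + 1 by omega,
      show a + 2 + 1 = a + 3 by omega,
      show b + 1 + 2 = b + 3 by omega,
      show 2 * (a + b + m + 3) - 3 - (a + b + 3) = a + b + 2 * m by omega]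
    rw [show (a+b+m+3).descFactorial (a+2) = (a+b+m+3) * ((a+b+m+2).descFactorial (a+1))
        from Nat.succ_descFactorial_succ _ _,
      show (a+b+m+3).descFactorial (a+3) = (a+b+m+3) * ((a+b+m+2).descFactorial (a+2))
        from Nat.succ_descFactorial_succ _ _,
      show (a+b+m+3).descFactorial (b+2) = (a+b+m+3) * ((a+b+m+2).descFactorial (b+1))
        from Nat.succ_descFactorial_succ _ _,
      show (a+b+m+3).descFactorial (b+3) = (a+b+m+3) * ((a+b+m+2).descFactorial (b+2))
        from Nat.succ_descFactorial_succ _ _,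
      show (a+b+m+2).descFactorial (a+2) = (a+b+m+2) * ((a+b+m+1).descFactorial (a+1))
        from Nat.succ_descFactorial_succ _ _,
      show (a+b+m+2).descFactorial (b+2) = (a+b+m+2) * ((a+b+m+1).descFactorial (b+1))
        from Nat.succ_descFactorial_succ _ _,
      show (a+b+m+2).descFactorial (a+1) = (a+b+m+2) * ((a+b+m+1).descFactorial a)
        from Nat.succ_descFactorial_succ _ _,
      show (a+b+m+2).descFactorial (b+1) = (a+b+m+2) * ((a+b+m+1).descFactorial b)
        from Nat.succ_descFactorial_succ _ _,
      show (a+b+m+1).descFactorial (a+1)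
          = (a+b+m+1-a) * ((a+b+m+1).descFactorial a) from Nat.descFactorial_succ _ _,
      show (a+b+m+1).descFactorial (b+1)
          = (a+b+m+1-b) * ((a+b+m+1).descFactorial b) from Nat.descFactorial_succ _ _,
      show a+b+m+1-a = b+m+1 by omega, show a+b+m+1-b = a+m+1 by omega]
    push_cast
    rw [cast_ch (show a+2 ≤ a+b+2 by omega), cast_ch (show b+2 ≤ a+b+2 by omega),
      cast_ch (show a+2 ≤ a+b+3 by omega), cast_ch (show a+3 ≤ a+b+3 by omega),
      cast_ch (show b+2 ≤ a+b+3 by omega), cast_ch (show b+3 ≤ a+b+3 by omega)]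
    simp only [show a+b+2-(a+2) = b by omega, show a+b+2-(b+2) = a by omega,
      show a+b+3-(a+2) = b+1 by omega, show a+b+3-(a+3) = b by omega,
      show a+b+3-(b+2) = a+1 by omega, show a+b+3-(b+3) = a by omega]
    rw [show (a+3)! = (a+3) * (a+2)! from Nat.factorial_succ _,
      show (a+2)! = (a+2) * (a+1)! from Nat.factorial_succ _,
      show (a+1)! = (a+1) * a ! from Nat.factorial_succ _,
      show (b+3)! = (b+3) * (b+2)! from Nat.factorial_succ _,
      show (b+2)! = (b+2) * (b+1)! from Nat.factorial_succ _,
      show (b+1)! = (b+1) * b ! from Nat.factorial_succ _,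
      show (a+b+3)! = (a+b+3) * (a+b+2)! from Nat.factorial_succ _]
    have Fa : ((a ! : ℕ) : ℚ) ≠ 0 := by exact_mod_cast a.factorial_ne_zero
    have Fb : ((b ! : ℕ) : ℚ) ≠ 0 := by exact_mod_cast b.factorial_ne_zero
    have Fab : (((a+b+2) ! : ℕ) : ℚ) ≠ 0 := by exact_mod_cast (a+b+2).factorial_ne_zero
    push_cast
    field_simp
    ring
  rcases Nat.eq_or_lt_of_le hJI with hJI2 | hJI2
  · -- J = I ≥ 2
    obtain ⟨a, rfl⟩ : ∃ a, J = a + 2 := ⟨J - 2, by omega⟩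
    obtain rfl : I = a + 2 := by omega
    have z1A : ∀ N : ℕ, k1A N (a + 2) (a + 2) = 0 := by
      intro N
      have hz : (a + 2 - 1).choose (a + 2) = 0 := Nat.choose_eq_zero_of_lt (by omega)
      rw [k1A, hz]; simp
    have z2A : ∀ N : ℕ, k2A N (a + 2) (a + 2) = 0 := by
      intro N
      have hz : (a + 2).choose (a + 2 + 1) = 0 := Nat.choose_eq_zero_of_lt (by omega)
      rw [k2A, hz]; simp
    rw [z1A, z2A]
    rcases Nat.eq_or_lt_of_le hnI with rfl | hIn
    · -- I = n = a + 2, so a ≥ 2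
      obtain ⟨p, rfl⟩ : ∃ p, a = p + 2 := ⟨a - 2, by omega⟩
      rw [k1B, k2B, k3A, k3B, k4A, k5B, k6B]
      rw [ddrel (p + 2 + 2) (p + 2 + 2) hn (by omega) (by omega)]
      simp only [show p + 2 + 2 - 1 = p + 3 by omega,
        show p + 2 + 2 + 1 - (p + 2 + 2) = 1 by omega,
        show p + 2 + 2 - 2 = p + 2 by omega,
        show p + 2 + 2 + 2 - (p + 2 + 2) = 2 by omega,
        show p + 2 + 2 - (p + 2 + 2) = 0 by omega,
        show p + 2 - 2 = p by omega, show p + 2 - 1 = p + 1 by omega,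
        show 0 + 2 = 2 by omega,
        show 2 * (p + 2 + 2) - 3 - (p + 2 + 2) = p + 1 by omega]
      rw [Nat.choose_succ_right_eq (p + 2 + 2) 1]
      simp only [Nat.descFactorial_zero, Nat.descFactorial_one, Nat.choose_zero_right,
        Nat.choose_one_right, Nat.choose_self]
      rw [show (p+2+2).descFactorial (p+2+2) = (p+2+2) * ((p+3).descFactorial (p+3))
          from Nat.succ_descFactorial_succ _ _,
        show (p+2+2).descFactorial 2 = (p+2+2-1) * ((p+2+2).descFactorial 1)
          from Nat.descFactorial_succ _ _,
        show (p+3).descFactorial (p+2+2) = (p+3) * ((p+2).descFactorial (p+3))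
          from Nat.succ_descFactorial_succ _ _,
        show (p+3).descFactorial (p+3) = (p+3) * ((p+2).descFactorial (p+2))
          from Nat.succ_descFactorial_succ _ _,
        show (p+2).descFactorial (p+3) = (p+2-(p+2)) * ((p+2).descFactorial (p+2))
          from Nat.descFactorial_succ _ _,
        show p+2-(p+2) = 0 by omega, show p+2+2-1 = p+3 by omega]
      simp only [Nat.descFactorial_one]
      push_cast
      ring
    · -- I < n
      obtain ⟨m, rfl⟩ : ∃ m, n = a + m + 3 := ⟨n - a - 3, by omega⟩
      rw [k1B, k2B, k3A, k3B, k4A, k5B, k6B]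
      rw [ddrel (a + m + 3) (a + 2) hn (by omega) (by omega)]
      simp only [show a + 2 - 1 = a + 1 by omega,
        show a + 2 + 1 - (a + 2) = 1 by omega,
        show a + 2 - 2 = a by omega,
        show a + 2 + 2 - (a + 2) = 2 by omega,
        show a + 2 - (a + 2) = 0 by omega,
        show a + m + 3 - 2 = a + m + 1 by omega,
        show a + m + 3 - 1 = a + m + 2 by omega,
        show 0 + 2 = 2 by omega,
        show 2 * (a + m + 3) - 3 - (a + 2) = a + 2 * m + 1 by omega]
      rw [Nat.choose_succ_right_eq (a + 2) 1]
      simp only [Nat.descFactorial_zero, Nat.descFactorial_one, Nat.choose_zero_right,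
        Nat.choose_one_right, Nat.choose_self, show a + 2 - 1 = a + 1 by omega]
      rw [show (a+m+3).descFactorial (a+2) = (a+m+3) * ((a+m+2).descFactorial (a+1))
          from Nat.succ_descFactorial_succ _ _,
        show (a+m+3).descFactorial 2 = (a+m+3-1) * ((a+m+3).descFactorial 1)
          from Nat.descFactorial_succ _ _,
        show (a+m+2).descFactorial (a+2) = (a+m+2) * ((a+m+1).descFactorial (a+1))
          from Nat.succ_descFactorial_succ _ _,
        show (a+m+2).descFactorial (a+1) = (a+m+2) * ((a+m+1).descFactorial a)
          from Nat.succ_descFactorial_succ _ _,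
        show (a+m+1).descFactorial (a+1) = (a+m+1-a) * ((a+m+1).descFactorial a)
          from Nat.descFactorial_succ _ _,
        show a+m+1-a = m+1 by omega, show a+m+3-1 = a+m+2 by omega]
      simp only [Nat.descFactorial_one]
      push_cast
      ring
  · -- J = I + 1, J ≥ 2
    obtain ⟨c, rfl⟩ : ∃ c, I = c + 1 := ⟨I - 1, by omega⟩
    obtain rfl : J = c + 2 := by omega
    have z1A : k1A n (c + 1) (c + 2) = 0 := by
      have hz : (c + 1 - 1).choose (c + 2) = 0 := Nat.choose_eq_zero_of_lt (by omega)
      rw [k1A, hz]; simp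
    have z2A : k2A n (c + 1) (c + 2) = 0 := by
      have hz : (c + 1).choose (c + 2 + 1) = 0 := Nat.choose_eq_zero_of_lt (by omega)
      rw [k2A, hz]; simp
    have z3A : k3A n (c + 1) (c + 2) = 0 := by
      have hz : (c + 1).choose (c + 2) = 0 := Nat.choose_eq_zero_of_lt (by omega)
      rw [k3A, hz]; simp
    have z4A : k4A n (c + 1) (c + 2) = 0 := by
      have hz : (c + 1).choose (c + 2) = 0 := Nat.choose_eq_zero_of_lt (by omega)
      rw [k4A, hz]; simp
    have z5B : k5B n (c + 1) (c + 2) = 0 := by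
      have hz : (c + 1).choose (c + 2) = 0 := Nat.choose_eq_zero_of_lt (by omega)
      rw [k5B, hz]; simp
    rw [z1A, z2A, z3A, z4A, z5B]
    rcases Nat.eq_or_lt_of_le hnI with rfl | hIn
    · -- I = n : survivors all vanish
      have d1 : (c + 1 - 2).descFactorial (c + 2 - 2) = 0 := by
        rw [Nat.descFactorial_eq_zero_iff_lt]; omega
      have d2 : (c + 1 - 2).descFactorial (c + 2 - 1) = 0 := by
        rw [Nat.descFactorial_eq_zero_iff_lt]; omega
      have d3 : (c + 1 - 1).descFactorial (c + 2 - 1) = 0 := by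
        rw [Nat.descFactorial_eq_zero_iff_lt]; omega
      rw [k1B, k2B, k3B, k6B, d1, d2, d3]
      simp
    · -- I < n
      obtain ⟨m, rfl⟩ : ∃ m, n = c + m + 2 := ⟨n - c - 2, by omega⟩
      rw [k1B, k2B, k3B, k6B]
      rw [ddrel (c + m + 2) (c + 1) hn (by omega) (by omega)]
      simp only [show c + 1 - 1 = c by omega,
        show c + 1 + 1 - (c + 2) = 0 by omega,
        show c + 2 - 2 = c by omega,
        show c + 1 + 2 - (c + 2) = 1 by omega,
        show c + 2 - 1 = c + 1 by omega,
        show c + m + 2 - 2 = c + m by omega,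
        show c + m + 2 - 1 = c + m + 1 by omega,
        show 2 * (c + m + 2) - 3 - (c + 1) = c + 2 * m by omega]
      simp only [Nat.descFactorial_zero, Nat.descFactorial_one, Nat.choose_zero_right,
        Nat.choose_one_right]
      rw [show (c+m).descFactorial (c+1) = (c+m-c) * ((c+m).descFactorial c)
          from Nat.descFactorial_succ _ _,
        show (c+m+1).descFactorial (c+1) = (c+m+1) * ((c+m).descFactorial c)
          from Nat.succ_descFactorial_succ _ _,
        show c+m-c = m by omega]
      push_cast
      ring

theorem Fder (A : ℕ → Polynomial ℚ) (hA0 : Polynomial.derivative (A 0) = 0)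
    (hA : ∀ k : ℕ, Polynomial.derivative (A (k + 1)) = (k + 1) • A k) (n i j : ℕ) :
    Polynomial.derivative
      ((((-1 : ℚ) ^ i / (Nat.descFactorial (2 * n - 4) i : ℚ)) *
            (n.choose i) * (i.choose j)) •
          (A (n - i) *
            ((Nat.descFactorial n j : ℚ) • A j *
                ((Nat.descFactorial (n - 2) (i - j) : ℚ) • A (i - j + 2)) -
              (Nat.descFactorial (n - 1) (i - j) : ℚ) • A (i - j + 1) *
                ((Nat.descFactorial (n - 1) j : ℚ) • A (j + 1)))))
      = G1 A n i j + G2 A n i j + G3 A n i j - (G4 A n i j + G5 A n i j + G6 A n i j) := by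
  have dA : ∀ k : ℕ, Polynomial.derivative (A k) = (k : ℚ) • A (k - 1) := by
    intro k
    cases k with
    | zero => simpa using hA0
    | succ k =>
        rw [hA k, Nat.add_sub_cancel]
        rw [← Nat.cast_smul_eq_nsmul ℚ]
  simp only [derivative_smul, derivative_mul, derivative_sub, dA]
  have e1 : i - j + 2 - 1 = i - j + 1 := by omega
  have e2 : i - j + 1 - 1 = i - j := by omega
  have e3 : j + 1 - 1 = j := by omega
  rw [e1, e2, e3]
  simp only [G1, G2, G3, G4, G5, G6, dd, smul_eq_C_mul, map_mul, map_div₀, map_pow,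
    map_neg, map_one, map_natCast]
  push_cast
  ring

theorem deriv_zero (A : ℕ → Polynomial ℚ) (hA0 : Polynomial.derivative (A 0) = 0)
    (hA : ∀ k : ℕ, Polynomial.derivative (A (k + 1)) = (k + 1) • A k)
    (n : ℕ) (hn : 4 ≤ n)
    (T : Polynomial ℚ)
    (hT : T = ∑ i ∈ Finset.range (n + 1), ∑ j ∈ Finset.range (i + 1),
        (((-1 : ℚ) ^ i / (Nat.descFactorial (2 * n - 4) i : ℚ)) *
            (n.choose i) * (i.choose j)) •
          (A (n - i) *
            ((Nat.descFactorial n j : ℚ) • A j *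
                ((Nat.descFactorial (n - 2) (i - j) : ℚ) • A (i - j + 2)) -
              (Nat.descFactorial (n - 1) (i - j) : ℚ) • A (i - j + 1) *
                ((Nat.descFactorial (n - 1) j : ℚ) • A (j + 1))))) :
    Polynomial.derivative T = 0 := by
  have hdT : Polynomial.derivative T =
      ∑ i ∈ range (n + 1), ∑ j ∈ range (i + 1),
        (G1 A n i j + G2 A n i j + G3 A n i j - (G4 A n i j + G5 A n i j + G6 A n i j)) := by
    rw [hT, derivative_sum]
    refine Finset.sum_congr rfl (fun i _ => ?_)
    rw [derivative_sum]
    exact Finset.sum_congr rfl (fun j _ => Fder A hA0 hA n i j)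
  have split : ∀ f1 f2 f3 f4 f5 f6 : ℕ → ℕ → Polynomial ℚ,
      ∑ i ∈ range (n + 1), ∑ j ∈ range (i + 1),
        (f1 i j + f2 i j + f3 i j - (f4 i j + f5 i j + f6 i j))
      = (∑ i ∈ range (n + 1), ∑ j ∈ range (i + 1), f1 i j)
        + (∑ i ∈ range (n + 1), ∑ j ∈ range (i + 1), f2 i j)
        + (∑ i ∈ range (n + 1), ∑ j ∈ range (i + 1), f3 i j)
        - ((∑ i ∈ range (n + 1), ∑ j ∈ range (i + 1), f4 i j)
          + (∑ i ∈ range (n + 1), ∑ j ∈ range (i + 1), f5 i j)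
          + (∑ i ∈ range (n + 1), ∑ j ∈ range (i + 1), f6 i j)) := by
    intro f1 f2 f3 f4 f5 f6
    simp only [Finset.sum_add_distrib, Finset.sum_sub_distrib]
  have hXA : Polynomial.derivative T =
      ∑ I ∈ range (n + 3), ∑ J ∈ range (I + 2),
        ((k1A n I J + k2A n I J + k3A n I J
          - (k4A n I J + k5B n I J + k6B n I J)) • M A n I J) := by
    rw [hdT, split, fam1A, fam2A, fam3A, fam4A, fam5B, fam6B]
    simp only [← Finset.sum_add_distrib, ← Finset.sum_sub_distrib]
    refine Finset.sum_congr rfl (fun I _ => Finset.sum_congr rfl (fun J _ => ?_))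
    module
  have hXB : Polynomial.derivative T =
      ∑ I ∈ range (n + 3), ∑ J ∈ range (I + 2),
        ((k1B n I J + k2B n I J + k3B n I J
          - (k4A n I J + k5B n I J + k6B n I J)) • M A n I J) := by
    rw [hdT, split, fam1B, fam2B, fam3B, fam4A, fam5B, fam6B]
    simp only [← Finset.sum_add_distrib, ← Finset.sum_sub_distrib]
    refine Finset.sum_congr rfl (fun I _ => Finset.sum_congr rfl (fun J _ => ?_))
    module
  have h2 : Polynomial.derivative T + Polynomial.derivative T = 0 := by
    nth_rewrite 1 [hXA]
    nth_rewrite 1 [hXB]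
    rw [← Finset.sum_add_distrib]
    refine Finset.sum_eq_zero (fun I _ => ?_)
    rw [← Finset.sum_add_distrib]
    refine Finset.sum_eq_zero (fun J hJ => ?_)
    rw [← add_smul]
    have hc := certificate n hn I J (by simp at hJ; omega)
    rw [show k1A n I J + k2A n I J + k3A n I J - (k4A n I J + k5B n I J + k6B n I J)
        + (k1B n I J + k2B n I J + k3B n I J - (k4A n I J + k5B n I J + k6B n I J))
      = k1A n I J + k1B n I J + k2A n I J + k2B n I J + k3A n I J + k3B n I J
        - 2 * k4A n I J - 2 * k5B n I J - 2 * k6B n I J by ring, hc, zero_smul]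
  have := add_self_eq_zero.mp h2
  exact this

end TrAux

/-- For an Appell sequence `A` and `n ≥ 4`, the polynomial
`Tr_n(A) = ∑_{i=0}^{n} ∑_{j=0}^{i} ((−1)^i/[2n−4]_i) C(n,i) C(i,j) A_{n−i}
  ([n]_j A_j [n−2]_{i−j} A_{i−j+2} − [n−1]_{i−j} A_{i−j+1} [n−1]_j A_{j+1})`
is constant, equal to `C` of its value at `0`. -/
theorem Tr_constant
    (A : ℕ → Polynomial ℚ)
    (hA0 : Polynomial.derivative (A 0) = 0)
    (hA : ∀ k : ℕ, Polynomial.derivative (A (k + 1)) = (k + 1) • A k)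
    (n : ℕ) (hn : 4 ≤ n)
    (T : Polynomial ℚ)
    (hT : T = ∑ i ∈ Finset.range (n + 1), ∑ j ∈ Finset.range (i + 1),
        (((-1 : ℚ) ^ i / (Nat.descFactorial (2 * n - 4) i : ℚ)) *
            (n.choose i) * (i.choose j)) •
          (A (n - i) *
            ((Nat.descFactorial n j : ℚ) • A j *
                ((Nat.descFactorial (n - 2) (i - j) : ℚ) • A (i - j + 2)) -
              (Nat.descFactorial (n - 1) (i - j) : ℚ) • A (i - j + 1) *
                ((Nat.descFactorial (n - 1) j : ℚ) • A (j + 1))))) :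
    T = Polynomial.C (T.eval 0) := by
  have h0 := TrAux.deriv_zero A hA0 hA n hn T hT
  have h1 : T = Polynomial.C (T.coeff 0) := Polynomial.eq_C_of_derivative_eq_zero h0
  rwa [Polynomial.coeff_zero_eq_eval_zero] at h1
end

section
/- Let A : ℕ → ℚ[X] be an Appell sequence and n ≥ 1. For x : ℚ define the Sylvester-type matrix M(x) of size (2n−1) × (2n−1) over ℚ as follows: for 0 ≤ r ≤ n−2 (the first n−1 rows), the entry in row r and column c equals C(n, c−r) · (A (c−r)).eval x if 0 ≤ c−r ≤ n and 0 otherwise; for 0 ≤ r ≤ n−1 (the last n rows, indexed by row n−1+r), the entry in column c equals (n−(c−r)) · C(n, c−r) · (A (c−r)).eval x if 0 ≤ c−r ≤ n−1 and 0 otherwise. (These are the shifted coefficient rows of the binary form α_x(X,Y) = ∑_{i=0}^n C(n,i)·A_i(x)·X^{n−i}Y^i and of its X-derivative.) Then the discriminant-type determinant Discr_n(A)(x) := det M(x) is independent of x: for all x, det M(x) = det M(0). -/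
open Polynomial Finset

namespace DiscrAux

lemma onepow (x : ℚ) (N : ℕ) :
    (1 + C x * X)^N = ∑ i ∈ range (N+1), C ((N.choose i : ℚ) * x^i) * X^i := by
  rw [add_comm, add_pow]
  refine Finset.sum_congr rfl fun i _ => ?_
  simp only [one_pow, mul_pow, ← Polynomial.C_pow, mul_one, ← Polynomial.C_eq_natCast]
  rw [C_mul]
  ring

lemma coeff_vsum (N : ℕ) (v : ℕ → ℚ) (d : ℕ) :
    (∑ i ∈ range (N+1), C (v i) * X^i).coeff d = if d ≤ N then v d else 0 := by
  rw [Polynomial.finset_sum_coeff]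
  simp only [Polynomial.coeff_C_mul, Polynomial.coeff_X_pow, mul_ite, mul_one, mul_zero]
  rw [Finset.sum_ite_eq (range (N+1)) d v]
  simp [Nat.lt_succ_iff]

lemma coeffXpow (x : ℚ) (a N d : ℕ) :
    (X^a * (1 + C x * X)^N).coeff d
      = if a ≤ d then (N.choose (d-a) : ℚ) * x^(d-a) else 0 := by
  rw [mul_comm, Polynomial.coeff_mul_X_pow', onepow, coeff_vsum]
  by_cases h : a ≤ d
  · simp only [h, if_true]
    by_cases h2 : d - a ≤ N
    · simp [h2]
    · simp [h2, Nat.choose_eq_zero_of_lt (lt_of_not_ge h2)]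
  · simp [h]

lemma fin_coeff (m1 : ℕ) (v : Fin m1 → ℚ) (c : Fin m1) :
    (∑ i : Fin m1, C (v i) * X^(i:ℕ)).coeff (c:ℕ) = v c := by
  rw [Polynomial.finset_sum_coeff]
  rw [Finset.sum_eq_single c]
  · simp
  · intro b _ hb
    simp only [Polynomial.coeff_C_mul, Polynomial.coeff_X_pow]
    rw [if_neg (fun h => hb (Fin.ext h.symm))]
    simp
  · intro h; exact absurd (Finset.mem_univ c) h

lemma window_sum (m1 s w : ℕ) (hsw : s + w < m1) (g : ℕ → ℚ) (P : ℕ → ℚ[X]) :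
    ∑ j ∈ range m1, C (if s ≤ j ∧ j - s ≤ w then g (j - s) else 0) * P j
      = ∑ k ∈ range (w+1), C (g k) * P (s + k) := by
  rw [← Finset.sum_subset (show Finset.Ico s (s+w+1) ⊆ range m1 by
        intro j hj; simp only [Finset.mem_Ico] at hj; simp only [Finset.mem_range]; omega)
      (fun j hj hj' => by
        simp only [Finset.mem_Ico, not_and, not_lt] at hj'
        rw [if_neg (by omega), map_zero, zero_mul])]
  rw [Finset.sum_Ico_eq_sum_range]
  have hw : s + w + 1 - s = w + 1 := by omega
  rw [hw]
  refine Finset.sum_congr rfl fun k hk => ?_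
  simp only [Finset.mem_range, Nat.lt_succ_iff] at hk
  rw [if_pos ⟨by omega, by omega⟩, Nat.add_sub_cancel_left]

lemma finwindow (m1 s w : ℕ) (hsw : s + w < m1) (g : ℕ → ℚ) (v : Fin m1 → ℚ)
    (hv : ∀ c : Fin m1, v c = if s ≤ (c:ℕ) ∧ (c:ℕ) - s ≤ w then g ((c:ℕ) - s) else 0)
    (P : ℕ → ℚ[X]) :
    ∑ c : Fin m1, C (v c) * P (c:ℕ) = ∑ k ∈ range (w+1), C (g k) * P (s+k) := by
  rw [← window_sum m1 s w hsw g P,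
    ← Fin.sum_univ_eq_sum_range (fun j => C (if s ≤ j ∧ j - s ≤ w then g (j - s) else 0) * P j) m1]
  exact Finset.sum_congr rfl fun c _ => by rw [hv c]

lemma choose_id (n k : ℕ) (hn : 1 ≤ n) :
    (n - k) * n.choose k = n * (n-1).choose k := by
  obtain ⟨m, rfl⟩ : ∃ m, n = m + 1 := ⟨n - 1, by omega⟩
  have h1 := Nat.add_one_mul_choose_eq m k
  have h2 := Nat.choose_succ_right_eq (m+1) k
  simp only [Nat.add_sub_cancel]
  calc (m+1-k) * (m+1).choose k = (m+1).choose k * (m+1-k) := mul_comm _ _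
    _ = (m+1).choose (k+1) * (k+1) := h2.symm
    _ = (m+1) * m.choose k := h1.symm

lemma choose_id_q (n k : ℕ) (hn : 1 ≤ n) :
    ((n - k : ℕ) : ℚ) * (n.choose k : ℚ) = (n : ℚ) * ((n-1).choose k : ℚ) := by
  rw [← Nat.cast_mul, ← Nat.cast_mul, choose_id n k hn]

section Appell
variable (A : ℕ → Polynomial ℚ)
    (hA0 : Polynomial.derivative (A 0) = 0)
    (hA : ∀ k : ℕ, Polynomial.derivative (A (k + 1)) = (k + 1) • A k)
include hA0 hA

theorem appell_iter (i j : ℕ) :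
    derivative^[i] (A j) = (j.descFactorial i : ℚ) • A (j - i) := by
  induction i with
  | zero => simp
  | succ i ih =>
    rw [Function.iterate_succ_apply', ih, map_smul, Nat.descFactorial_succ]
    rcases Nat.lt_or_ge i j with h | h
    · obtain ⟨k, hk⟩ : ∃ k, j - i = k + 1 := ⟨j - i - 1, by omega⟩
      have hji : j - (i+1) = k := by omega
      rw [hk, hA k, hji, ← Nat.cast_smul_eq_nsmul ℚ, smul_smul]
      congr 1
      push_cast
      ring
    · have h1 : j - i = 0 := by omega
      rw [h1, hA0]
      simp

theorem appell_hasse (i j : ℕ) :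
    hasseDeriv i (A j) = (j.choose i : ℚ) • A (j - i) := by
  have h := congrFun (Polynomial.factorial_smul_hasseDeriv (R := ℚ) i) (A j)
  simp only [LinearMap.smul_apply] at h
  have hfac : ((Nat.factorial i : ℚ)) ≠ 0 := by
    exact_mod_cast Nat.factorial_ne_zero i
  apply smul_right_injective (ℚ[X]) hfac
  show (Nat.factorial i : ℚ) • _ = (Nat.factorial i : ℚ) • _
  rw [smul_smul, ← Nat.cast_mul, ← Nat.descFactorial_eq_factorial_mul_choose,
    ← appell_iter A hA0 hA i j, ← h, Nat.cast_smul_eq_nsmul]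

theorem appell_eval (j : ℕ) (x t : ℚ) :
    (A j).eval (x + t) = ∑ i ∈ range (j+1), (j.choose i : ℚ) * (A (j-i)).eval x * t ^ i := by
  have hdeg : (Polynomial.taylor x (A j)).natDegree < j + 1 := by
    refine Nat.lt_succ_of_le (Polynomial.natDegree_le_iff_coeff_eq_zero.2 fun N hN => ?_)
    rw [Polynomial.taylor_coeff, appell_hasse A hA0 hA]
    simp [Nat.choose_eq_zero_of_lt hN]
  have h := Polynomial.eval_eq_sum_range' hdeg t
  rw [Polynomial.taylor_eval] at h
  rw [add_comm x t, h]
  refine Finset.sum_congr rfl fun i _ => ?_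
  rw [Polynomial.taylor_coeff, appell_hasse A hA0 hA]
  simp [smul_eq_C_mul]

theorem appell_star (N : ℕ) (x t : ℚ) :
    ∑ k ∈ range (N+1), C ((N.choose k : ℚ) * (A k).eval x) * X^k * (1 + C t * X)^(N-k)
      = ∑ j ∈ range (N+1), C ((N.choose j : ℚ) * (A j).eval (x+t)) * X^j := by
  apply Polynomial.ext; intro d
  rw [coeff_vsum]
  rw [Polynomial.finset_sum_coeff]
  have hterm : ∀ k, (C ((N.choose k : ℚ) * (A k).eval x) * X^k * (1 + C t * X)^(N-k)).coeff d
      = ((N.choose k : ℚ) * (A k).eval x) *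
          (if k ≤ d then ((N-k).choose (d-k) : ℚ) * t^(d-k) else 0) := by
    intro k
    rw [mul_assoc, Polynomial.coeff_C_mul, coeffXpow]
  simp only [hterm]
  by_cases hd : d ≤ N
  · rw [if_pos hd,
      ← Finset.sum_subset (Finset.range_subset_range.2 (show d + 1 ≤ N + 1 by omega))
        (fun k _ hk => by
          simp only [Finset.mem_range, Nat.lt_succ_iff, not_le] at hk
          rw [if_neg (by omega), mul_zero]),
      appell_eval A hA0 hA d x t, Finset.mul_sum,
      ← Finset.sum_range_reflect
        (fun i => (N.choose d : ℚ) * ((d.choose i : ℚ) * (A (d-i)).eval x * t ^ i)) (d+1)]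
    refine Finset.sum_congr rfl fun k hk => ?_
    simp only [Finset.mem_range, Nat.lt_succ_iff] at hk
    rw [if_pos hk]
    have h1 : d + 1 - 1 - k = d - k := by omega
    have h2 : d - (d - k) = k := by omega
    rw [h1, h2, Nat.choose_symm hk]
    have key : (N.choose d : ℚ) * (d.choose k : ℚ)
        = (N.choose k : ℚ) * ((N-k).choose (d-k) : ℚ) := by
      rw [← Nat.cast_mul, ← Nat.cast_mul, Nat.choose_mul hk]
    linear_combination (-((A k).eval x * t^(d-k))) * key
  · rw [if_neg hd]
    refine Finset.sum_eq_zero fun k hk => ?_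
    simp only [Finset.mem_range, Nat.lt_succ_iff] at hk
    rw [if_pos (show k ≤ d by omega),
      Nat.choose_eq_zero_of_lt (show N - k < d - k by omega)]
    simp

end Appell

/-- Sylvester shear matrix (column operations). -/
def Tmat (n : ℕ) (x : ℚ) : Matrix (Fin (2*n-1)) (Fin (2*n-1)) ℚ := fun c' c =>
  if (c':ℕ) ≤ (c:ℕ) then ((2*n-2-(c':ℕ)).choose ((c:ℕ)-(c':ℕ)) : ℚ) * x^((c:ℕ)-(c':ℕ)) else 0

/-- Row recombination matrix. -/
def Lmat (n : ℕ) (x : ℚ) : Matrix (Fin (2*n-1)) (Fin (2*n-1)) ℚ := fun r r' =>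
  if (r:ℕ) < n-1 then
    (if (r:ℕ) ≤ (r':ℕ) ∧ (r':ℕ) < n-1 then
      ((n-2-(r:ℕ)).choose ((r':ℕ)-(r:ℕ)) : ℚ) * x^((r':ℕ)-(r:ℕ)) else 0)
  else
    (if (r:ℕ) ≤ (r':ℕ) then
      ((n-1-((r:ℕ)-(n-1))).choose ((r':ℕ)-(r:ℕ)) : ℚ) * x^((r':ℕ)-(r:ℕ)) else 0)

lemma det_Tmat (n : ℕ) (x : ℚ) : (Tmat n x).det = 1 := by
  rw [Matrix.det_of_upperTriangular (fun i j h => by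
    simp only [Tmat]
    rw [if_neg (by exact_mod_cast not_le.2 h)])]
  refine Finset.prod_eq_one fun i _ => ?_
  simp [Tmat]

lemma det_Lmat (n : ℕ) (x : ℚ) : (Lmat n x).det = 1 := by
  rw [Matrix.det_of_upperTriangular (fun i j h => by
    have hji : (j:ℕ) < (i:ℕ) := h
    simp only [Lmat]
    by_cases hi : (i:ℕ) < n-1
    · rw [if_pos hi, if_neg (by omega)]
    · rw [if_neg hi, if_neg (by omega)])]
  refine Finset.prod_eq_one fun i _ => ?_
  simp only [Lmat]
  by_cases hi : (i:ℕ) < n-1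
  · rw [if_pos hi, if_pos ⟨le_refl _, hi⟩]
    simp
  · rw [if_neg hi, if_pos (le_refl _)]
    simp

lemma sum_shape1 (s : Finset ℕ) (f : ℕ → ℚ[X]) (a b : ℚ[X]) :
    ∑ i ∈ s, a * f i * b = a * (∑ i ∈ s, f i) * b := by
  rw [Finset.mul_sum, Finset.sum_mul]

lemma sum_shape2 (s : Finset ℕ) (f : ℕ → ℚ[X]) (a b c : ℚ[X]) :
    ∑ i ∈ s, a * (b * f i) * c = a * (b * ∑ i ∈ s, f i) * c := by
  rw [Finset.mul_sum, Finset.mul_sum, Finset.sum_mul]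

end DiscrAux

/-- For an Appell sequence `A` and `n ≥ 1`, the discriminant-type
determinant of the `(2n−1) × (2n−1)` Sylvester matrix of the binary form
`α_x(X,Y) = ∑ C(n,i) A_i(x) X^{n−i} Y^i` and its `X`-derivative is independent of `x`. -/
theorem discriminant_constant
    (A : ℕ → Polynomial ℚ)
    (hA0 : Polynomial.derivative (A 0) = 0)
    (hA : ∀ k : ℕ, Polynomial.derivative (A (k + 1)) = (k + 1) • A k)
    (n : ℕ) (hn : 1 ≤ n)
    (M : ℚ → Matrix (Fin (2 * n - 1)) (Fin (2 * n - 1)) ℚ)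
    (hM : ∀ (x : ℚ) (r c : Fin (2 * n - 1)),
      M x r c =
        if (r : ℕ) < n - 1 then
          (if (r : ℕ) ≤ (c : ℕ) ∧ (c : ℕ) - (r : ℕ) ≤ n then
            (n.choose ((c : ℕ) - (r : ℕ)) : ℚ) * (A ((c : ℕ) - (r : ℕ))).eval x
          else 0)
        else
          (if (r : ℕ) - (n - 1) ≤ (c : ℕ) ∧ (c : ℕ) - ((r : ℕ) - (n - 1)) ≤ n - 1 then
            ((n - ((c : ℕ) - ((r : ℕ) - (n - 1))) : ℕ) : ℚ) *
              (n.choose ((c : ℕ) - ((r : ℕ) - (n - 1))) : ℚ) *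
              (A ((c : ℕ) - ((r : ℕ) - (n - 1)))).eval x
          else 0)) :
    ∀ x : ℚ, (M x).det = (M 0).det := by
  intro x
  have hstarn := DiscrAux.appell_star A hA0 hA n 0 x
  have hstarm := DiscrAux.appell_star A hA0 hA (n-1) 0 x
  rw [zero_add] at hstarn hstarm
  set Gn : ℚ[X] := ∑ k ∈ range (n+1), C ((n.choose k : ℚ) * (A k).eval x) * X^k with hGn
  set Gm : ℚ[X] := ∑ k ∈ range ((n-1)+1), C (((n-1).choose k : ℚ) * (A k).eval x) * X^k with hGm
  -- row polynomials of M x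
  have hQtop : ∀ r' : Fin (2*n-1), (r':ℕ) < n-1 →
      (∑ j : Fin (2*n-1), C (M x r' j) * X^(j:ℕ)) = X^(r':ℕ) * Gn := by
    intro r' hr'
    rw [DiscrAux.finwindow (2*n-1) (r':ℕ) n (by omega : (r':ℕ) + n < 2*n-1)
      (fun k => (n.choose k : ℚ) * (A k).eval x) (fun j => M x r' j)
      (fun j => by show M x r' j = _; rw [hM x r' j, if_pos hr']) (fun j => X^j)]
    rw [hGn, Finset.mul_sum]
    refine Finset.sum_congr rfl fun k _ => ?_
    rw [pow_add]; ring
  have hQbot : ∀ r' : Fin (2*n-1), ¬((r':ℕ) < n-1) →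
      (∑ j : Fin (2*n-1), C (M x r' j) * X^(j:ℕ))
        = C (n:ℚ) * (X^((r':ℕ)-(n-1)) * Gm) := by
    intro r' hr'
    have hlt := r'.isLt
    rw [DiscrAux.finwindow (2*n-1) ((r':ℕ)-(n-1)) (n-1)
      (by omega : ((r':ℕ)-(n-1)) + (n-1) < 2*n-1)
      (fun k => (n:ℚ) * (((n-1).choose k : ℚ)) * (A k).eval x) (fun j => M x r' j)
      (fun j => by
        show M x r' j = _
        rw [hM x r' j, if_neg hr']
        by_cases hg : (r':ℕ) - (n-1) ≤ (j:ℕ) ∧ (j:ℕ) - ((r':ℕ)-(n-1)) ≤ n-1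
        · rw [if_pos hg, if_pos hg, DiscrAux.choose_id_q n _ hn]
        · rw [if_neg hg, if_neg hg])
      (fun j => X^j)]
    rw [hGm, Finset.mul_sum, Finset.mul_sum]
    refine Finset.sum_congr rfl fun k _ => ?_
    rw [show ((n:ℚ) * (((n-1).choose k : ℚ)) * (A k).eval x)
        = (n:ℚ) * ((((n-1).choose k : ℚ)) * (A k).eval x) from by ring, map_mul, pow_add]
    ring
  -- the key matrix identity
  have hmul : M 0 * DiscrAux.Tmat n x = DiscrAux.Lmat n x * M x := by
    ext r c
    rw [Matrix.mul_apply, Matrix.mul_apply]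
    have hT : ∀ j : Fin (2*n-1), DiscrAux.Tmat n x j c
        = (X^(j:ℕ) * (1 + C x * X)^(2*n-2-(j:ℕ))).coeff (c:ℕ) := by
      intro j
      rw [DiscrAux.coeffXpow]
      simp only [DiscrAux.Tmat]
    have hLHS : (∑ j, M 0 r j * DiscrAux.Tmat n x j c)
        = (∑ j : Fin (2*n-1), C (M 0 r j) * (X^(j:ℕ) * (1 + C x * X)^(2*n-2-(j:ℕ)))).coeff (c:ℕ) := by
      rw [Polynomial.finset_sum_coeff]
      refine Finset.sum_congr rfl fun j _ => ?_
      rw [hT j, Polynomial.coeff_C_mul]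
    have hRHS : (∑ r', DiscrAux.Lmat n x r r' * M x r' c)
        = (∑ r' : Fin (2*n-1), C (DiscrAux.Lmat n x r r')
            * (∑ j : Fin (2*n-1), C (M x r' j) * X^(j:ℕ))).coeff (c:ℕ) := by
      rw [Polynomial.finset_sum_coeff]
      refine Finset.sum_congr rfl fun r' _ => ?_
      rw [Polynomial.coeff_C_mul, DiscrAux.fin_coeff]
    rw [hLHS, hRHS]
    congr 1
    by_cases hr : (r:ℕ) < n-1
    · -- top rows
      have hPL : (∑ j : Fin (2*n-1), C (M 0 r j) * (X^(j:ℕ) * (1 + C x * X)^(2*n-2-(j:ℕ))))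
          = X^(r:ℕ) * (1 + C x * X)^(n-2-(r:ℕ)) * Gn := by
        rw [DiscrAux.finwindow (2*n-1) (r:ℕ) n (by omega : (r:ℕ) + n < 2*n-1)
          (fun k => (n.choose k : ℚ) * (A k).eval 0) (fun j => M 0 r j)
          (fun j => by show M 0 r j = _; rw [hM 0 r j, if_pos hr]) (fun j => X^j * (1 + C x * X)^(2*n-2-j))]
        calc ∑ k ∈ range (n+1), C ((n.choose k : ℚ) * (A k).eval 0)
                * (X^((r:ℕ)+k) * (1 + C x * X)^(2*n-2-((r:ℕ)+k)))
            = ∑ k ∈ range (n+1), X^(r:ℕ) * (1 + C x * X)^(n-2-(r:ℕ))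
                * (C ((n.choose k : ℚ) * (A k).eval 0) * X^k * (1 + C x * X)^(n-k)) := by
              refine Finset.sum_congr rfl fun k hk => ?_
              simp only [Finset.mem_range, Nat.lt_succ_iff] at hk
              have he : 2*n-2-((r:ℕ)+k) = (n-2-(r:ℕ)) + (n-k) := by omega
              rw [he, pow_add, pow_add]
              ring
          _ = X^(r:ℕ) * (1 + C x * X)^(n-2-(r:ℕ))
                * ∑ k ∈ range (n+1), C ((n.choose k : ℚ) * (A k).eval 0) * X^k * (1 + C x * X)^(n-k) := by
              rw [Finset.mul_sum]
          _ = X^(r:ℕ) * (1 + C x * X)^(n-2-(r:ℕ)) * Gn := by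
              rw [hstarn, hGn]
      have hterm : ∀ r' : Fin (2*n-1),
          C (DiscrAux.Lmat n x r r') * (∑ j : Fin (2*n-1), C (M x r' j) * X^(j:ℕ))
          = C (if (r:ℕ) ≤ (r':ℕ) ∧ (r':ℕ) - (r:ℕ) ≤ n-2-(r:ℕ) then
              ((n-2-(r:ℕ)).choose ((r':ℕ)-(r:ℕ)) : ℚ) * x^((r':ℕ)-(r:ℕ)) else 0)
            * (X^(r':ℕ) * Gn) := by
        intro r'
        by_cases hg : (r:ℕ) ≤ (r':ℕ) ∧ (r':ℕ) - (r:ℕ) ≤ n-2-(r:ℕ)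
        · have hr' : (r':ℕ) < n-1 := by omega
          rw [hQtop r' hr', if_pos hg]
          simp only [DiscrAux.Lmat]
          rw [if_pos hr, if_pos ⟨hg.1, hr'⟩]
        · rw [if_neg hg]
          simp only [DiscrAux.Lmat]
          rw [if_pos hr, if_neg (fun hcon => hg ⟨hcon.1, by omega⟩)]
          simp
      have hPR : (∑ r' : Fin (2*n-1), C (DiscrAux.Lmat n x r r')
            * (∑ j : Fin (2*n-1), C (M x r' j) * X^(j:ℕ)))
          = X^(r:ℕ) * (1 + C x * X)^(n-2-(r:ℕ)) * Gn := by
        rw [Finset.sum_congr rfl (fun r' _ => hterm r')]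
        rw [DiscrAux.finwindow (2*n-1) (r:ℕ) (n-2-(r:ℕ))
          (by omega : (r:ℕ) + (n-2-(r:ℕ)) < 2*n-1)
          (fun i => ((n-2-(r:ℕ)).choose i : ℚ) * x^i) _ (fun r' => rfl)
          (fun j => X^j * Gn)]
        calc ∑ i ∈ range ((n-2-(r:ℕ))+1), C (((n-2-(r:ℕ)).choose i : ℚ) * x^i) * (X^((r:ℕ)+i) * Gn)
            = ∑ i ∈ range ((n-2-(r:ℕ))+1),
                X^(r:ℕ) * (C (((n-2-(r:ℕ)).choose i : ℚ) * x^i) * X^i) * Gn := by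
              refine Finset.sum_congr rfl fun i _ => ?_
              rw [pow_add]; ring
          _ = X^(r:ℕ) * (∑ i ∈ range ((n-2-(r:ℕ))+1),
                C (((n-2-(r:ℕ)).choose i : ℚ) * x^i) * X^i) * Gn := by
              exact DiscrAux.sum_shape1 _ _ _ _
          _ = X^(r:ℕ) * (1 + C x * X)^(n-2-(r:ℕ)) * Gn := by
              rw [← DiscrAux.onepow x (n-2-(r:ℕ))]
      rw [hPL, hPR]
    · -- bottom rows
      have hlt := r.isLt
      have hPL : (∑ j : Fin (2*n-1), C (M 0 r j) * (X^(j:ℕ) * (1 + C x * X)^(2*n-2-(j:ℕ))))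
          = C (n:ℚ) * (X^((r:ℕ)-(n-1)) * (1 + C x * X)^((n-1)-((r:ℕ)-(n-1)))) * Gm := by
        rw [DiscrAux.finwindow (2*n-1) ((r:ℕ)-(n-1)) (n-1)
          (by omega : ((r:ℕ)-(n-1)) + (n-1) < 2*n-1)
          (fun k => (n:ℚ) * (((n-1).choose k : ℚ)) * (A k).eval 0) (fun j => M 0 r j)
          (fun j => by
            show M 0 r j = _
            rw [hM 0 r j, if_neg hr]
            by_cases hg : (r:ℕ) - (n-1) ≤ (j:ℕ) ∧ (j:ℕ) - ((r:ℕ)-(n-1)) ≤ n-1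
            · rw [if_pos hg, if_pos hg, DiscrAux.choose_id_q n _ hn]
            · rw [if_neg hg, if_neg hg])
          (fun j => X^j * (1 + C x * X)^(2*n-2-j))]
        calc ∑ k ∈ range ((n-1)+1), C ((n:ℚ) * (((n-1).choose k : ℚ)) * (A k).eval 0)
                * (X^(((r:ℕ)-(n-1))+k) * (1 + C x * X)^(2*n-2-(((r:ℕ)-(n-1))+k)))
            = ∑ k ∈ range ((n-1)+1), C (n:ℚ) * (X^((r:ℕ)-(n-1)) * (1 + C x * X)^((n-1)-((r:ℕ)-(n-1))))
                * (C (((n-1).choose k : ℚ) * (A k).eval 0) * X^k * (1 + C x * X)^((n-1)-k)) := by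
              refine Finset.sum_congr rfl fun k hk => ?_
              simp only [Finset.mem_range, Nat.lt_succ_iff] at hk
              have he : 2*n-2-(((r:ℕ)-(n-1))+k) = ((n-1)-((r:ℕ)-(n-1))) + ((n-1)-k) := by omega
              rw [show ((n:ℚ) * (((n-1).choose k : ℚ)) * (A k).eval 0)
                  = (n:ℚ) * ((((n-1).choose k : ℚ)) * (A k).eval 0) from by ring,
                map_mul, he, pow_add, pow_add]
              ring
          _ = C (n:ℚ) * (X^((r:ℕ)-(n-1)) * (1 + C x * X)^((n-1)-((r:ℕ)-(n-1))))
                * ∑ k ∈ range ((n-1)+1),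
                    C (((n-1).choose k : ℚ) * (A k).eval 0) * X^k * (1 + C x * X)^((n-1)-k) := by
              rw [Finset.mul_sum]
          _ = C (n:ℚ) * (X^((r:ℕ)-(n-1)) * (1 + C x * X)^((n-1)-((r:ℕ)-(n-1)))) * Gm := by
              rw [hstarm, hGm]
      have hterm : ∀ r' : Fin (2*n-1),
          C (DiscrAux.Lmat n x r r') * (∑ j : Fin (2*n-1), C (M x r' j) * X^(j:ℕ))
          = C (if (r:ℕ) ≤ (r':ℕ) ∧ (r':ℕ) - (r:ℕ) ≤ (n-1)-((r:ℕ)-(n-1)) then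
              (((n-1)-((r:ℕ)-(n-1))).choose ((r':ℕ)-(r:ℕ)) : ℚ) * x^((r':ℕ)-(r:ℕ)) else 0)
            * (C (n:ℚ) * (X^((r':ℕ)-(n-1)) * Gm)) := by
        intro r'
        by_cases hg : (r:ℕ) ≤ (r':ℕ) ∧ (r':ℕ) - (r:ℕ) ≤ (n-1)-((r:ℕ)-(n-1))
        · have hr' : ¬((r':ℕ) < n-1) := by omega
          rw [hQbot r' hr', if_pos hg]
          simp only [DiscrAux.Lmat]
          rw [if_neg hr, if_pos hg.1]
        · rw [if_neg hg]
          simp only [DiscrAux.Lmat]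
          rw [if_neg hr]
          by_cases hle : (r:ℕ) ≤ (r':ℕ)
          · rw [if_pos hle, Nat.choose_eq_zero_of_lt (by omega)]
            simp
          · rw [if_neg hle]
            simp
      have hPR : (∑ r' : Fin (2*n-1), C (DiscrAux.Lmat n x r r')
            * (∑ j : Fin (2*n-1), C (M x r' j) * X^(j:ℕ)))
          = C (n:ℚ) * (X^((r:ℕ)-(n-1)) * (1 + C x * X)^((n-1)-((r:ℕ)-(n-1)))) * Gm := by
        rw [Finset.sum_congr rfl (fun r' _ => hterm r')]
        rw [DiscrAux.finwindow (2*n-1) (r:ℕ) ((n-1)-((r:ℕ)-(n-1)))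
          (by omega : (r:ℕ) + ((n-1)-((r:ℕ)-(n-1))) < 2*n-1)
          (fun i => (((n-1)-((r:ℕ)-(n-1))).choose i : ℚ) * x^i) _ (fun r' => rfl)
          (fun j => C (n:ℚ) * (X^(j-(n-1)) * Gm))]
        calc ∑ i ∈ range (((n-1)-((r:ℕ)-(n-1)))+1),
                C ((((n-1)-((r:ℕ)-(n-1))).choose i : ℚ) * x^i)
                  * (C (n:ℚ) * (X^(((r:ℕ)+i)-(n-1)) * Gm))
            = ∑ i ∈ range (((n-1)-((r:ℕ)-(n-1)))+1),
                C (n:ℚ) * (X^((r:ℕ)-(n-1))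
                  * (C ((((n-1)-((r:ℕ)-(n-1))).choose i : ℚ) * x^i) * X^i)) * Gm := by
              refine Finset.sum_congr rfl fun i _ => ?_
              have he : ((r:ℕ)+i)-(n-1) = ((r:ℕ)-(n-1)) + i := by omega
              rw [he, pow_add]
              ring
          _ = C (n:ℚ) * (X^((r:ℕ)-(n-1))
                * ∑ i ∈ range (((n-1)-((r:ℕ)-(n-1)))+1),
                    C ((((n-1)-((r:ℕ)-(n-1))).choose i : ℚ) * x^i) * X^i) * Gm := by
              exact DiscrAux.sum_shape2 _ _ _ _ _
          _ = C (n:ℚ) * (X^((r:ℕ)-(n-1)) * (1 + C x * X)^((n-1)-((r:ℕ)-(n-1)))) * Gm := by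
              rw [← DiscrAux.onepow x ((n-1)-((r:ℕ)-(n-1)))]
      rw [hPL, hPR]
  have hdet := congrArg Matrix.det hmul
  rw [Matrix.det_mul, Matrix.det_mul, DiscrAux.det_Tmat, DiscrAux.det_Lmat,
    mul_one, one_mul] at hdet
  exact hdet.symm
end

section
/- For every natural number n ≥ 4 the following rational identity holds: ∑_{i=0}^{n} ∑_{j=0}^{i} ∑_{k=0}^{n−i} ( (−1)^i · C(n,i) · C(i,j) · C(n−i,k) / ([2n−4]_i · [2n−4]_{n−i}) ) · ( [n]_k · [n−2]_{n−i−k} − [n−1]_k · [n−1]_{n−i−k} ) · ( [n]_j · [n−2]_{i−j} − [n−1]_j · [n−1]_{i−j} ) = 0. -/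
open Finset

lemma vand (a b i : ℕ) :
    ∑ j ∈ Finset.range (i + 1),
      i.choose j * a.descFactorial j * b.descFactorial (i - j) =
      (a + b).descFactorial i := by
  have h := Nat.add_choose_eq a b i
  rw [Finset.Nat.sum_antidiagonal_eq_sum_range_succ_mk] at h
  rw [Nat.descFactorial_eq_factorial_mul_choose, h, Finset.mul_sum]
  refine Finset.sum_congr rfl fun j hj => ?_
  have hji : j ≤ i := Nat.lt_succ_iff.mp (Finset.mem_range.mp hj)
  rw [Nat.descFactorial_eq_factorial_mul_choose a, Nat.descFactorial_eq_factorial_mul_choose b,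
    ← Nat.choose_mul_factorial_mul_factorial hji]
  ring

lemma vandQ (a b i : ℕ) :
    ∑ j ∈ Finset.range (i + 1),
      (i.choose j : ℚ) * a.descFactorial j * b.descFactorial (i - j) =
      ((a + b).descFactorial i : ℚ) := by
  exact_mod_cast congrArg (Nat.cast : ℕ → ℚ) (vand a b i)

lemma key (n i : ℕ) (hn : 2 ≤ n) :
    ∑ j ∈ Finset.range (i + 1),
      (i.choose j : ℚ) *
        ((Nat.descFactorial n j : ℚ) * (Nat.descFactorial (n - 2) (i - j) : ℚ) -
          (Nat.descFactorial (n - 1) j : ℚ) * (Nat.descFactorial (n - 1) (i - j) : ℚ)) = 0 := by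
  have h1 := vandQ n (n - 2) i
  have h2 := vandQ (n - 1) (n - 1) i
  have e1 : n + (n - 2) = 2 * n - 2 := by omega
  have e2 : (n - 1) + (n - 1) = 2 * n - 2 := by omega
  rw [e1] at h1; rw [e2] at h2
  have : ∑ j ∈ Finset.range (i + 1),
      (i.choose j : ℚ) *
        ((Nat.descFactorial n j : ℚ) * (Nat.descFactorial (n - 2) (i - j) : ℚ) -
          (Nat.descFactorial (n - 1) j : ℚ) * (Nat.descFactorial (n - 1) (i - j) : ℚ)) =
      (∑ j ∈ Finset.range (i + 1),
        (i.choose j : ℚ) * Nat.descFactorial n j * Nat.descFactorial (n - 2) (i - j)) -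
      (∑ j ∈ Finset.range (i + 1),
        (i.choose j : ℚ) * Nat.descFactorial (n - 1) j * Nat.descFactorial (n - 1) (i - j)) := by
    rw [← Finset.sum_sub_distrib]
    exact Finset.sum_congr rfl fun j _ => by ring
  rw [this, h1, h2, sub_self]

/-- Binomial identity (10) of the paper: for `n ≥ 4`,
`∑_{i=0}^{n} ∑_{j=0}^{i} ∑_{k=0}^{n−i}
  ((−1)^i C(n,i) C(i,j) C(n−i,k) / ([2n−4]_i [2n−4]_{n−i}))
  ([n]_k [n−2]_{n−i−k} − [n−1]_k [n−1]_{n−i−k}) ([n]_j [n−2]_{i−j} − [n−1]_j [n−1]_{i−j})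
  = 0`. -/
theorem binomial_identity_Ch
    (n : ℕ) (hn : 4 ≤ n) :
    (∑ i ∈ Finset.range (n + 1), ∑ j ∈ Finset.range (i + 1),
      ∑ k ∈ Finset.range (n - i + 1),
      (((-1 : ℚ) ^ i * (n.choose i) * (i.choose j) * ((n - i).choose k)) /
          ((Nat.descFactorial (2 * n - 4) i : ℚ) *
            (Nat.descFactorial (2 * n - 4) (n - i) : ℚ))) *
        ((Nat.descFactorial n k : ℚ) * (Nat.descFactorial (n - 2) (n - i - k) : ℚ) -
          (Nat.descFactorial (n - 1) k : ℚ) *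
            (Nat.descFactorial (n - 1) (n - i - k) : ℚ)) *
        ((Nat.descFactorial n j : ℚ) * (Nat.descFactorial (n - 2) (i - j) : ℚ) -
          (Nat.descFactorial (n - 1) j : ℚ) * (Nat.descFactorial (n - 1) (i - j) : ℚ))) =
      0 := by
  refine Finset.sum_eq_zero fun i _ => ?_
  have h2 : (2 : ℕ) ≤ n := by omega
  have hkey := key n i h2
  calc (∑ j ∈ Finset.range (i + 1), ∑ k ∈ Finset.range (n - i + 1),
      (((-1 : ℚ) ^ i * (n.choose i) * (i.choose j) * ((n - i).choose k)) /
          ((Nat.descFactorial (2 * n - 4) i : ℚ) *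
            (Nat.descFactorial (2 * n - 4) (n - i) : ℚ))) *
        ((Nat.descFactorial n k : ℚ) * (Nat.descFactorial (n - 2) (n - i - k) : ℚ) -
          (Nat.descFactorial (n - 1) k : ℚ) *
            (Nat.descFactorial (n - 1) (n - i - k) : ℚ)) *
        ((Nat.descFactorial n j : ℚ) * (Nat.descFactorial (n - 2) (i - j) : ℚ) -
          (Nat.descFactorial (n - 1) j : ℚ) * (Nat.descFactorial (n - 1) (i - j) : ℚ)))
      = ∑ j ∈ Finset.range (i + 1),
          ((i.choose j : ℚ) *
            ((Nat.descFactorial n j : ℚ) * (Nat.descFactorial (n - 2) (i - j) : ℚ) -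
              (Nat.descFactorial (n - 1) j : ℚ) * (Nat.descFactorial (n - 1) (i - j) : ℚ))) *
          (∑ k ∈ Finset.range (n - i + 1),
            (((-1 : ℚ) ^ i * (n.choose i) * ((n - i).choose k)) /
              ((Nat.descFactorial (2 * n - 4) i : ℚ) *
                (Nat.descFactorial (2 * n - 4) (n - i) : ℚ))) *
            ((Nat.descFactorial n k : ℚ) * (Nat.descFactorial (n - 2) (n - i - k) : ℚ) -
              (Nat.descFactorial (n - 1) k : ℚ) *
                (Nat.descFactorial (n - 1) (n - i - k) : ℚ))) := by
        refine Finset.sum_congr rfl fun j _ => ?_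
        rw [Finset.mul_sum]
        refine Finset.sum_congr rfl fun k _ => ?_
        field_simp
    _ = 0 := by
        rw [← Finset.sum_mul, hkey, zero_mul]
end

section
/- Let A : ℕ → ℚ[X] and B : ℕ → ℚ[X] be two Appell sequences. Then for every n, the polynomial Dv_n(A,B) := ∑_{i=0}^{n} (−1)^i · C(n,i) · (A i) · (B (n−i)) ∈ ℚ[X] is constant; explicitly it equals Polynomial.C ( ∑_{i=0}^{n} (−1)^i · C(n,i) · (A i).eval 0 · (B (n−i)).eval 0 ). -/
/-- For two Appell sequences `A`, `B`, the joint alternating binomial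
convolution `Dv_n(A,B) = ∑_{i=0}^{n} (−1)^i C(n,i) A_i(x) B_{n−i}(x)` is constant,
equal to its value at `0`. -/
theorem Dv_joint_constant
    (A B : ℕ → Polynomial ℚ)
    (hA0 : Polynomial.derivative (A 0) = 0)
    (hA : ∀ k : ℕ, Polynomial.derivative (A (k + 1)) = (k + 1) • A k)
    (hB0 : Polynomial.derivative (B 0) = 0)
    (hB : ∀ k : ℕ, Polynomial.derivative (B (k + 1)) = (k + 1) • B k)
    (n : ℕ) :
    (∑ i ∈ Finset.range (n + 1), ((-1 : ℚ) ^ i * (n.choose i)) • (A i * B (n - i))) =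
      Polynomial.C (∑ i ∈ Finset.range (n + 1),
        (-1 : ℚ) ^ i * (n.choose i) * (A i).eval 0 * (B (n - i)).eval 0) := by
  have hA' : ∀ i : ℕ, Polynomial.derivative (A i) = (i : ℚ) • A (i - 1) := by
    rintro (_ | i)
    · simpa using hA0
    · rw [hA i]; push_cast; simp [Nat.succ_sub_one, ← Nat.cast_smul_eq_nsmul ℚ]
  have hB' : ∀ i : ℕ, Polynomial.derivative (B i) = (i : ℚ) • B (i - 1) := by
    rintro (_ | i)
    · simpa using hB0
    · rw [hB i]; push_cast; simp [Nat.succ_sub_one, ← Nat.cast_smul_eq_nsmul ℚ]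
  set S := ∑ i ∈ Finset.range (n + 1), ((-1 : ℚ) ^ i * (n.choose i)) • (A i * B (n - i)) with hS
  have hderiv : Polynomial.derivative S = 0 := by
    rw [hS, map_sum]
    have : ∀ i ∈ Finset.range (n + 1),
        Polynomial.derivative (((-1 : ℚ) ^ i * (n.choose i)) • (A i * B (n - i))) =
        ((-1 : ℚ) ^ i * (n.choose i) * i) • (A (i - 1) * B (n - i)) +
        ((-1 : ℚ) ^ i * (n.choose i) * (n - i : ℕ)) • (A i * B (n - i - 1)) := by
      intro i _
      rw [Polynomial.derivative_smul, Polynomial.derivative_mul, hA' i, hB' (n - i)]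
      rw [smul_add, smul_mul_assoc, mul_smul_comm, smul_smul, smul_smul]
    rw [Finset.sum_congr rfl this, Finset.sum_add_distrib]
    rw [Finset.sum_range_succ' (fun i => ((-1 : ℚ) ^ i * (n.choose i) * i) • (A (i - 1) * B (n - i)))]
    rw [Finset.sum_range_succ (fun i => ((-1 : ℚ) ^ i * (n.choose i) * (n - i : ℕ)) • (A i * B (n - i - 1)))]
    simp only [Nat.cast_zero, mul_zero, zero_smul, add_zero, Nat.sub_self]
    rw [← Finset.sum_add_distrib]
    apply Finset.sum_eq_zero
    intro i hi
    have hi' : i < n := Finset.mem_range.mp hi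
    have key : ((n.choose (i + 1) : ℚ)) * (i + 1) = (n.choose i : ℚ) * (n - i : ℕ) := by
      exact_mod_cast congrArg (Nat.cast : ℕ → ℚ) (Nat.choose_succ_right_eq n i)
    have h1 : n - (i + 1) = n - i - 1 := by omega
    simp only [h1, Nat.add_sub_cancel]
    rw [← add_smul]
    have hz : ((-1 : ℚ) ^ (i + 1) * (n.choose (i + 1)) * ((i + 1 : ℕ) : ℚ)) +
        ((-1 : ℚ) ^ i * (n.choose i) * ((n - i : ℕ) : ℚ)) = 0 := by
      push_cast
      push_cast at key
      ring_nf
      ring_nf at key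
      linear_combination (-(-1 : ℚ) ^ i) * key
    rw [hz, zero_smul]
  have := Polynomial.eq_C_of_derivative_eq_zero hderiv
  rw [this]
  congr 1
  rw [Polynomial.coeff_zero_eq_eval_zero, hS]
  simp [Polynomial.eval_finset_sum, mul_assoc]
end

section
/- Let A : ℕ → ℚ[X] and B : ℕ → ℚ[X] be two Appell sequences and let n ≥ 2. Then the polynomial Tr_n(A,B) := ∑_{i=0}^{n} ∑_{j=0}^{i} ((−1)^i / [2n−2]_i) · C(n,i) · C(i,j) · (A (n−i)) · ( [n]_j·(A j) · [n−1]_{i−j}·(B (i−j+1)) − [n]_{i−j}·(B (i−j)) · [n−1]_j·(A (j+1)) ) ∈ ℚ[X] is constant, i.e. it equals Polynomial.C of its value at 0. -/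
namespace TrAux
open Polynomial Finset

def dq (m k : ℕ) : ℚ := (Nat.descFactorial m k : ℚ)

lemma dq_zero (m : ℕ) : dq m 0 = 1 := by simp [dq]
lemma dq_one (m : ℕ) : dq m 1 = m := by simp [dq]

lemma dq_cast_succ (m k : ℕ) : dq m (k+1) = ((m:ℚ) - k) * dq m k := by
  unfold dq
  rcases le_or_gt k m with h | h
  · rw [Nat.descFactorial_succ]
    push_cast [Nat.cast_sub h]
    ring
  · rw [Nat.descFactorial_eq_zero_iff_lt.2 h,
      Nat.descFactorial_eq_zero_iff_lt.2 (Nat.lt_succ_of_lt h)]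
    simp

lemma dq_succ_of_pos {n : ℕ} (hn : 1 ≤ n) (k : ℕ) :
    dq n (k+1) = (n:ℚ) * dq (n-1) k := by
  obtain ⟨m, rfl⟩ : ∃ m, n = m + 1 := ⟨n - 1, by omega⟩
  unfold dq
  rw [Nat.succ_descFactorial_succ]
  push_cast
  simp

lemma choose_cast_succ (m k : ℕ) :
    ((k:ℚ)+1) * (m.choose (k+1) : ℚ) = ((m:ℚ) - k) * (m.choose k : ℚ) := by
  rcases le_or_gt k m with h | h
  · have h2 := Nat.choose_succ_right_eq m k
    have h3 : ((m.choose (k+1) * (k+1) : ℕ) : ℚ) = ((m.choose k * (m-k) : ℕ) : ℚ) := by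
      rw [h2]
    push_cast [Nat.cast_sub h] at h3
    linarith
  · rw [Nat.choose_eq_zero_of_lt h, Nat.choose_eq_zero_of_lt (Nat.lt_succ_of_lt h)]
    simp

lemma pascal_cast (m k : ℕ) :
    ((m+1).choose (k+1) : ℚ) = (m.choose k : ℚ) + (m.choose (k+1) : ℚ) := by
  rw [Nat.choose_succ_succ]; push_cast; ring

def e3fun (n i : ℕ) : ℕ → ℚ
  | 0 => 0
  | (j+1) => -(((i+1).choose j : ℚ) * (dq n (i+1-j) * dq (n-1) j) * ((i+1-j : ℕ) : ℚ))

def r2fun (lam : ℚ) (n i : ℕ) : ℕ → ℚ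
  | 0 => 0
  | (j+1) => -(lam * ((i.choose j : ℚ)) * (dq n (i-j) * dq (n-1) j))

def Ecoef (n i j : ℕ) : ℚ :=
  ((i+1).choose (j+1) : ℚ) * (dq n (j+1) * dq (n-1) (i-j)) * ((j:ℚ)+1)
  + ((i+1).choose j : ℚ) * (dq n j * dq (n-1) (i+1-j)) * (((i+1-j : ℕ):ℚ)+1)
  + e3fun n i j
  - ((i+1).choose j : ℚ) * (dq n (i+1-j) * dq (n-1) j) * ((j:ℚ)+1)

def lamq (n i : ℕ) : ℚ := ((i:ℚ)+1) * (2*(n:ℚ)-2-(i:ℚ))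

def Rcoef (n i j : ℕ) : ℚ :=
  lamq n i * ((i.choose j : ℚ)) * (dq n j * dq (n-1) (i-j))
  + r2fun (lamq n i) n i j

lemma ncast (n : ℕ) (hn : 1 ≤ n) : ((n-1 : ℕ) : ℚ) = (n:ℚ) - 1 := by
  push_cast [Nat.cast_sub hn]; ring

lemma key (n i j : ℕ) (hn : 1 ≤ n) (hj : j ≤ i + 1) : Ecoef n i j = Rcoef n i j := by
  have hc := ncast n hn
  match j with
  | 0 =>
      simp only [Ecoef, Rcoef, e3fun, r2fun, lamq, Nat.sub_zero, Nat.choose_zero_right,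
        Nat.zero_add, Nat.choose_one_right, dq_zero, dq_one]
      rw [dq_succ_of_pos hn i, dq_cast_succ (n-1) i, hc]
      push_cast
      ring
  | (k+1) =>
    rcases Nat.lt_or_ge k i with hk | hk
    · -- main case: 1 ≤ j = k+1 ≤ i
      obtain ⟨b, rfl⟩ : ∃ b, i = k + 1 + b := ⟨i - k - 1, by omega⟩
      simp only [Ecoef, Rcoef, e3fun, r2fun, lamq,
        show k + 1 + b - (k+1) = b from by omega,
        show k + 1 + b + 1 - (k+1) = b+1 from by omega,
        show k + 1 + b + 1 - k = b+2 from by omega,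
        show k + 1 + b - k = b+1 from by omega]
      have h1 := choose_cast_succ (k+1+b+1) k
      have h2 := choose_cast_succ (k+1+b+1) (k+1)
      have h3 := choose_cast_succ (k+1+b) k
      have h4 := pascal_cast (k+1+b) k
      rw [dq_succ_of_pos hn (k+1), dq_succ_of_pos hn k,
        dq_succ_of_pos hn (b+1), dq_succ_of_pos hn b,
        dq_cast_succ (n-1) k, dq_cast_succ (n-1) b, hc]
      push_cast at h1 h2 h3 h4 ⊢
      linear_combination
        ((n:ℚ)*((n:ℚ)-1-k)*(dq (n-1) k)*(dq (n-1) b)) * h2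
        + ((n:ℚ)*((n:ℚ)-1-b)*(dq (n-1) k)*(dq (n-1) b)) * h1
        + ((n:ℚ)*(dq (n-1) k)*(dq (n-1) b)*(2*(n:ℚ)-3-k-b)*((b:ℚ)-k)) * h4
        - (2*(n:ℚ)*(dq (n-1) k)*(dq (n-1) b)*(2*(n:ℚ)-3-k-b)) * h3
    · -- boundary case: j = i+1
      have : k = i := by omega
      subst this
      simp only [Ecoef, Rcoef, e3fun, r2fun, lamq,
        show k - (k+1) = 0 from by omega,
        show k - k = 0 from by omega,
        show k + 1 - (k+1) = 0 from by omega,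
        show k + 1 - k = 1 from by omega,
        Nat.choose_self, Nat.choose_succ_self_right,
        Nat.choose_succ_self, dq_zero, dq_one]
      rw [dq_succ_of_pos hn k, dq_cast_succ (n-1) k, hc]
      push_cast
      ring


section Poly
open Polynomial

variable (A B : ℕ → Polynomial ℚ) (n : ℕ)

/-- inner bracket -/
noncomputable def ST (i j : ℕ) : Polynomial ℚ :=
  (dq n j * dq (n-1) (i-j)) • (A j * B (i-j+1))
    - (dq n (i-j) * dq (n-1) j) • (B (i-j) * A (j+1))

/-- inner sum -/
noncomputable def SS (i : ℕ) : Polynomial ℚ :=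
  ∑ j ∈ Finset.range (i+1), ((i.choose j : ℚ)) • ST A B n i j

variable {A B}

theorem derivA' (hA0 : derivative (A 0) = 0)
    (hA : ∀ k : ℕ, derivative (A (k + 1)) = (k + 1) • A k) (k : ℕ) :
    derivative (A k) = (k : ℚ) • A (k-1) := by
  cases k with
  | zero => simpa using hA0
  | succ k => rw [hA k, ← Nat.cast_smul_eq_nsmul ℚ, Nat.add_sub_cancel]

theorem derivSS (hn : 1 ≤ n)
    (hA0 : derivative (A 0) = 0)
    (hA : ∀ k : ℕ, derivative (A (k + 1)) = (k + 1) • A k)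
    (hB0 : derivative (B 0) = 0)
    (hB : ∀ k : ℕ, derivative (B (k + 1)) = (k + 1) • B k)
    (i : ℕ) :
    derivative (SS A B n (i+1)) = lamq n i • SS A B n i := by
  have dA := derivA' hA0 hA
  have dB := derivA' hB0 hB
  have hstep : derivative (SS A B n (i+1)) =
      ∑ j ∈ Finset.range (i+2),
        (((((i+1).choose j : ℚ)) * (dq n j * dq (n-1) (i+1-j)) * (j:ℚ)) •
            (A (j-1) * B (i+1-j+1))
        + ((((i+1).choose j : ℚ)) * (dq n j * dq (n-1) (i+1-j)) * (((i+1-j:ℕ):ℚ)+1)) •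
            (A j * B (i+1-j))
        + ((-((((i+1).choose j : ℚ)) * (dq n (i+1-j) * dq (n-1) j) * ((i+1-j:ℕ):ℚ))) •
            (B (i-j) * A (j+1))
        + (-((((i+1).choose j : ℚ)) * (dq n (i+1-j) * dq (n-1) j) * ((j:ℚ)+1))) •
            (B (i+1-j) * A j))) := by
    rw [SS, derivative_sum]
    refine Finset.sum_congr rfl fun j hj => ?_
    simp only [ST, derivative_smul, derivative_sub, derivative_mul, dA, dB]
    simp only [Nat.add_sub_cancel, show i+1-j-1 = i-j from by omega]
    simp only [smul_mul_assoc, mul_smul_comm, smul_smul, smul_sub, smul_add]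
    push_cast
    module
  have H1 : (∑ j ∈ Finset.range (i+2),
        (((((i+1).choose j : ℚ)) * (dq n j * dq (n-1) (i+1-j)) * (j:ℚ)) •
          (A (j-1) * B (i+1-j+1))))
      = ∑ j ∈ Finset.range (i+2),
        ((((i+1).choose (j+1) : ℚ)) * (dq n (j+1) * dq (n-1) (i-j)) * ((j:ℚ)+1)) •
          (A j * B (i+1-j)) := by
    rw [Finset.sum_range_succ' _ (i+1), Finset.sum_range_succ _ (i+1)]
    have hz1 : (((((i+1).choose 0 : ℚ)) * (dq n 0 * dq (n-1) (i+1-0)) * ((0:ℕ):ℚ)) •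
        (A (0-1) * B (i+1-0+1))) = 0 := by simp
    have hz2 : ((((i+1).choose (i+1+1) : ℚ)) * (dq n (i+1+1) * dq (n-1) (i-(i+1))) * (((i+1:ℕ):ℚ)+1)) •
          (A (i+1) * B (i+1-(i+1))) = 0 := by
      simp [Nat.choose_succ_self]
    rw [hz1, hz2, add_zero, add_zero]
    refine Finset.sum_congr rfl fun j hj => ?_
    have hj' : j ≤ i := by
      have := Finset.mem_range.1 hj; omega
    simp only [show i+1-(j+1) = i-j from by omega, Nat.add_sub_cancel,
      show i-j+1 = i+1-j from by omega]
    congr 1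
    push_cast
    ring
  have H3 : (∑ j ∈ Finset.range (i+2),
        ((-((((i+1).choose j : ℚ)) * (dq n (i+1-j) * dq (n-1) j) * ((i+1-j:ℕ):ℚ))) •
          (B (i-j) * A (j+1))))
      = ∑ j ∈ Finset.range (i+2), e3fun n i j • (A j * B (i+1-j)) := by
    rw [Finset.sum_range_succ _ (i+1), Finset.sum_range_succ' _ (i+1)]
    have hz1 : ((-((((i+1).choose (i+1) : ℚ)) * (dq n (i+1-(i+1)) * dq (n-1) (i+1)) *
        (((i+1-(i+1)):ℕ):ℚ))) • (B (i-(i+1)) * A ((i+1)+1))) = 0 := by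
      simp [show i+1-(i+1) = 0 from by omega]
    have hz2 : e3fun n i 0 • (A 0 * B (i+1-0)) = 0 := by simp [e3fun]
    rw [hz1, hz2, add_zero, add_zero]
    refine Finset.sum_congr rfl fun j hj => ?_
    simp only [e3fun, show i+1-(j+1) = i-j from by omega]
    rw [mul_comm (B (i-j)) (A (j+1))]
  have H4 : (∑ j ∈ Finset.range (i+2),
        ((-((((i+1).choose j : ℚ)) * (dq n (i+1-j) * dq (n-1) j) * ((j:ℚ)+1))) •
          (B (i+1-j) * A j)))
      = ∑ j ∈ Finset.range (i+2),
        (-((((i+1).choose j : ℚ)) * (dq n (i+1-j) * dq (n-1) j) * ((j:ℚ)+1))) •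
          (A j * B (i+1-j)) := by
    refine Finset.sum_congr rfl fun j hj => ?_
    rw [mul_comm (B (i+1-j)) (A j)]
  have HR : lamq n i • SS A B n i
      = ∑ j ∈ Finset.range (i+2), Rcoef n i j • (A j * B (i+1-j)) := by
    have hsplit : ∑ j ∈ Finset.range (i+2), Rcoef n i j • (A j * B (i+1-j))
        = (∑ j ∈ Finset.range (i+2),
            (lamq n i * (i.choose j : ℚ) * (dq n j * dq (n-1) (i-j))) • (A j * B (i+1-j)))
          + ∑ j ∈ Finset.range (i+2), r2fun (lamq n i) n i j • (A j * B (i+1-j)) := by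
      rw [← Finset.sum_add_distrib]
      refine Finset.sum_congr rfl fun j hj => ?_
      simp only [Rcoef]
      module
    rw [hsplit, Finset.sum_range_succ _ (i+1), Finset.sum_range_succ' _ (i+1)]
    have hz1 : (lamq n i * (i.choose (i+1) : ℚ) * (dq n (i+1) * dq (n-1) (i-(i+1)))) •
        (A (i+1) * B (i+1-(i+1))) = 0 := by
      simp [Nat.choose_succ_self]
    have hz2 : r2fun (lamq n i) n i 0 • (A 0 * B (i+1-0)) = 0 := by simp [r2fun]
    rw [hz1, hz2, add_zero, add_zero, ← Finset.sum_add_distrib]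
    rw [SS, Finset.smul_sum]
    refine Finset.sum_congr rfl fun j hj => ?_
    have hj' : j ≤ i := by
      have := Finset.mem_range.1 hj; omega
    simp only [ST, r2fun, show i+1-(j+1) = i-j from by omega,
      show i-j+1 = i+1-j from by omega, smul_sub, smul_smul]
    rw [mul_comm (B (i-j)) (A (j+1))]
    module
  rw [hstep, Finset.sum_add_distrib, Finset.sum_add_distrib, Finset.sum_add_distrib,
    H1, H3, H4, HR, ← Finset.sum_add_distrib, ← Finset.sum_add_distrib, ← Finset.sum_add_distrib]
  refine Finset.sum_congr rfl fun j hj => ?_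
  have hj' : j ≤ i + 1 := by
    have := Finset.mem_range.1 hj; omega
  have hk := key n i j hn hj'
  simp only [Ecoef] at hk
  rw [← hk]
  module

theorem derivSS0
    (hA0 : derivative (A 0) = 0)
    (hA : ∀ k : ℕ, derivative (A (k + 1)) = (k + 1) • A k)
    (hB0 : derivative (B 0) = 0)
    (hB : ∀ k : ℕ, derivative (B (k + 1)) = (k + 1) • B k) :
    derivative (SS A B n 0) = 0 := by
  have dA := derivA' hA0 hA
  have dB := derivA' hB0 hB
  simp [SS, ST, derivative_sub, derivative_mul, dA, dB, dq_zero]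
  ring

theorem coefzero (i : ℕ) (hn : 2 ≤ n) (hi : i < n) :
    ((-1:ℚ)^i / (dq (2*n-2) i) * (n.choose i : ℚ)) * ((n-i : ℕ):ℚ)
    + ((-1:ℚ)^(i+1) / (dq (2*n-2) (i+1)) * (n.choose (i+1) : ℚ)) * lamq n i = 0 := by
  have h1 : dq (2*n-2) (i+1) = (((2*n-2:ℕ):ℚ) - (i:ℚ)) * dq (2*n-2) i := dq_cast_succ _ i
  have hc2 : (((2*n-2:ℕ)):ℚ) = 2*(n:ℚ)-2 := by
    push_cast [Nat.cast_sub (by omega : 2 ≤ 2*n)]; ring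
  have hne : dq (2*n-2) i ≠ 0 := by
    unfold dq
    rw [Nat.cast_ne_zero]
    intro h
    exact absurd (Nat.descFactorial_eq_zero_iff_lt.1 h) (by omega)
  have hin : (i:ℚ) < n := by exact_mod_cast hi
  have hn2 : (2:ℚ) ≤ n := by exact_mod_cast hn
  have hne2 : (2*(n:ℚ)-2-i) ≠ 0 := by
    have h3 : ((i:ℚ)+1) ≤ (n:ℚ) := by exact_mod_cast hi
    intro h; nlinarith
  have hch := choose_cast_succ n i
  have hcast : ((n-i : ℕ):ℚ) = (n:ℚ) - i := by
    push_cast [Nat.cast_sub hi.le]; ring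
  rw [h1, hc2, hcast, lamq, pow_succ]
  have hne3 : (2*((n:ℚ)-1)-i) ≠ 0 := by intro h; apply hne2; linarith
  field_simp
  linear_combination (-(-1:ℚ)^i) * hch

end Poly

end TrAux

open TrAux Polynomial Finset in
/-- For two Appell sequences `A`, `B` and `n ≥ 2`, the joint
semi-invariant expression
`Tr_n(A,B) = ∑_{i=0}^{n} ∑_{j=0}^{i} ((−1)^i/[2n−2]_i) C(n,i) C(i,j) A_{n−i}
  ([n]_j A_j [n−1]_{i−j} B_{i−j+1} − [n]_{i−j} B_{i−j} [n−1]_j A_{j+1})`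
is constant, equal to `C` of its value at `0`. -/
theorem Tr_joint_constant
    (A B : ℕ → Polynomial ℚ)
    (hA0 : Polynomial.derivative (A 0) = 0)
    (hA : ∀ k : ℕ, Polynomial.derivative (A (k + 1)) = (k + 1) • A k)
    (hB0 : Polynomial.derivative (B 0) = 0)
    (hB : ∀ k : ℕ, Polynomial.derivative (B (k + 1)) = (k + 1) • B k)
    (n : ℕ) (hn : 2 ≤ n)
    (T : Polynomial ℚ)
    (hT : T = ∑ i ∈ Finset.range (n + 1), ∑ j ∈ Finset.range (i + 1),
        (((-1 : ℚ) ^ i / (Nat.descFactorial (2 * n - 2) i : ℚ)) *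
            (n.choose i) * (i.choose j)) •
          (A (n - i) *
            ((Nat.descFactorial n j : ℚ) • A j *
                ((Nat.descFactorial (n - 1) (i - j) : ℚ) • B (i - j + 1)) -
              (Nat.descFactorial n (i - j) : ℚ) • B (i - j) *
                ((Nat.descFactorial (n - 1) j : ℚ) • A (j + 1))))) :
    T = Polynomial.C (T.eval 0) := by
  have dA := derivA' hA0 hA
  have hn1 : 1 ≤ n := by omega
  -- repackage T
  have hT' : T = ∑ i ∈ Finset.range (n+1),
      (((-1:ℚ)^i / (dq (2*n-2) i)) * (n.choose i : ℚ)) • (A (n-i) * SS A B n i) := by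
    rw [hT]
    refine Finset.sum_congr rfl fun i hi => ?_
    rw [TrAux.SS, Finset.mul_sum, Finset.smul_sum]
    refine Finset.sum_congr rfl fun j hj => ?_
    simp only [TrAux.ST, dq, smul_sub, smul_smul, mul_smul_comm, smul_mul_assoc, mul_sub]
    module
  -- derivative is zero
  have hd : derivative T = 0 := by
    rw [hT', derivative_sum]
    have hsummand : ∀ i ∈ Finset.range (n+1),
        derivative ((((-1:ℚ)^i / (dq (2*n-2) i)) * (n.choose i : ℚ)) • (A (n-i) * SS A B n i))
        = ((((-1:ℚ)^i / (dq (2*n-2) i)) * (n.choose i : ℚ)) * ((n-i:ℕ):ℚ)) •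
            (A (n-i-1) * SS A B n i)
          + (((-1:ℚ)^i / (dq (2*n-2) i)) * (n.choose i : ℚ)) •
            (A (n-i) * derivative (SS A B n i)) := by
      intro i hi
      rw [derivative_smul, derivative_mul, dA (n-i)]
      simp only [smul_mul_assoc, smul_add, smul_smul]
    rw [Finset.sum_congr rfl hsummand, Finset.sum_add_distrib]
    have hP : ∑ i ∈ Finset.range (n+1),
        ((((-1:ℚ)^i / (dq (2*n-2) i)) * (n.choose i : ℚ)) * ((n-i:ℕ):ℚ)) •
          (A (n-i-1) * SS A B n i)
        = ∑ i ∈ Finset.range n,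
        ((((-1:ℚ)^i / (dq (2*n-2) i)) * (n.choose i : ℚ)) * ((n-i:ℕ):ℚ)) •
          (A (n-i-1) * SS A B n i) := by
      rw [Finset.sum_range_succ]
      simp [Nat.sub_self]
    have hQ : ∑ i ∈ Finset.range (n+1),
        (((-1:ℚ)^i / (dq (2*n-2) i)) * (n.choose i : ℚ)) •
          (A (n-i) * derivative (SS A B n i))
        = ∑ i ∈ Finset.range n,
        ((((-1:ℚ)^(i+1) / (dq (2*n-2) (i+1))) * (n.choose (i+1) : ℚ)) * lamq n i) •
          (A (n-i-1) * SS A B n i) := by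
      rw [Finset.sum_range_succ' _ n]
      have hz : (((-1:ℚ)^0 / (dq (2*n-2) 0)) * (n.choose 0 : ℚ)) •
          (A (n-0) * derivative (SS A B n 0)) = 0 := by
        rw [derivSS0 n hA0 hA hB0 hB]
        simp
      rw [hz, add_zero]
      refine Finset.sum_congr rfl fun i hi => ?_
      rw [derivSS n hn1 hA0 hA hB0 hB i,
        show n - (i+1) = n - i - 1 from by omega, mul_smul_comm, smul_smul]
    rw [hP, hQ, ← Finset.sum_add_distrib]
    refine Finset.sum_eq_zero fun i hi => ?_
    have hi' : i < n := Finset.mem_range.1 hi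
    rw [← add_smul, coefzero n i hn hi', zero_smul]
  have h0 := Polynomial.natDegree_eq_zero_of_derivative_eq_zero hd
  have hC := Polynomial.eq_C_of_natDegree_eq_zero h0
  rwa [Polynomial.coeff_zero_eq_eval_zero] at hC
end

section
/- Let A : ℕ → ℚ[X] and B : ℕ → ℚ[X] be two Appell sequences and n ≥ 1. For x : ℚ define the 2n × 2n Sylvester matrix S(x) over ℚ as follows: for 0 ≤ r ≤ n−1 (the first n rows), the entry in row r and column c equals C(n, c−r) · (A (c−r)).eval x if 0 ≤ c−r ≤ n and 0 otherwise; for 0 ≤ r ≤ n−1 (the last n rows, indexed by row n+r), the entry in column c equals C(n, c−r) · (B (c−r)).eval x if 0 ≤ c−r ≤ n and 0 otherwise. Then the semi-resultant sRes_n(A,B)(x) := det S(x) is independent of x: for all x, det S(x) = det S(0). -/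
open Polynomial Finset

lemma chooseSwap (n m j : ℕ) :
    n.choose m * (n - m).choose j = n.choose j * (n - j).choose m := by
  rcases le_or_gt (m + j) n with h | h
  · have h1 := Nat.choose_mul (n := n) (show j ≤ m + j by omega)
    have h2 := Nat.choose_mul (n := n) (show m ≤ m + j by omega)
    have h3 : (m + j).choose j = (m + j).choose m := by
      rw [← Nat.choose_symm (show m ≤ m + j by omega)]
      congr 1
      omega
    rw [show m + j - j = m by omega] at h1
    rw [show m + j - m = j by omega] at h2
    rw [h3] at h1
    omega
  · rcases le_or_gt m n with hm | hm
    · rcases le_or_gt j n with hj | hj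
      · rw [Nat.choose_eq_zero_of_lt (show n - m < j by omega),
          Nat.choose_eq_zero_of_lt (show n - j < m by omega), mul_zero, mul_zero]
      · rw [Nat.choose_eq_zero_of_lt (show n - m < j by omega),
          Nat.choose_eq_zero_of_lt (show n < j by omega), mul_zero, zero_mul]
    · rcases le_or_gt j n with hj | hj
      · rw [Nat.choose_eq_zero_of_lt hm, Nat.choose_eq_zero_of_lt (show n - j < m by omega),
          zero_mul, mul_zero]
      · rw [Nat.choose_eq_zero_of_lt hm, Nat.choose_eq_zero_of_lt hj, zero_mul, zero_mul]

lemma appell_repr (A : ℕ → Polynomial ℚ)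
    (hA0 : Polynomial.derivative (A 0) = 0)
    (hA : ∀ k : ℕ, Polynomial.derivative (A (k + 1)) = (k + 1) • A k) :
    ∀ k, A k = ∑ j ∈ range (k + 1),
      C ((k.choose j : ℚ) * (A j).eval 0) * X ^ (k - j) := by
  intro k
  induction k with
  | zero =>
    rw [eq_C_of_derivative_eq_zero hA0]
    simp [coeff_zero_eq_eval_zero]
  | succ k ih =>
    set P : Polynomial ℚ := ∑ j ∈ range (k + 2),
      C (((k+1).choose j : ℚ) * (A j).eval 0) * X ^ (k + 1 - j) with hP
    have hdP : derivative P = derivative (A (k + 1)) := by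
      rw [hA k, hP, map_sum, Finset.sum_range_succ]
      have hlast : derivative (C (((k+1).choose (k+1) : ℚ) * (A (k+1)).eval 0)
          * X ^ (k + 1 - (k+1))) = 0 := by
        simp
      rw [hlast, add_zero, ih, smul_sum]
      apply Finset.sum_congr rfl
      intro j hj
      have hjk : j ≤ k := Nat.lt_succ_iff.mp (Finset.mem_range.mp hj)
      have hexp : k + 1 - j = (k - j) + 1 := by omega
      rw [hexp, derivative_C_mul, derivative_X_pow, Nat.add_sub_cancel]
      rw [← Nat.cast_smul_eq_nsmul ℚ, smul_eq_C_mul]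
      have h1 := Nat.choose_mul_succ_eq k j
      have h2 : (k+1).choose j * (k - j + 1) = (k + 1) * k.choose j := by
        rw [show k - j + 1 = k + 1 - j by omega, ← h1, mul_comm]
      have hCq : (C ((((k+1).choose j : ℕ) : ℚ)) * C (((k - j + 1 : ℕ) : ℚ)) : Polynomial ℚ)
          = C (((k+1 : ℕ) : ℚ)) * C ((k.choose j : ℚ)) := by
        rw [← C_mul, ← C_mul]
        congr 1
        exact_mod_cast congrArg (fun t : ℕ => (t : ℚ)) h2
      simp only [C_mul]
      linear_combination C ((A j).eval 0) * X ^ (k - j) * hCq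
    have h0 : A (k+1) - P = C ((A (k+1) - P).coeff 0) :=
      eq_C_of_derivative_eq_zero (by rw [derivative_sub, hdP, sub_self])
    have hPe : P.eval 0 = (A (k+1)).eval 0 := by
      rw [hP, eval_finset_sum, Finset.sum_range_succ]
      have hz : ∀ j ∈ range (k+1),
          (C (((k+1).choose j : ℚ) * (A j).eval 0) * X ^ (k + 1 - j)).eval 0 = 0 := by
        intro j hj
        have hjk : j ≤ k := Nat.lt_succ_iff.mp (Finset.mem_range.mp hj)
        simp [zero_pow (show k + 1 - j ≠ 0 by omega)]
      rw [Finset.sum_eq_zero hz, zero_add]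
      simp
    have hc0 : (A (k+1) - P).coeff 0 = 0 := by
      simp [coeff_zero_eq_eval_zero, hPe]
    have hfin : A (k+1) - P = 0 := by rw [h0, hc0, map_zero]
    exact sub_eq_zero.mp hfin

lemma appell_eval (A : ℕ → Polynomial ℚ)
    (hA0 : Polynomial.derivative (A 0) = 0)
    (hA : ∀ k : ℕ, Polynomial.derivative (A (k + 1)) = (k + 1) • A k)
    (k : ℕ) (x : ℚ) :
    (A k).eval x = ∑ j ∈ range (k + 1), (k.choose j : ℚ) * (A j).eval 0 * x ^ (k - j) := by
  conv_lhs => rw [appell_repr A hA0 hA k]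
  rw [eval_finset_sum]
  simp [mul_assoc]

noncomputable def Fpoly (A : ℕ → Polynomial ℚ) (n : ℕ) (x : ℚ) : Polynomial ℚ :=
  ∑ i ∈ range (n + 1), C ((n.choose i : ℚ) * (A i).eval x) * X ^ (n - i)

lemma Fpoly_comp (A : ℕ → Polynomial ℚ)
    (hA0 : Polynomial.derivative (A 0) = 0)
    (hA : ∀ k : ℕ, Polynomial.derivative (A (k + 1)) = (k + 1) • A k)
    (n : ℕ) (x : ℚ) :
    Fpoly A n x = (Fpoly A n 0).comp (X + C x) := by
  have hR : (Fpoly A n 0).comp (X + C x)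
      = ∑ i ∈ range (n+1), ∑ m ∈ range (n+1),
          C ((n.choose i : ℚ) * (A i).eval 0 * (((n-i).choose m : ℚ) * x ^ (n-i-m)))
            * X ^ m := by
    rw [Fpoly, Polynomial.sum_comp]
    apply Finset.sum_congr rfl
    intro i hi
    rw [mul_comp, C_comp, X_pow_comp, add_pow, Finset.mul_sum]
    apply Finset.sum_subset_zero_on_sdiff
      (Finset.range_subset_range.mpr (show n - i + 1 ≤ n + 1 by omega))
    · intro m hm
      simp only [Finset.mem_sdiff, Finset.mem_range] at hm
      rw [Nat.choose_eq_zero_of_lt (show n - i < m by omega)]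
      simp
    · intro m hm
      have hm' : m ≤ n - i := Nat.lt_succ_iff.mp (Finset.mem_range.mp hm)
      have hnc : (((n-i).choose m : ℕ) : ℚ[X]) = C (((n-i).choose m : ℕ) : ℚ) := by simp
      rw [hnc]
      simp only [C_mul, C_pow]
      ring
  have hL : Fpoly A n x = ∑ k ∈ range (n+1), ∑ j ∈ range (n+1),
      C ((n.choose k : ℚ) * ((k.choose j : ℚ) * (A j).eval 0 * x ^ (k-j)))
        * X ^ (n-k) := by
    rw [Fpoly]
    apply Finset.sum_congr rfl
    intro k hk
    have hk' : k ≤ n := Nat.lt_succ_iff.mp (Finset.mem_range.mp hk)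
    rw [appell_eval A hA0 hA k x, Finset.mul_sum, map_sum, Finset.sum_mul]
    apply Finset.sum_subset_zero_on_sdiff
      (Finset.range_subset_range.mpr (show k + 1 ≤ n + 1 by omega))
    · intro j hj
      simp only [Finset.mem_sdiff, Finset.mem_range] at hj
      rw [Nat.choose_eq_zero_of_lt (show k < j by omega)]
      simp
    · intro j hj
      rfl
  rw [hL, hR]
  conv_lhs => rw [← Finset.sum_range_reflect]
  simp only [Nat.add_sub_cancel]
  rw [Finset.sum_comm]
  apply Finset.sum_congr rfl
  intro j hj
  apply Finset.sum_congr rfl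
  intro m hm
  have hj' : j ≤ n := Nat.lt_succ_iff.mp (Finset.mem_range.mp hj)
  have hm' : m ≤ n := Nat.lt_succ_iff.mp (Finset.mem_range.mp hm)
  rw [show n - (n - m) = m from by omega, show n - m - j = n - j - m from by omega]
  have hc : n.choose (n-m) * (n-m).choose j = n.choose j * (n-j).choose m := by
    rw [Nat.choose_symm hm']
    exact chooseSwap n m j
  have hcq : ((n.choose (n-m) : ℕ) : ℚ) * (((n-m).choose j : ℕ) : ℚ)
      = ((n.choose j : ℕ) : ℚ) * (((n-j).choose m : ℕ) : ℚ) := by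
    exact_mod_cast congrArg (fun t : ℕ => (t : ℚ)) hc
  refine congrArg (· * X ^ m) (congrArg C ?_)
  linear_combination ((A j).eval 0 * x ^ (n - j - m)) * hcq

section Part2

def rhoF (n r : ℕ) : ℕ := if r < n then r else r - n

noncomputable def uent (n : ℕ) (x : ℚ) (r s : ℕ) : ℚ :=
  if ((r < n) ↔ (s < n)) ∧ rhoF n r ≤ rhoF n s then
    ((n - 1 - rhoF n r).choose (rhoF n s - rhoF n r) : ℚ) * (-x) ^ (rhoF n s - rhoF n r)
  else 0

noncomputable def tent (n : ℕ) (x : ℚ) (d c : ℕ) : ℚ :=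
  if d ≤ c then ((2 * n - 1 - d).choose (c - d) : ℚ) * x ^ (c - d) else 0

noncomputable def Umat (n : ℕ) (x : ℚ) : Matrix (Fin (2 * n)) (Fin (2 * n)) ℚ :=
  fun r s => uent n x r s

noncomputable def Tmat (n : ℕ) (x : ℚ) : Matrix (Fin (2 * n)) (Fin (2 * n)) ℚ :=
  fun d c => tent n x d c

noncomputable def Pv (n : ℕ) (v : Fin (2 * n) → ℚ) : Polynomial ℚ :=
  ∑ c, C (v c) * X ^ (2 * n - 1 - (c : ℕ))

lemma Pv_coeff {n : ℕ} (hn : 1 ≤ n) (v : Fin (2 * n) → ℚ) (c : Fin (2 * n)) :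
    (Pv n v).coeff (2 * n - 1 - (c : ℕ)) = v c := by
  rw [Pv, finset_sum_coeff]
  rw [Finset.sum_eq_single c]
  · simp
  · intro b _ hbc
    have hb := b.isLt
    have hc := c.isLt
    have : 2 * n - 1 - (b : ℕ) ≠ 2 * n - 1 - (c : ℕ) := by
      intro h
      exact hbc (Fin.ext (by omega))
    simp only [coeff_C_mul, coeff_X_pow]
    rw [if_neg (by omega), mul_zero]
  · intro h
    exact absurd (Finset.mem_univ c) h

lemma det_Umat {n : ℕ} (hn : 1 ≤ n) (x : ℚ) : (Umat n x).det = 1 := by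
  have ht : (Umat n x).BlockTriangular id := by
    intro i j hij
    have hij' : (j : ℕ) < (i : ℕ) := hij
    rw [Umat, uent, if_neg]
    rintro ⟨h1, h2⟩
    rcases lt_or_ge (i : ℕ) n with hi | hi
    · have hj : (j : ℕ) < n := by omega
      simp only [rhoF, if_pos hi, if_pos hj] at h2
      omega
    · have hj : ¬ (j : ℕ) < n := by
        intro hj
        exact absurd (h1.mpr hj) (by omega)
      simp only [rhoF, if_neg (by omega : ¬ (i : ℕ) < n), if_neg hj] at h2
      omega
  rw [Matrix.det_of_upperTriangular ht]
  apply Finset.prod_eq_one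
  intro i _
  rw [Umat, uent, if_pos ⟨Iff.rfl, le_refl _⟩]
  simp

lemma det_Tmat {n : ℕ} (hn : 1 ≤ n) (x : ℚ) : (Tmat n x).det = 1 := by
  have ht : (Tmat n x).BlockTriangular id := by
    intro i j hij
    have hij' : (j : ℕ) < (i : ℕ) := hij
    rw [Tmat, tent, if_neg (by omega)]
  rw [Matrix.det_of_upperTriangular ht]
  apply Finset.prod_eq_one
  intro i _
  rw [Tmat, tent, if_pos (le_refl _)]
  simp

lemma addpow (x : ℚ) (M : ℕ) :
    (X + C x) ^ M = ∑ m ∈ range (M + 1), C ((M.choose m : ℚ) * x ^ (M - m)) * X ^ m := by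
  rw [add_pow]
  apply Finset.sum_congr rfl
  intro m hm
  have hnc : ((M.choose m : ℕ) : ℚ[X]) = C ((M.choose m : ℕ) : ℚ) := by simp
  rw [hnc, ← C_pow]
  simp only [C_mul, C_pow]
  ring

lemma subpow (x : ℚ) (M : ℕ) :
    ∑ m ∈ range (M + 1), C ((M.choose m : ℚ) * (-x) ^ m) * (X + C x) ^ (M - m) = X ^ M := by
  have h : (X : ℚ[X]) ^ M = (C (-x) + (X + C x)) ^ M := by
    congr 1
    rw [map_neg]
    ring
  rw [h, add_pow]
  apply Finset.sum_congr rfl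
  intro m hm
  have hnc : ((M.choose m : ℕ) : ℚ[X]) = C ((M.choose m : ℕ) : ℚ) := by simp
  rw [hnc]
  simp only [C_mul, C_pow]
  ring

lemma tent_coeff {n : ℕ} (hn : 1 ≤ n) (x : ℚ) (d c : Fin (2 * n)) :
    tent n x d c = ((X + C x) ^ (2 * n - 1 - (d : ℕ))).coeff (2 * n - 1 - (c : ℕ)) := by
  have hd := d.isLt
  have hc := c.isLt
  rw [addpow, finset_sum_coeff]
  simp only [coeff_C_mul, coeff_X_pow]
  rcases le_or_gt (d : ℕ) (c : ℕ) with h | h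
  · rw [Finset.sum_eq_single (2 * n - 1 - (c : ℕ))]
    · rw [if_pos rfl, tent, if_pos h, mul_one]
      have h1 : 2 * n - 1 - (d : ℕ) - (2 * n - 1 - (c : ℕ)) = (c : ℕ) - (d : ℕ) := by omega
      have h2 : (2 * n - 1 - (d : ℕ)).choose (2 * n - 1 - (c : ℕ))
          = (2 * n - 1 - (d : ℕ)).choose ((c : ℕ) - (d : ℕ)) := by
        rw [← h1, Nat.choose_symm (by omega)]
      rw [h2, h1]
    · intro b _ hb
      simp [Ne.symm hb]
    · intro hmem
      exfalso
      apply hmem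
      rw [Finset.mem_range]
      omega
  · rw [tent, if_neg (by omega), Finset.sum_eq_zero]
    intro m hm
    rw [Finset.mem_range] at hm
    rw [if_neg (by omega), mul_zero]

end Part2
lemma Pv_row_aux (E : ℕ → Polynomial ℚ) (n : ℕ) (hn : 1 ≤ n) (x : ℚ) (ρ : ℕ)
    (hρ : ρ ≤ n - 1) (v : Fin (2 * n) → ℚ)
    (hv : ∀ c : Fin (2 * n), v c =
      if ρ ≤ (c : ℕ) ∧ (c : ℕ) - ρ ≤ n then
        (n.choose ((c : ℕ) - ρ) : ℚ) * (E ((c : ℕ) - ρ)).eval x else 0) :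
    Pv n v = X ^ (n - 1 - ρ) * Fpoly E n x := by
  set f : ℕ → Polynomial ℚ := fun c' =>
    C (if ρ ≤ c' ∧ c' - ρ ≤ n then
        (n.choose (c' - ρ) : ℚ) * (E (c' - ρ)).eval x else 0) * X ^ (2 * n - 1 - c')
      with hf
  have h0 : ∀ c : Fin (2 * n), C (v c) * X ^ (2 * n - 1 - (c : ℕ)) = f (c : ℕ) := by
    intro c
    rw [hv c]
  rw [Pv, Finset.sum_congr rfl (fun c _ => h0 c), Fin.sum_univ_eq_sum_range f (2 * n)]
  have hsub : Finset.Ico ρ (ρ + n + 1) ⊆ range (2 * n) := by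
    intro t ht
    simp only [Finset.mem_Ico] at ht
    simp only [Finset.mem_range]
    omega
  have hz : ∀ t ∈ range (2 * n), t ∉ Finset.Ico ρ (ρ + n + 1) → f t = 0 := by
    intro t ht hnt
    simp only [Finset.mem_range] at ht
    simp only [Finset.mem_Ico, not_and, not_lt] at hnt
    rw [hf]
    simp only []
    rw [if_neg (by omega), map_zero, zero_mul]
  rw [← Finset.sum_subset hsub hz, Finset.sum_Ico_eq_sum_range,
    show ρ + n + 1 - ρ = n + 1 from by omega, Fpoly, Finset.mul_sum]
  apply Finset.sum_congr rfl
  intro i hi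
  have hi' : i ≤ n := Nat.lt_succ_iff.mp (Finset.mem_range.mp hi)
  rw [hf]
  simp only []
  rw [show ρ + i - ρ = i from by omega, if_pos ⟨Nat.le_add_right _ _, hi'⟩,
    show 2 * n - 1 - (ρ + i) = (n - i) + (n - 1 - ρ) from by omega, pow_add]
  ring

lemma Usum (n : ℕ) (hn : 1 ≤ n) (x : ℚ) (FA FB : Polynomial ℚ) (r : Fin (2 * n)) :
    (∑ s : Fin (2 * n), C (uent n x (r : ℕ) (s : ℕ)) *
      ((X + C x) ^ (n - 1 - rhoF n (s : ℕ)) * (if (s : ℕ) < n then FA else FB)))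
    = X ^ (n - 1 - rhoF n (r : ℕ)) * (if (r : ℕ) < n then FA else FB) := by
  have hr2 := r.isLt
  set g : ℕ → Polynomial ℚ := fun s' =>
    C (uent n x (r : ℕ) s') * ((X + C x) ^ (n - 1 - rhoF n s') *
      (if s' < n then FA else FB)) with hg
  have h0 : ∀ s : Fin (2 * n), C (uent n x (r : ℕ) (s : ℕ)) *
      ((X + C x) ^ (n - 1 - rhoF n (s : ℕ)) * (if (s : ℕ) < n then FA else FB))
      = g (s : ℕ) := fun s => rfl
  rw [Finset.sum_congr rfl (fun s _ => h0 s), Fin.sum_univ_eq_sum_range g (2 * n)]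
  rcases lt_or_ge (r : ℕ) n with hr | hr
  · have hρ : rhoF n (r : ℕ) = (r : ℕ) := if_pos hr
    have hsub : Finset.Ico (r : ℕ) n ⊆ range (2 * n) := by
      intro t ht
      simp only [Finset.mem_Ico] at ht
      simp only [Finset.mem_range]
      omega
    have hz : ∀ t ∈ range (2 * n), t ∉ Finset.Ico (r : ℕ) n → g t = 0 := by
      intro t ht hnt
      simp only [Finset.mem_range] at ht
      simp only [Finset.mem_Ico, not_and, not_lt] at hnt
      have hu : uent n x (r : ℕ) t = 0 := by
        rw [uent, if_neg]
        rintro ⟨h1, h2⟩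
        have h1' : t < n := h1.mp hr
        simp only [rhoF, if_pos hr, if_pos h1'] at h2
        omega
      rw [hg]
      simp only []
      rw [hu, map_zero, zero_mul]
    rw [← Finset.sum_subset hsub hz, Finset.sum_Ico_eq_sum_range,
      show n - (r : ℕ) = (n - 1 - (r : ℕ)) + 1 from by omega,
      hρ, if_pos hr, ← subpow x (n - 1 - (r : ℕ)), Finset.sum_mul]
    apply Finset.sum_congr rfl
    intro m hm
    have hm' : m ≤ n - 1 - (r : ℕ) := Nat.lt_succ_iff.mp (Finset.mem_range.mp hm)
    have ht : (r : ℕ) + m < n := by omega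
    have h1 : uent n x (r : ℕ) ((r : ℕ) + m)
        = ((n - 1 - (r : ℕ)).choose m : ℚ) * (-x) ^ m := by
      rw [uent, if_pos]
      · simp only [rhoF, if_pos hr, if_pos ht]
        rw [show (r : ℕ) + m - (r : ℕ) = m from by omega]
      · constructor
        · exact ⟨fun _ => ht, fun _ => hr⟩
        · simp only [rhoF, if_pos hr, if_pos ht]
          omega
    rw [hg]
    simp only []
    rw [h1, show rhoF n ((r : ℕ) + m) = (r : ℕ) + m from if_pos ht, if_pos ht,
      show n - 1 - ((r : ℕ) + m) = n - 1 - (r : ℕ) - m from by omega]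
    ring
  · have hρ : rhoF n (r : ℕ) = (r : ℕ) - n := if_neg (by omega)
    have hsub : Finset.Ico (r : ℕ) (2 * n) ⊆ range (2 * n) := by
      intro t ht
      simp only [Finset.mem_Ico] at ht
      simp only [Finset.mem_range]
      omega
    have hz : ∀ t ∈ range (2 * n), t ∉ Finset.Ico (r : ℕ) (2 * n) → g t = 0 := by
      intro t ht hnt
      simp only [Finset.mem_range] at ht
      simp only [Finset.mem_Ico, not_and, not_lt] at hnt
      have htr : t < (r : ℕ) := by omega
      have hu : uent n x (r : ℕ) t = 0 := by
        rw [uent, if_neg]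
        rintro ⟨h1, h2⟩
        rcases lt_or_ge t n with htn | htn
        · exact absurd (h1.mpr htn) (by omega)
        · simp only [rhoF, if_neg (show ¬ (r : ℕ) < n by omega),
            if_neg (show ¬ t < n by omega)] at h2
          omega
      rw [hg]
      simp only []
      rw [hu, map_zero, zero_mul]
    rw [← Finset.sum_subset hsub hz, Finset.sum_Ico_eq_sum_range,
      show 2 * n - (r : ℕ) = (n - 1 - ((r : ℕ) - n)) + 1 from by omega,
      hρ, if_neg (by omega), ← subpow x (n - 1 - ((r : ℕ) - n)), Finset.sum_mul]
    apply Finset.sum_congr rfl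
    intro m hm
    have hm' : m ≤ n - 1 - ((r : ℕ) - n) := Nat.lt_succ_iff.mp (Finset.mem_range.mp hm)
    have ht : ¬ ((r : ℕ) + m < n) := by omega
    have hrho2 : rhoF n ((r : ℕ) + m) = (r : ℕ) - n + m := by
      rw [rhoF, if_neg ht]
      omega
    have h1 : uent n x (r : ℕ) ((r : ℕ) + m)
        = ((n - 1 - ((r : ℕ) - n)).choose m : ℚ) * (-x) ^ m := by
      rw [uent, if_pos]
      · rw [hrho2, rhoF, if_neg (by omega)]
        rw [show (r : ℕ) - n + m - ((r : ℕ) - n) = m from by omega]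
      · constructor
        · exact ⟨fun h => absurd h (by omega), fun h => absurd h (by omega)⟩
        · rw [hrho2, rhoF, if_neg (by omega)]
          omega
    rw [hg]
    simp only []
    rw [h1, hrho2, if_neg ht,
      show n - 1 - ((r : ℕ) - n + m) = n - 1 - ((r : ℕ) - n) - m from by omega]
    ring


/-- For two Appell sequences `A`, `B` and `n ≥ 1`, the determinant of
the `2n × 2n` Sylvester matrix of the two binary forms with coefficient sequences
`(C(n,i) A_i(x))` and `(C(n,i) B_i(x))` (the semi-resultant `sRes_n(A,B)`) is
independent of `x`. -/
theorem semiresultant_constant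
    (A B : ℕ → Polynomial ℚ)
    (hA0 : Polynomial.derivative (A 0) = 0)
    (hA : ∀ k : ℕ, Polynomial.derivative (A (k + 1)) = (k + 1) • A k)
    (hB0 : Polynomial.derivative (B 0) = 0)
    (hB : ∀ k : ℕ, Polynomial.derivative (B (k + 1)) = (k + 1) • B k)
    (n : ℕ) (hn : 1 ≤ n)
    (S : ℚ → Matrix (Fin (2 * n)) (Fin (2 * n)) ℚ)
    (hS : ∀ (x : ℚ) (r c : Fin (2 * n)),
      S x r c =
        if (r : ℕ) < n then
          (if (r : ℕ) ≤ (c : ℕ) ∧ (c : ℕ) - (r : ℕ) ≤ n then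
            (n.choose ((c : ℕ) - (r : ℕ)) : ℚ) * (A ((c : ℕ) - (r : ℕ))).eval x
          else 0)
        else
          (if (r : ℕ) - n ≤ (c : ℕ) ∧ (c : ℕ) - ((r : ℕ) - n) ≤ n then
            (n.choose ((c : ℕ) - ((r : ℕ) - n)) : ℚ) *
              (B ((c : ℕ) - ((r : ℕ) - n))).eval x
          else 0)) :
    ∀ x : ℚ, (S x).det = (S 0).det := by
  intro x
  have hS' : ∀ (y : ℚ) (r c : Fin (2 * n)), S y r c =
      if rhoF n (r : ℕ) ≤ (c : ℕ) ∧ (c : ℕ) - rhoF n (r : ℕ) ≤ n then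
        (n.choose ((c : ℕ) - rhoF n (r : ℕ)) : ℚ) *
          (((if (r : ℕ) < n then A else B) ((c : ℕ) - rhoF n (r : ℕ))).eval y)
      else 0 := by
    intro y r c
    rw [hS]
    by_cases h : (r : ℕ) < n <;> simp [rhoF, h]
  have hrho : ∀ r : Fin (2 * n), rhoF n (r : ℕ) ≤ n - 1 := by
    intro r
    have := r.isLt
    simp only [rhoF]
    split <;> omega
  have hrow : ∀ (y : ℚ) (r : Fin (2 * n)), Pv n (S y r)
      = X ^ (n - 1 - rhoF n (r : ℕ)) * Fpoly (if (r : ℕ) < n then A else B) n y :=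
    fun y r => Pv_row_aux _ n hn y _ (hrho r) _ (fun c => hS' y r c)
  have key : S x = Umat n x * S 0 * Tmat n x := by
    ext r c
    have hL : S x r c = (X ^ (n - 1 - rhoF n (r : ℕ))
        * Fpoly (if (r : ℕ) < n then A else B) n x).coeff (2 * n - 1 - (c : ℕ)) := by
      rw [← hrow x r, Pv_coeff hn]
    simp only [Matrix.mul_apply]
    have hstep1 : ∀ d : Fin (2 * n),
        (∑ s, Umat n x r s * S 0 s d) * Tmat n x d c
        = ∑ s, Umat n x r s * (S 0 s d * Tmat n x d c) := by
      intro d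
      rw [Finset.sum_mul]
      apply Finset.sum_congr rfl
      intros
      ring
    rw [Finset.sum_congr rfl (fun d _ => hstep1 d), Finset.sum_comm]
    simp only [← Finset.mul_sum]
    have hinner : ∀ s : Fin (2 * n), (∑ d, S 0 s d * Tmat n x d c)
        = ((X + C x) ^ (n - 1 - rhoF n (s : ℕ))
            * Fpoly (if (s : ℕ) < n then A else B) n x).coeff (2 * n - 1 - (c : ℕ)) := by
      intro s
      have h1 : (∑ d, S 0 s d * Tmat n x d c)
          = ((Pv n (S 0 s)).comp (X + C x)).coeff (2 * n - 1 - (c : ℕ)) := by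
        rw [Pv, Polynomial.sum_comp, finset_sum_coeff]
        apply Finset.sum_congr rfl
        intro d _
        rw [mul_comp, C_comp, X_pow_comp, coeff_C_mul, Tmat]
        rw [tent_coeff hn x d c]
      rw [h1, hrow 0 s, mul_comp, X_pow_comp]
      congr 2
      by_cases h : (s : ℕ) < n
      · simp only [if_pos h]
        exact (Fpoly_comp A hA0 hA n x).symm
      · simp only [if_neg h]
        exact (Fpoly_comp B hB0 hB n x).symm
    rw [Finset.sum_congr rfl (fun s _ => by rw [hinner s])]
    have h2 : (∑ s : Fin (2 * n), Umat n x r s *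
        ((X + C x) ^ (n - 1 - rhoF n (s : ℕ))
          * Fpoly (if (s : ℕ) < n then A else B) n x).coeff (2 * n - 1 - (c : ℕ)))
        = ((∑ s : Fin (2 * n), C (Umat n x r s) *
            ((X + C x) ^ (n - 1 - rhoF n (s : ℕ))
              * Fpoly (if (s : ℕ) < n then A else B) n x)).coeff (2 * n - 1 - (c : ℕ))) := by
      rw [finset_sum_coeff]
      apply Finset.sum_congr rfl
      intros
      rw [coeff_C_mul]
    rw [h2]
    have h3 : (∑ s : Fin (2 * n), C (Umat n x r s) *
        ((X + C x) ^ (n - 1 - rhoF n (s : ℕ))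
          * Fpoly (if (s : ℕ) < n then A else B) n x))
        = X ^ (n - 1 - rhoF n (r : ℕ)) * Fpoly (if (r : ℕ) < n then A else B) n x := by
      have hb : ∀ s : Fin (2 * n), Fpoly (if (s : ℕ) < n then A else B) n x
          = if (s : ℕ) < n then Fpoly A n x else Fpoly B n x := by
        intro s
        by_cases h : (s : ℕ) < n <;> simp [h]
      rw [Finset.sum_congr rfl (fun s _ => by rw [hb s]), hb r]
      exact Usum n hn x (Fpoly A n x) (Fpoly B n x) r
    rw [h3, ← hL]
  rw [key, Matrix.det_mul, Matrix.det_mul, det_Umat hn x, det_Tmat hn x, one_mul, mul_one]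
end

section
/- Let A, B, C : ℕ → ℚ[X] be three Appell sequences and let n ≥ 2. Then the polynomial Tr_n(A,B,C) := ∑_{i=0}^{n} ∑_{j=0}^{i} ( (−1)^i · [n]_j · [n−1]_{i−j} / [2n−2]_i ) · Cb(n,i) · Cb(i,j) · (A (n−i)) · ( (B j)·(C (i−j+1)) − (C j)·(B (i−j+1)) ) ∈ ℚ[X] is constant, i.e. it equals Polynomial.C of its value at 0. -/
set_option maxHeartbeats 1000000

open Polynomial Finset Nat

/-- The scalar coefficient in `T`. -/
def dd (n i j : ℕ) : ℚ :=
  ((-1 : ℚ) ^ i * (Nat.descFactorial n j : ℚ) *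
        (Nat.descFactorial (n - 1) (i - j) : ℚ) /
      (Nat.descFactorial (2 * n - 2) i : ℚ)) *
    (n.choose i) * (i.choose j)

/-- The combined coefficient appearing in the derivative of `T`. -/
def ee (n i j : ℕ) : ℚ :=
  ((n - i : ℕ) : ℚ) * dd n i j + ((j + 1 : ℕ) : ℚ) * dd n (i + 1) (j + 1) +
    ((i + 1 - j + 1 : ℕ) : ℚ) * dd n (i + 1) j

lemma tr_core (x y z P Q D c g s : ℚ) (hx1 : x + 1 ≠ 0) (hy1 : y + 1 ≠ 0) (hx2 : x + 2 ≠ 0)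
    (hxy2 : x + y + 2 ≠ 0) (hE : x + y + 2 * z + 1 ≠ 0) (hD : D ≠ 0) :
    (z + 1) * (s * ((x + y + z + 2) * P) * Q / D * c * ((x + y + 1) * g / (x + 1))) +
        (x + 2) *
          (-s * ((y + z + 1) * ((x + y + z + 2) * P)) * Q / ((x + y + 2 * z + 1) * D) *
              (c * (z + 1) / (x + y + 2)) *
            ((x + y + 2) * ((x + y + 1) * g / (x + 1)) / (x + 2))) +
      (y + 1 + 1) *
        (-s * ((x + y + z + 2) * P) * ((x + z + 1) * Q) / ((x + y + 2 * z + 1) * D) *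
            (c * (z + 1) / (x + y + 2)) *
          ((x + y + 2) * ((x + y + 1) * g / (y + 1)) / (x + 1))) =
    -(s * c * g * P * Q * (x + y + 1) * (x + y + z + 2) ^ 2 * (z + 1)) /
      (D * (x + y + 2 * z + 1) * (x + 1) * (y + 1)) := by
  have key : 1 / (D * (x + 1)) + -(y + z + 1) / ((x + y + 2 * z + 1) * D * (x + 1)) +
      -((y + 2) * (x + z + 1)) / ((x + y + 2 * z + 1) * D * (x + 1) * (y + 1)) =
      -(x + y + z + 2) / (D * (x + y + 2 * z + 1) * (x + 1) * (y + 1)) := by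
    have hE' : x + y + z * 2 + 1 ≠ 0 := by contrapose! hE; linarith
    field_simp
    ring
  have e1 : (z + 1) * (s * ((x + y + z + 2) * P) * Q / D * c * ((x + y + 1) * g / (x + 1)))
      = (s * c * g * P * Q * (x + y + 1) * (x + y + z + 2) * (z + 1)) * (1 / (D * (x + 1))) := by
    field_simp
  have e2 : (x + 2) *
          (-s * ((y + z + 1) * ((x + y + z + 2) * P)) * Q / ((x + y + 2 * z + 1) * D) *
              (c * (z + 1) / (x + y + 2)) *
            ((x + y + 2) * ((x + y + 1) * g / (x + 1)) / (x + 2)))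
      = (s * c * g * P * Q * (x + y + 1) * (x + y + z + 2) * (z + 1)) *
          (-(y + z + 1) / ((x + y + 2 * z + 1) * D * (x + 1))) := by
    field_simp
  have e3 : (y + 1 + 1) *
        (-s * ((x + y + z + 2) * P) * ((x + z + 1) * Q) / ((x + y + 2 * z + 1) * D) *
            (c * (z + 1) / (x + y + 2)) *
          ((x + y + 2) * ((x + y + 1) * g / (y + 1)) / (x + 1)))
      = (s * c * g * P * Q * (x + y + 1) * (x + y + z + 2) * (z + 1)) *
          (-((y + 2) * (x + z + 1)) / ((x + y + 2 * z + 1) * D * (x + 1) * (y + 1))) := by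
    field_simp
    ring
  have e4 : -(s * c * g * P * Q * (x + y + 1) * (x + y + z + 2) ^ 2 * (z + 1)) /
        (D * (x + y + 2 * z + 1) * (x + 1) * (y + 1))
      = (s * c * g * P * Q * (x + y + 1) * (x + y + z + 2) * (z + 1)) *
          (-(x + y + z + 2) / (D * (x + y + 2 * z + 1) * (x + 1) * (y + 1))) := by
    field_simp
  rw [e1, e2, e3, e4, ← mul_add, ← mul_add, key]

noncomputable def cf (p q b : ℕ) : ℚ :=
  -(((-1 : ℚ)) ^ (p + q + 1) * ((p + q + b + 2).choose (p + q + 1)) * ((p + q).choose p) *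
      ((p + q + b + 1).descFactorial p) * ((p + q + b + 1).descFactorial q) *
      (p + q + 1) * (p + q + b + 2) ^ 2 * (b + 1)) /
    (((2 * p + 2 * q + 2 * b + 2).descFactorial (p + q + 1)) *
      (p + q + 2 * b + 1) * (p + 1) * (q + 1))

lemma ee_closed (p q b : ℕ) :
    ee (p + q + b + 2) (p + q + 1) (p + 1) = cf p q b := by
  have h1n : (p + q + b + 2).descFactorial (p + 1)
      = (p + q + b + 2) * (p + q + b + 1).descFactorial p := by
    rw [show p + q + b + 2 = p + q + b + 1 + 1 from rfl]
    exact Nat.succ_descFactorial_succ _ _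
  have h1n' : (p + q + b + 2).descFactorial (q + 1)
      = (p + q + b + 2) * (p + q + b + 1).descFactorial q := by
    rw [show p + q + b + 2 = p + q + b + 1 + 1 from rfl]
    exact Nat.succ_descFactorial_succ _ _
  have h2n : (p + q + b + 2).descFactorial (p + 2)
      = (q + b + 1) * (p + q + b + 2).descFactorial (p + 1) := by
    rw [show p + 2 = p + 1 + 1 from rfl, Nat.descFactorial_succ,
      show p + q + b + 2 - (p + 1) = q + b + 1 from by omega]
  have h2n' : (p + q + b + 2).descFactorial (q + 2)
      = (p + b + 1) * (p + q + b + 2).descFactorial (q + 1) := by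
    rw [show q + 2 = q + 1 + 1 from rfl, Nat.descFactorial_succ,
      show p + q + b + 2 - (q + 1) = p + b + 1 from by omega]
  have h3n : (p + q + b + 1).descFactorial (q + 1)
      = (p + b + 1) * (p + q + b + 1).descFactorial q := by
    rw [Nat.descFactorial_succ, show p + q + b + 1 - q = p + b + 1 from by omega]
  have h3n' : (p + q + b + 1).descFactorial (p + 1)
      = (q + b + 1) * (p + q + b + 1).descFactorial p := by
    rw [Nat.descFactorial_succ, show p + q + b + 1 - p = q + b + 1 from by omega]
  have h4n : (2 * p + 2 * q + 2 * b + 2).descFactorial (p + q + 2)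
      = (p + q + 2 * b + 1) * (2 * p + 2 * q + 2 * b + 2).descFactorial (p + q + 1) := by
    rw [show p + q + 2 = p + q + 1 + 1 from rfl, Nat.descFactorial_succ,
      show 2 * p + 2 * q + 2 * b + 2 - (p + q + 1) = p + q + 2 * b + 1 from by omega]
  have hp1 : ((p : ℚ) + 1) ≠ 0 := by positivity
  have hq1 : ((q : ℚ) + 1) ≠ 0 := by positivity
  have hp2 : ((p : ℚ) + 2) ≠ 0 := by positivity
  have hq2 : ((q : ℚ) + 2) ≠ 0 := by positivity
  have hpq2 : ((p : ℚ) + q + 2) ≠ 0 := by positivity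
  have h5 : (((p + q + b + 2).choose (p + q + 2) : ℕ) : ℚ)
      = ((p + q + b + 2).choose (p + q + 1)) * (b + 1) / (p + q + 2) := by
    have hn := Nat.choose_succ_right_eq (p + q + b + 2) (p + q + 1)
    rw [show p + q + b + 2 - (p + q + 1) = b + 1 from by omega,
      show p + q + 1 + 1 = p + q + 2 from rfl] at hn
    rw [eq_div_iff hpq2]
    exact_mod_cast hn
  have h6 : (((p + q + 1).choose (p + 1) : ℕ) : ℚ)
      = (p + q + 1) * ((p + q).choose p) / (p + 1) := by
    have hn := Nat.add_one_mul_choose_eq (p + q) p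
    rw [eq_div_iff hp1]
    exact_mod_cast hn.symm
  have h6' : (((p + q + 1).choose (q + 1) : ℕ) : ℚ)
      = (p + q + 1) * ((p + q).choose p) / (q + 1) := by
    have hn := Nat.add_one_mul_choose_eq (p + q) q
    have hsym0 : (p + q).choose q = (p + q).choose p := by
      have := Nat.choose_symm (show p ≤ p + q from by omega)
      rw [show p + q - p = q from by omega] at this
      exact this
    rw [hsym0] at hn
    rw [eq_div_iff hq1]
    exact_mod_cast hn.symm
  have h7 : (((p + q + 2).choose (p + 2) : ℕ) : ℚ)
      = (p + q + 2) * ((p + q + 1).choose (p + 1)) / (p + 2) := by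
    have hn := Nat.add_one_mul_choose_eq (p + q + 1) (p + 1)
    rw [show p + q + 1 + 1 = p + q + 2 from rfl, show p + 1 + 1 = p + 2 from rfl] at hn
    rw [eq_div_iff hp2]
    exact_mod_cast hn.symm
  have h7' : (((p + q + 2).choose (q + 2) : ℕ) : ℚ)
      = (p + q + 2) * ((p + q + 1).choose (q + 1)) / (q + 2) := by
    have hn := Nat.add_one_mul_choose_eq (p + q + 1) (q + 1)
    rw [show p + q + 1 + 1 = p + q + 2 from rfl, show q + 1 + 1 = q + 2 from rfl] at hn
    rw [eq_div_iff hq2]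
    exact_mod_cast hn.symm
  have h8 : (((p + q + 2).choose (p + 1) : ℕ) : ℚ)
      = (p + q + 2) * ((p + q + 1).choose (q + 1)) / (p + 1) := by
    have hn := Nat.add_one_mul_choose_eq (p + q + 1) p
    rw [show p + q + 1 + 1 = p + q + 2 from rfl] at hn
    have hsym : (p + q + 1).choose p = (p + q + 1).choose (q + 1) := by
      have := Nat.choose_symm (show q + 1 ≤ p + q + 1 from by omega)
      rw [show p + q + 1 - (q + 1) = p from by omega] at this
      exact this
    rw [hsym] at hn
    rw [eq_div_iff hp1]
    exact_mod_cast hn.symm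
  have h8' : (((p + q + 2).choose (q + 1) : ℕ) : ℚ)
      = (p + q + 2) * ((p + q + 1).choose (p + 1)) / (q + 1) := by
    have hn := Nat.add_one_mul_choose_eq (p + q + 1) q
    rw [show p + q + 1 + 1 = p + q + 2 from rfl] at hn
    have hsym : (p + q + 1).choose q = (p + q + 1).choose (p + 1) := by
      have := Nat.choose_symm (show p + 1 ≤ p + q + 1 from by omega)
      rw [show p + q + 1 - (p + 1) = q from by omega] at this
      exact this
    rw [hsym] at hn
    rw [eq_div_iff hq1]
    exact_mod_cast hn.symm
  have hD : (((2 * p + 2 * q + 2 * b + 2).descFactorial (p + q + 1) : ℕ) : ℚ) ≠ 0 := by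
    rw [Nat.cast_ne_zero]
    simp only [ne_eq, Nat.descFactorial_eq_zero_iff_lt]
    omega
  unfold ee dd cf
  rw [show p + q + 1 + 1 = p + q + 2 from rfl, show p + 1 + 1 = p + 2 from rfl,
    show p + q + b + 2 - (p + q + 1) = b + 1 from by omega,
    show p + q + b + 2 - 1 = p + q + b + 1 from by omega,
    show 2 * (p + q + b + 2) - 2 = 2 * p + 2 * q + 2 * b + 2 from by omega,
    show p + q + 1 - (p + 1) = q from by omega,
    show p + q + 2 - (p + 2) = q from by omega,
    show p + q + 2 - (p + 1) = q + 1 from by omega]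
  rw [h2n, h1n, h3n, h4n]
  rw [h5, h7, h8, h6, h6']
  push_cast
  have hb2 : ((p : ℚ) + q + 2 * b + 1) ≠ 0 := by positivity
  have hsgn : ((-1 : ℚ)) ^ (p + q + 2) = -((-1 : ℚ)) ^ (p + q + 1) := by
    have e : p + q + 2 = p + q + 1 + 1 := rfl
    rw [e, pow_succ]
    ring
  rw [hsgn]
  set P : ℚ := ((p + q + b + 1).descFactorial p : ℚ) with hP
  set Q : ℚ := ((p + q + b + 1).descFactorial q : ℚ) with hQ
  set D : ℚ := ((2 * p + 2 * q + 2 * b + 2).descFactorial (p + q + 1) : ℚ) with hDe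
  set c : ℚ := ((p + q + b + 2).choose (p + q + 1) : ℚ) with hc
  set g : ℚ := ((p + q).choose p : ℚ) with hg
  set s : ℚ := ((-1 : ℚ)) ^ (p + q + 1) with hs
  exact tr_core (p : ℚ) (q : ℚ) (b : ℚ) P Q D c g s hp1 hq1 hp2 hpq2 hb2 hD

lemma ee_symm_main (p q b : ℕ) :
    ee (p + q + b + 2) (p + q + 1) (p + 1) = ee (p + q + b + 2) (p + q + 1) (q + 1) := by
  have h2 := ee_closed q p b
  rw [show q + p + b + 2 = p + q + b + 2 from by omega,
    show q + p + 1 = p + q + 1 from by omega] at h2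
  rw [ee_closed p q b, h2]
  unfold cf
  rw [show q + p = p + q from by omega,
    show 2 * q + 2 * p + 2 * b + 2 = 2 * p + 2 * q + 2 * b + 2 from by omega]
  have hsym : (p + q).choose q = (p + q).choose p := by
    have := Nat.choose_symm (show p ≤ p + q from by omega)
    rw [show p + q - p = q from by omega] at this
    exact this
  rw [hsym]
  ring

lemma ee_bdry (i b : ℕ) (h : 1 ≤ i + b) :
    ee (i + b + 1) i 0 = ee (i + b + 1) i (i + 1) := by
  unfold ee dd
  rw [show i + b + 1 - i = b + 1 from by omega,
      show i + b + 1 - 1 = i + b from by omega,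
      show 2 * (i + b + 1) - 2 = 2 * i + 2 * b from by omega]
  simp only [Nat.sub_zero, Nat.sub_self, Nat.choose_zero_right, Nat.choose_self,
    Nat.descFactorial_zero, Nat.choose_succ_self, Nat.descFactorial_one,
    Nat.choose_one_right, Nat.zero_add, Nat.add_sub_cancel, Nat.cast_zero,
    Nat.cast_one, mul_zero, zero_mul, mul_one, one_mul, add_zero, zero_add]
  have r1 : (i + b).descFactorial (i + 1) = b * (i + b).descFactorial i := by
    rw [Nat.descFactorial_succ, show i + b - i = b from by omega]
  have r2 : (i + b + 1).descFactorial (i + 1) = (i + b + 1) * (i + b).descFactorial i :=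
    Nat.succ_descFactorial_succ (i + b) i
  have r3 : (2 * i + 2 * b).descFactorial (i + 1)
      = (i + 2 * b) * (2 * i + 2 * b).descFactorial i := by
    rw [Nat.descFactorial_succ, show 2 * i + 2 * b - i = i + 2 * b from by omega]
  have hD : ((2 * i + 2 * b).descFactorial i : ℚ) ≠ 0 := by
    rw [Nat.cast_ne_zero]
    simp only [ne_eq, Nat.descFactorial_eq_zero_iff_lt]
    omega
  have hc : ((i + b + 1).choose (i + 1) : ℚ) = ((i + b + 1).choose i) * (b + 1) / (i + 1) := by
    have hnat := Nat.choose_succ_right_eq (i + b + 1) i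
    rw [show i + b + 1 - i = b + 1 from by omega] at hnat
    rw [eq_div_iff (by positivity)]
    exact_mod_cast hnat
  rw [r1, r2, r3, hc]
  have h2 : ((i : ℚ) + 2 * b) ≠ 0 := by
    have : (0 : ℕ) < i + 2 * b := by omega
    have : (0 : ℚ) < (i : ℚ) + 2 * b := by exact_mod_cast this
    exact ne_of_gt this
  push_cast
  have h2' : (i : ℚ) + b * 2 ≠ 0 := by contrapose! h2; linarith
  field_simp
  ring

lemma dd_zero (n : ℕ) {i j : ℕ} (h : i < j) : dd n i j = 0 := by
  simp [dd, Nat.choose_eq_zero_of_lt h]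

/-- The "Wronskian" bracket. -/
noncomputable def ww (B C : ℕ → Polynomial ℚ) (x y : ℕ) : Polynomial ℚ :=
  B x * C y - C x * B y

lemma ww_anti (B C : ℕ → Polynomial ℚ) (x y : ℕ) :
    ww B C x y = -ww B C y x := by
  unfold ww; ring

lemma appell_deriv (A : ℕ → Polynomial ℚ)
    (hA0 : Polynomial.derivative (A 0) = 0)
    (hA : ∀ k : ℕ, Polynomial.derivative (A (k + 1)) = (k + 1) • A k) (m : ℕ) :
    Polynomial.derivative (A m) = (m : ℚ) • A (m - 1) := by
  cases m with
  | zero => simpa using hA0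
  | succ k =>
      rw [hA k, Nat.add_sub_cancel]
      push_cast
      rw [← Nat.cast_smul_eq_nsmul ℚ]
      push_cast
      ring_nf

lemma ww_deriv (B C : ℕ → Polynomial ℚ)
    (hB' : ∀ m : ℕ, Polynomial.derivative (B m) = (m : ℚ) • B (m - 1))
    (hC' : ∀ m : ℕ, Polynomial.derivative (C m) = (m : ℚ) • C (m - 1))
    (x y : ℕ) :
    Polynomial.derivative (ww B C x y) =
      (x : ℚ) • ww B C (x - 1) y + (y : ℚ) • ww B C x (y - 1) := by
  unfold ww
  rw [derivative_sub, derivative_mul, derivative_mul, hB' x, hC' y, hC' x, hB' y]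
  simp only [smul_eq_C_mul]
  ring

lemma ee_symm (n i j : ℕ) (hn : 2 ≤ n) (hi : i < n) (hj : j ≤ i + 1) :
    ee n i j = ee n i (i + 1 - j) := by
  rcases Nat.eq_zero_or_pos j with rfl | hj0
  · obtain ⟨b, hb, rfl⟩ : ∃ b, 1 ≤ i + b ∧ n = i + b + 1 :=
      ⟨n - i - 1, by omega, by omega⟩
    rw [show i + 1 - 0 = i + 1 from rfl]
    exact ee_bdry i b hb
  rcases Nat.lt_or_ge j (i + 1) with hji | hji
  · -- 1 ≤ j ≤ i
    obtain ⟨p, q, b, rfl, rfl, rfl⟩ :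
        ∃ p q b, j = p + 1 ∧ i = p + q + 1 ∧ n = p + q + b + 2 :=
      ⟨j - 1, i - j, n - i - 1, by omega, by omega, by omega⟩
    rw [show p + q + 1 + 1 - (p + 1) = q + 1 from by omega]
    exact ee_symm_main p q b
  · -- j = i + 1
    have hj1 : j = i + 1 := by omega
    subst hj1
    obtain ⟨b, hb, rfl⟩ : ∃ b, 1 ≤ i + b ∧ n = i + b + 1 :=
      ⟨n - i - 1, by omega, by omega⟩
    rw [show i + 1 - (i + 1) = 0 from by omega]
    exact (ee_bdry i b hb).symm

/-- For three Appell sequences `A`, `B`, `C` and `n ≥ 2`, the joint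
semi-invariant expression
`Tr_n(A,B,C) = ∑_{i=0}^{n} ∑_{j=0}^{i} ((−1)^i [n]_j [n−1]_{i−j} / [2n−2]_i)
  C(n,i) C(i,j) A_{n−i} (B_j C_{i−j+1} − C_j B_{i−j+1})`
is constant, equal to `Polynomial.C` of its value at `0`. -/
theorem Tr_three_constant
    (A B C : ℕ → Polynomial ℚ)
    (hA0 : Polynomial.derivative (A 0) = 0)
    (hA : ∀ k : ℕ, Polynomial.derivative (A (k + 1)) = (k + 1) • A k)
    (hB0 : Polynomial.derivative (B 0) = 0)
    (hB : ∀ k : ℕ, Polynomial.derivative (B (k + 1)) = (k + 1) • B k)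
    (hC0 : Polynomial.derivative (C 0) = 0)
    (hC : ∀ k : ℕ, Polynomial.derivative (C (k + 1)) = (k + 1) • C k)
    (n : ℕ) (hn : 2 ≤ n)
    (T : Polynomial ℚ)
    (hT : T = ∑ i ∈ Finset.range (n + 1), ∑ j ∈ Finset.range (i + 1),
        (((-1 : ℚ) ^ i * (Nat.descFactorial n j : ℚ) *
              (Nat.descFactorial (n - 1) (i - j) : ℚ) /
            (Nat.descFactorial (2 * n - 2) i : ℚ)) *
          (n.choose i) * (i.choose j)) •
          (A (n - i) * (B j * C (i - j + 1) - C j * B (i - j + 1)))) :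
    T = Polynomial.C (T.eval 0) := by
  have hA' := appell_deriv A hA0 hA
  have hB' := appell_deriv B hB0 hB
  have hC' := appell_deriv C hC0 hC
  have hT' : T = ∑ i ∈ Finset.range (n + 1), ∑ j ∈ Finset.range (i + 1),
      dd n i j • (A (n - i) * ww B C j (i - j + 1)) := hT
  have key : ∀ i j : ℕ,
      Polynomial.derivative (dd n i j • (A (n - i) * ww B C j (i - j + 1))) =
        (((n - i : ℕ) : ℚ) * dd n i j) • (A (n - i - 1) * ww B C j (i - j + 1)) +
        (((j : ℕ) : ℚ) * dd n i j) • (A (n - i) * ww B C (j - 1) (i - j + 1)) +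
        (((i - j + 1 : ℕ) : ℚ) * dd n i j) • (A (n - i) * ww B C j (i - j + 1 - 1)) := by
    intro i j
    rw [derivative_smul, derivative_mul, hA' (n - i), ww_deriv B C hB' hC' j (i - j + 1)]
    simp only [smul_eq_C_mul, map_mul]
    ring
  have hdT : Polynomial.derivative T = 0 := by
    have step1 : Polynomial.derivative T =
        (∑ i ∈ Finset.range (n + 1), ∑ j ∈ Finset.range (i + 1),
          (((n - i : ℕ) : ℚ) * dd n i j) • (A (n - i - 1) * ww B C j (i - j + 1))) +
        (∑ i ∈ Finset.range (n + 1), ∑ j ∈ Finset.range (i + 1),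
          (((j : ℕ) : ℚ) * dd n i j) • (A (n - i) * ww B C (j - 1) (i - j + 1))) +
        (∑ i ∈ Finset.range (n + 1), ∑ j ∈ Finset.range (i + 1),
          (((i - j + 1 : ℕ) : ℚ) * dd n i j) • (A (n - i) * ww B C j (i - j + 1 - 1))) := by
      rw [hT', map_sum]
      simp only [map_sum, key]
      rw [← Finset.sum_add_distrib, ← Finset.sum_add_distrib]
      refine Finset.sum_congr rfl fun i _ => ?_
      rw [← Finset.sum_add_distrib, ← Finset.sum_add_distrib]
    have hS1 : (∑ i ∈ Finset.range (n + 1), ∑ j ∈ Finset.range (i + 1),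
          (((n - i : ℕ) : ℚ) * dd n i j) • (A (n - i - 1) * ww B C j (i - j + 1))) =
        ∑ i ∈ Finset.range n, ∑ j ∈ Finset.range (i + 2),
          (((n - i : ℕ) : ℚ) * dd n i j) • (A (n - 1 - i) * ww B C j (i + 1 - j)) := by
      rw [Finset.sum_range_succ]
      have hlast : (∑ j ∈ Finset.range (n + 1),
          (((n - n : ℕ) : ℚ) * dd n n j) • (A (n - n - 1) * ww B C j (n - j + 1))) = 0 := by
        simp [Nat.sub_self]
      rw [hlast, add_zero]
      refine Finset.sum_congr rfl fun i hi => ?_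
      conv_rhs => rw [Finset.sum_range_succ]
      have hz : (((n - i : ℕ) : ℚ) * dd n i (i + 1)) •
          (A (n - 1 - i) * ww B C (i + 1) (i + 1 - (i + 1))) = 0 := by
        rw [dd_zero n (Nat.lt_succ_self i)]
        simp
      rw [hz, add_zero]
      refine Finset.sum_congr rfl fun j hj => ?_
      have hj' : j ≤ i := by simpa [Nat.lt_succ_iff] using hj
      rw [show n - i - 1 = n - 1 - i from by omega, show i - j + 1 = i + 1 - j from by omega]
    have hS2 : (∑ i ∈ Finset.range (n + 1), ∑ j ∈ Finset.range (i + 1),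
          (((j : ℕ) : ℚ) * dd n i j) • (A (n - i) * ww B C (j - 1) (i - j + 1))) =
        ∑ i ∈ Finset.range n, ∑ j ∈ Finset.range (i + 2),
          (((j + 1 : ℕ) : ℚ) * dd n (i + 1) (j + 1)) • (A (n - 1 - i) * ww B C j (i + 1 - j)) := by
      rw [Finset.sum_range_succ']
      have h0 : (∑ j ∈ Finset.range (0 + 1),
          (((j : ℕ) : ℚ) * dd n 0 j) • (A (n - 0) * ww B C (j - 1) (0 - j + 1))) = 0 := by
        simp
      rw [h0, add_zero]
      refine Finset.sum_congr rfl fun i hi => ?_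
      conv_lhs => rw [Finset.sum_range_succ']
      have h0' : (((0 : ℕ) : ℚ) * dd n (i + 1) 0) •
          (A (n - (i + 1)) * ww B C (0 - 1) (i + 1 - 0 + 1)) = 0 := by
        simp
      rw [h0', add_zero]
      conv_rhs => rw [Finset.sum_range_succ]
      have hz : (((i + 1 + 1 : ℕ) : ℚ) * dd n (i + 1) (i + 1 + 1)) •
          (A (n - 1 - i) * ww B C (i + 1) (i + 1 - (i + 1))) = 0 := by
        rw [dd_zero n (Nat.lt_succ_self (i + 1))]
        simp
      rw [hz, add_zero]
      refine Finset.sum_congr rfl fun j hj => ?_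
      have hj' : j ≤ i := by simpa [Nat.lt_succ_iff] using hj
      rw [show (j + 1) - 1 = j from by omega,
        show i + 1 - (j + 1) + 1 = i + 1 - j from by omega,
        show n - (i + 1) = n - 1 - i from by omega]
    have hS3 : (∑ i ∈ Finset.range (n + 1), ∑ j ∈ Finset.range (i + 1),
          (((i - j + 1 : ℕ) : ℚ) * dd n i j) • (A (n - i) * ww B C j (i - j + 1 - 1))) =
        ∑ i ∈ Finset.range n, ∑ j ∈ Finset.range (i + 2),
          (((i + 1 - j + 1 : ℕ) : ℚ) * dd n (i + 1) j) • (A (n - 1 - i) * ww B C j (i + 1 - j)) := by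
      rw [Finset.sum_range_succ']
      have h0 : (∑ j ∈ Finset.range (0 + 1),
          (((0 - j + 1 : ℕ) : ℚ) * dd n 0 j) • (A (n - 0) * ww B C j (0 - j + 1 - 1))) = 0 := by
        simp [ww, mul_comm]
      rw [h0, add_zero]
      refine Finset.sum_congr rfl fun i hi => ?_
      refine Finset.sum_congr rfl fun j hj => ?_
      have hj' : j ≤ i + 1 := by simpa [Nat.lt_succ_iff] using hj
      rw [show i + 1 - j + 1 - 1 = i + 1 - j from by omega,
        show n - (i + 1) = n - 1 - i from by omega]
    have step2 : Polynomial.derivative T =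
        ∑ i ∈ Finset.range n, ∑ j ∈ Finset.range (i + 2),
          ee n i j • (A (n - 1 - i) * ww B C j (i + 1 - j)) := by
      rw [step1, hS1, hS2, hS3, ← Finset.sum_add_distrib, ← Finset.sum_add_distrib]
      refine Finset.sum_congr rfl fun i _ => ?_
      rw [← Finset.sum_add_distrib, ← Finset.sum_add_distrib]
      refine Finset.sum_congr rfl fun j _ => ?_
      unfold ee
      rw [add_smul, add_smul]
    rw [step2]
    refine Finset.sum_eq_zero fun i hi => ?_
    have hi' : i < n := Finset.mem_range.mp hi
    set S := ∑ j ∈ Finset.range (i + 2),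
      ee n i j • (A (n - 1 - i) * ww B C j (i + 1 - j)) with hS
    have hrefl := Finset.sum_range_reflect
      (fun j => ee n i j • (A (n - 1 - i) * ww B C j (i + 1 - j))) (i + 2)
    have hSneg : S = -S := by
      conv_lhs => rw [hS, ← hrefl]
      rw [← Finset.sum_neg_distrib]
      refine Finset.sum_congr rfl fun j hj => ?_
      have hj' : j ≤ i + 1 := by
        have := Finset.mem_range.mp hj; omega
      have e1 : i + 2 - 1 - j = i + 1 - j := by omega
      have e2 : i + 1 - (i + 1 - j) = j := by omega
      rw [e1]
      rw [ee_symm n i (i + 1 - j) hn hi' (by omega), e2]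
      rw [ww_anti B C (i + 1 - j) j]
      rw [mul_neg, smul_neg]
    have : S + S = 0 := by
      nth_rewrite 1 [hSneg]
      simp
    have h2S : (2 : ℚ) • S = 0 := by rw [two_smul]; exact this
    simpa using (smul_eq_zero.mp h2S).resolve_left (by norm_num)
  have hfin := Polynomial.eq_C_of_derivative_eq_zero hdT
  rwa [Polynomial.coeff_zero_eq_eval_zero] at hfin
end
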